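/- arXiv:1703.04387 — 7 statements merged into one kernel-verified Lean document; each statement's English description precedes it below -/
import Mathlib

section
/- Let (A,F) be a measurable space and X1, X2 be A-valued exchangeable random variables (i.e., (X1,X2) and (X2,X1) have the same joint distribution). Suppose α ≥ 0 is such that for every measurable f : A → ℝ with f(X1) of finite variance, |corr(f(X1), f(X2))| ≤ α. Then for any measurable f1, f2 : A → ℝ with f1(X1) and f2(X2) of finite nonzero variance, |corr(f1(X1), f2(X2))| ≤ α. -/
open MeasureTheory

/-- Covariance of two real random variables. -/
noncomputable def cov {Ω : Type*} [MeasurableSpace Ω] (μ : Measure Ω) (U V : Ω → ℝ) : ℝ :=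
  ∫ ω, (U ω - ∫ x, U x ∂μ) * (V ω - ∫ x, V x ∂μ) ∂μ

/-- Pearson correlation coefficient of two real random variables. -/
noncomputable def corr {Ω : Type*} [MeasurableSpace Ω] (μ : Measure Ω) (U V : Ω → ℝ) : ℝ :=
  cov μ U V / (Real.sqrt (cov μ U U) * Real.sqrt (cov μ V V))

lemma memL2_integrable_mul {Ω : Type*} [MeasurableSpace Ω] {μ : Measure Ω} {U V : Ω → ℝ}
    (hU : MemLp U 2 μ) (hV : MemLp V 2 μ) : Integrable (fun ω => U ω * V ω) μ := by
  have h := hV.smul (φ := U) hU (p := 2) (q := 2) (r := 1)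
    (hpqr := ⟨by simp only [one_div, inv_one]; exact ENNReal.inv_two_add_inv_two⟩)
  have : (U • V) = fun ω => U ω * V ω := rfl
  rw [this] at h
  exact memLp_one_iff_integrable.mp h

lemma cov_eq {Ω : Type*} [MeasurableSpace Ω] (μ : Measure Ω) [IsProbabilityMeasure μ]
    (U V : Ω → ℝ) (hU : MemLp U 2 μ) (hV : MemLp V 2 μ) :
    cov μ U V = (∫ ω, U ω * V ω ∂μ) - (∫ ω, U ω ∂μ) * (∫ ω, V ω ∂μ) := by
  have hUi : Integrable U μ := hU.integrable one_le_two
  have hVi : Integrable V μ := hV.integrable one_le_two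
  have hUV : Integrable (fun ω => U ω * V ω) μ := memL2_integrable_mul hU hV
  unfold cov
  set a := ∫ ω, U ω ∂μ with ha
  set b := ∫ ω, V ω ∂μ with hb
  have hfun : ∀ ω, (U ω - a) * (V ω - b) = U ω * V ω - a * V ω - b * U ω + a * b :=
    fun ω => by ring
  simp_rw [hfun]
  have i1 : Integrable (fun ω => a * V ω) μ := hVi.const_mul a
  have i2 : Integrable (fun ω => b * U ω) μ := hUi.const_mul b
  have i3 : Integrable (fun ω => U ω * V ω - a * V ω) μ := hUV.sub i1
  have i4 : Integrable (fun ω => U ω * V ω - a * V ω - b * U ω) μ := i3.sub i2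
  rw [integral_add i4 (integrable_const (a * b)),
    integral_sub i3 i2, integral_sub hUV i1, integral_const_mul, integral_const_mul, integral_const]
  simp only [measure_univ, probReal_univ, ENNReal.toReal_one, smul_eq_mul, one_mul]
  ring

lemma cov_affine {Ω : Type*} [MeasurableSpace Ω] (μ : Measure Ω) [IsProbabilityMeasure μ]
    (U V : Ω → ℝ) (hU : Integrable U μ) (hV : Integrable V μ) (c d m m' : ℝ) :
    cov μ (fun ω => c * (U ω - m)) (fun ω => d * (V ω - m'))
      = c * d * cov μ U V := by
  unfold cov
  have h1 : ∫ x, c * (U x - m) ∂μ = c * ((∫ x, U x ∂μ) - m) := by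
    rw [integral_const_mul, integral_sub hU (integrable_const m), integral_const]
    simp
  have h2 : ∫ x, d * (V x - m') ∂μ = d * ((∫ x, V x ∂μ) - m') := by
    rw [integral_const_mul, integral_sub hV (integrable_const m'), integral_const]
    simp
  rw [h1, h2]
  have hfun : (fun ω => (c * (U ω - m) - c * ((∫ x, U x ∂μ) - m)) *
      (d * (V ω - m') - d * ((∫ x, V x ∂μ) - m')))
      = fun ω => (c * d) * ((U ω - ∫ x, U x ∂μ) * (V ω - ∫ x, V x ∂μ)) := by
    funext ω; ring
  rw [hfun, integral_const_mul]

lemma cov_zero_of_ae_const {Ω : Type*} [MeasurableSpace Ω] (μ : Measure Ω)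
    [IsProbabilityMeasure μ] (U V : Ω → ℝ) (m : ℝ) (hU : U =ᵐ[μ] fun _ => m) :
    cov μ U V = 0 := by
  unfold cov
  have hEU : ∫ x, U x ∂μ = m := by
    rw [integral_congr_ae hU, integral_const]; simp
  rw [hEU]
  have h0 : (fun ω => (U ω - m) * (V ω - ∫ x, V x ∂μ)) =ᵐ[μ] fun _ => 0 := by
    filter_upwards [hU] with ω h
    rw [h, sub_self, zero_mul]
  rw [integral_congr_ae h0, integral_const]
  simp

lemma cov_self_nonneg {Ω : Type*} [MeasurableSpace Ω] (μ : Measure Ω) (U : Ω → ℝ) :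
    0 ≤ cov μ U U :=
  integral_nonneg fun ω => mul_self_nonneg _

/-- If `X1, X2` are exchangeable and every single measurable function `f` with `f(X1)` of
finite variance satisfies `|corr(f(X1), f(X2))| ≤ α`, then the same bound holds for two
different functions `f1, f2` (with finite nonzero variances). -/
theorem corr_two_functions_bound {Ω A : Type*} [MeasurableSpace Ω] [MeasurableSpace A]
    (μ : Measure Ω) [IsProbabilityMeasure μ]
    (X1 X2 : Ω → A) (hX1 : Measurable X1) (hX2 : Measurable X2)
    (hexch : μ.map (fun ω => (X1 ω, X2 ω)) = μ.map (fun ω => (X2 ω, X1 ω)))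
    (α : ℝ) (hα : 0 ≤ α)
    (hbound : ∀ f : A → ℝ, Measurable f → MemLp (f ∘ X1) 2 μ →
      |corr μ (f ∘ X1) (f ∘ X2)| ≤ α)
    (f1 f2 : A → ℝ) (hf1 : Measurable f1) (hf2 : Measurable f2)
    (hm1 : MemLp (f1 ∘ X1) 2 μ) (hm2 : MemLp (f2 ∘ X2) 2 μ)
    (hv1 : cov μ (f1 ∘ X1) (f1 ∘ X1) ≠ 0) (hv2 : cov μ (f2 ∘ X2) (f2 ∘ X2) ≠ 0) :
    |corr μ (f1 ∘ X1) (f2 ∘ X2)| ≤ α := by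
  have hX12 : Measurable (fun ω => (X1 ω, X2 ω)) := hX1.prodMk hX2
  have hX21 : Measurable (fun ω => (X2 ω, X1 ω)) := hX2.prodMk hX1
  -- swap identity for integrals
  have hswap : ∀ F : A × A → ℝ, Measurable F →
      ∫ ω, F (X1 ω, X2 ω) ∂μ = ∫ ω, F (X2 ω, X1 ω) ∂μ := by
    intro F hF
    rw [← integral_map hX12.aemeasurable hF.aestronglyMeasurable,
      ← integral_map hX21.aemeasurable hF.aestronglyMeasurable, hexch]
  have hmean : ∀ g : A → ℝ, Measurable g →
      ∫ ω, g (X1 ω) ∂μ = ∫ ω, g (X2 ω) ∂μ := fun g hg =>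
    hswap (fun p => g p.1) (hg.comp measurable_fst)
  have hprodswap : ∀ g h : A → ℝ, Measurable g → Measurable h →
      ∫ ω, g (X1 ω) * h (X2 ω) ∂μ = ∫ ω, h (X1 ω) * g (X2 ω) ∂μ := by
    intro g h hg hh
    have := hswap (fun p => g p.1 * h p.2)
      ((hg.comp measurable_fst).mul (hh.comp measurable_snd))
    simpa [mul_comm] using this
  -- equality of marginals
  have hmap : μ.map X1 = μ.map X2 := by
    have h1 : μ.map X1 = (μ.map (fun ω => (X1 ω, X2 ω))).map Prod.fst := by
      rw [Measure.map_map measurable_fst hX12]; rfl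
    have h2 : μ.map X2 = (μ.map (fun ω => (X2 ω, X1 ω))).map Prod.fst := by
      rw [Measure.map_map measurable_fst hX21]; rfl
    rw [h1, h2, hexch]
  -- Memℒp transfer
  have hmem : ∀ g : A → ℝ, Measurable g → MemLp (g ∘ X1) 2 μ → MemLp (g ∘ X2) 2 μ := by
    intro g hg h
    have h1 : MemLp g 2 (μ.map X1) :=
      (memLp_map_measure_iff hg.aestronglyMeasurable hX1.aemeasurable).mpr h
    rw [hmap] at h1
    exact (memLp_map_measure_iff hg.aestronglyMeasurable hX2.aemeasurable).mp h1
  -- variance is swap-invariant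
  have hVswap : ∀ g : A → ℝ, Measurable g → Integrable (g ∘ X1) μ →
      cov μ (g ∘ X1) (g ∘ X1) = cov μ (g ∘ X2) (g ∘ X2) := by
    intro g hg _
    unfold cov
    have hme : ∫ x, (g ∘ X2) x ∂μ = ∫ x, (g ∘ X1) x ∂μ := (hmean g hg).symm
    rw [hme]
    exact hswap (fun p => (g p.1 - ∫ x, (g ∘ X1) x ∂μ) * (g p.1 - ∫ x, (g ∘ X1) x ∂μ))
      (((hg.comp measurable_fst).sub measurable_const).mul
        ((hg.comp measurable_fst).sub measurable_const))
  -- key single-function estimate: |cov(f∘X1, f∘X2)| ≤ α * Var(f∘X1)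
  have key : ∀ f : A → ℝ, Measurable f → MemLp (f ∘ X1) 2 μ →
      |cov μ (f ∘ X1) (f ∘ X2)| ≤ α * cov μ (f ∘ X1) (f ∘ X1) := by
    intro f hf hmf
    have hmf2 : MemLp (f ∘ X2) 2 μ := hmem f hf hmf
    have hVnn : 0 ≤ cov μ (f ∘ X1) (f ∘ X1) := cov_self_nonneg μ _
    have hVeq : cov μ (f ∘ X2) (f ∘ X2) = cov μ (f ∘ X1) (f ∘ X1) :=
      (hVswap f hf (hmf.integrable one_le_two)).symm
    rcases eq_or_lt_of_le hVnn with hV0 | hVpos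
    · -- degenerate case: variance zero, covariance is zero
      set m := ∫ x, (f ∘ X1) x ∂μ with hm
      have hW : MemLp (fun ω => f (X1 ω) - m) 2 μ := hmf.sub (memLp_const m)
      have hWW : Integrable (fun ω => (f (X1 ω) - m) * (f (X1 ω) - m)) μ :=
        memL2_integrable_mul hW hW
      have hzero : (fun ω => (f (X1 ω) - m) * (f (X1 ω) - m)) =ᵐ[μ] 0 := by
        have h0 : ∫ ω, (f (X1 ω) - m) * (f (X1 ω) - m) ∂μ = 0 := hV0.symm
        exact (integral_eq_zero_iff_of_nonneg (fun ω => mul_self_nonneg _) hWW).mp h0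
      have hWzero : (fun ω => f (X1 ω) - m) =ᵐ[μ] 0 := by
        filter_upwards [hzero] with ω h
        exact mul_self_eq_zero.mp h
      have hconst : (f ∘ X1) =ᵐ[μ] fun _ => m := by
        filter_upwards [hWzero] with ω h
        simp only [Pi.zero_apply] at h
        simp only [Function.comp_apply]
        linarith
      have hcov0 : cov μ (f ∘ X1) (f ∘ X2) = 0 := cov_zero_of_ae_const μ _ _ m hconst
      rw [hcov0, ← hV0]
      simp
    · -- nondegenerate case
      have hb := hbound f hf hmf
      unfold corr at hb
      rw [hVeq, abs_div] at hb
      have hsq : Real.sqrt (cov μ (f ∘ X1) (f ∘ X1)) * Real.sqrt (cov μ (f ∘ X1) (f ∘ X1))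
          = cov μ (f ∘ X1) (f ∘ X1) := Real.mul_self_sqrt hVnn
      rw [hsq] at hb
      have habs : |cov μ (f ∘ X1) (f ∘ X1)| = cov μ (f ∘ X1) (f ∘ X1) := abs_of_pos hVpos
      rw [habs] at hb
      calc |cov μ (f ∘ X1) (f ∘ X2)|
          = |cov μ (f ∘ X1) (f ∘ X2)| / cov μ (f ∘ X1) (f ∘ X1)
            * cov μ (f ∘ X1) (f ∘ X1) := by field_simp
        _ ≤ α * cov μ (f ∘ X1) (f ∘ X1) := by
            apply mul_le_mul_of_nonneg_right hb (le_of_lt hVpos)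
  -- set up standardized functions
  set V1 := cov μ (f1 ∘ X1) (f1 ∘ X1) with hV1def
  set V2 := cov μ (f2 ∘ X2) (f2 ∘ X2) with hV2def
  have hV1nn : 0 ≤ V1 := cov_self_nonneg μ _
  have hV2nn : 0 ≤ V2 := cov_self_nonneg μ _
  have hV1pos : 0 < V1 := lt_of_le_of_ne hV1nn (Ne.symm hv1)
  have hV2pos : 0 < V2 := lt_of_le_of_ne hV2nn (Ne.symm hv2)
  set s1 := Real.sqrt V1 with hs1def
  set s2 := Real.sqrt V2 with hs2def
  have hs1pos : 0 < s1 := Real.sqrt_pos.mpr hV1pos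
  have hs2pos : 0 < s2 := Real.sqrt_pos.mpr hV2pos
  have hs1sq : s1 * s1 = V1 := Real.mul_self_sqrt hV1nn
  have hs2sq : s2 * s2 = V2 := Real.mul_self_sqrt hV2nn
  set m1 := ∫ ω, (f1 ∘ X1) ω ∂μ with hm1def
  set m2 := ∫ ω, (f2 ∘ X2) ω ∂μ with hm2def
  set g1 : A → ℝ := fun a => s1⁻¹ * (f1 a - m1) with hg1def
  set g2 : A → ℝ := fun a => s2⁻¹ * (f2 a - m2) with hg2def
  have hmg1 : Measurable g1 := ((hf1.sub measurable_const).const_mul s1⁻¹)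
  have hmg2 : Measurable g2 := ((hf2.sub measurable_const).const_mul s2⁻¹)
  have hm2X1 : MemLp (f2 ∘ X1) 2 μ := by
    have h1 : MemLp f2 2 (μ.map X2) :=
      (memLp_map_measure_iff hf2.aestronglyMeasurable hX2.aemeasurable).mpr hm2
    rw [← hmap] at h1
    exact (memLp_map_measure_iff hf2.aestronglyMeasurable hX1.aemeasurable).mp h1
  have hg1X1 : MemLp (g1 ∘ X1) 2 μ := (hm1.sub (memLp_const m1)).const_mul s1⁻¹
  have hg2X1 : MemLp (g2 ∘ X1) 2 μ := (hm2X1.sub (memLp_const m2)).const_mul s2⁻¹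
  have hg1X2 : MemLp (g1 ∘ X2) 2 μ := hmem g1 hmg1 hg1X1
  have hg2X2 : MemLp (g2 ∘ X2) 2 μ := hmem g2 hmg2 hg2X1
  -- means of standardized functions are zero
  have hint_f2X1 : ∫ ω, f2 (X1 ω) ∂μ = m2 := hmean f2 hf2
  have iF1 : Integrable (fun ω => f1 (X1 ω)) μ := hm1.integrable one_le_two
  have iF2 : Integrable (fun ω => f2 (X1 ω)) μ := hm2X1.integrable one_le_two
  have ig1X1 : Integrable (fun ω => g1 (X1 ω)) μ := hg1X1.integrable one_le_two
  have ig2X1 : Integrable (fun ω => g2 (X1 ω)) μ := hg2X1.integrable one_le_two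
  have ig1X2 : Integrable (fun ω => g1 (X2 ω)) μ := hg1X2.integrable one_le_two
  have ig2X2 : Integrable (fun ω => g2 (X2 ω)) μ := hg2X2.integrable one_le_two
  have hEg1X1 : ∫ ω, g1 (X1 ω) ∂μ = 0 := by
    simp only [hg1def]
    rw [integral_const_mul, integral_sub iF1 (integrable_const m1),
      integral_const]
    simp [hm1def]
  have hEg2X1 : ∫ ω, g2 (X1 ω) ∂μ = 0 := by
    simp only [hg2def]
    rw [integral_const_mul, integral_sub iF2 (integrable_const m2),
      integral_const]
    simp [hint_f2X1]
  have hEg1X2 : ∫ ω, g1 (X2 ω) ∂μ = 0 := by rw [← hmean g1 hmg1]; exact hEg1X1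
  have hEg2X2 : ∫ ω, g2 (X2 ω) ∂μ = 0 := by rw [← hmean g2 hmg2]; exact hEg2X1
  -- variances of standardized functions are 1
  have hVg1X1 : cov μ (g1 ∘ X1) (g1 ∘ X1) = 1 := by
    have h := cov_affine μ (f1 ∘ X1) (f1 ∘ X1) (hm1.integrable one_le_two)
      (hm1.integrable one_le_two) s1⁻¹ s1⁻¹ m1 m1
    have heq : (g1 ∘ X1) = fun ω => s1⁻¹ * ((f1 ∘ X1) ω - m1) := rfl
    rw [heq, h, ← hV1def]
    field_simp
    nlinarith [hs1sq]
  have hVg2X1 : cov μ (g2 ∘ X1) (g2 ∘ X1) = 1 := by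
    have h := cov_affine μ (f2 ∘ X1) (f2 ∘ X1) (hm2X1.integrable one_le_two)
      (hm2X1.integrable one_le_two) s2⁻¹ s2⁻¹ m2 m2
    have heq : (g2 ∘ X1) = fun ω => s2⁻¹ * ((f2 ∘ X1) ω - m2) := rfl
    have hVf2 : cov μ (f2 ∘ X1) (f2 ∘ X1) = V2 := by
      rw [hV2def]; exact hVswap f2 hf2 (hm2X1.integrable one_le_two)
    rw [heq, h, hVf2]
    field_simp
    nlinarith [hs2sq]
  -- the five product integrals
  set Ia := ∫ ω, g1 (X1 ω) * g1 (X2 ω) ∂μ with hIa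
  set Ib := ∫ ω, g2 (X1 ω) * g2 (X2 ω) ∂μ with hIb
  set Ic := ∫ ω, g1 (X1 ω) * g2 (X2 ω) ∂μ with hIc
  set Ir := ∫ ω, g1 (X1 ω) * g2 (X1 ω) ∂μ with hIr
  have hIc' : ∫ ω, g2 (X1 ω) * g1 (X2 ω) ∂μ = Ic := (hprodswap g2 g1 hmg2 hmg1).trans rfl
  -- integrability of all relevant products
  have hint11 : Integrable (fun ω => g1 (X1 ω) * g1 (X2 ω)) μ := memL2_integrable_mul hg1X1 hg1X2
  have hint12 : Integrable (fun ω => g1 (X1 ω) * g2 (X2 ω)) μ := memL2_integrable_mul hg1X1 hg2X2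
  have hint21 : Integrable (fun ω => g2 (X1 ω) * g1 (X2 ω)) μ := memL2_integrable_mul hg2X1 hg1X2
  have hint22 : Integrable (fun ω => g2 (X1 ω) * g2 (X2 ω)) μ := memL2_integrable_mul hg2X1 hg2X2
  have hintr11 : Integrable (fun ω => g1 (X1 ω) * g1 (X1 ω)) μ := memL2_integrable_mul hg1X1 hg1X1
  have hintr12 : Integrable (fun ω => g1 (X1 ω) * g2 (X1 ω)) μ := memL2_integrable_mul hg1X1 hg2X1
  have hintr22 : Integrable (fun ω => g2 (X1 ω) * g2 (X1 ω)) μ := memL2_integrable_mul hg2X1 hg2X1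
  -- squared-integral values
  have hJ1 : ∫ ω, g1 (X1 ω) * g1 (X1 ω) ∂μ = 1 := by
    have h := cov_eq μ (g1 ∘ X1) (g1 ∘ X1) hg1X1 hg1X1
    simp only [Function.comp_apply] at h
    rw [hVg1X1, hEg1X1] at h
    linarith
  have hJ2 : ∫ ω, g2 (X1 ω) * g2 (X1 ω) ∂μ = 1 := by
    have h := cov_eq μ (g2 ∘ X1) (g2 ∘ X1) hg2X1 hg2X1
    simp only [Function.comp_apply] at h
    rw [hVg2X1, hEg2X1] at h
    linarith
  -- bounds from key applied to g1 ± g2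
  have hplus : |Ia + Ib + 2 * Ic| ≤ α * (2 + 2 * Ir) := by
    have hmes : Measurable (fun a => g1 a + g2 a) := hmg1.add hmg2
    have hme2 : MemLp ((fun a => g1 a + g2 a) ∘ X1) 2 μ := hg1X1.add hg2X1
    have h := key (fun a => g1 a + g2 a) hmes hme2
    have hcov1 : cov μ ((fun a => g1 a + g2 a) ∘ X1) ((fun a => g1 a + g2 a) ∘ X2)
        = Ia + Ib + 2 * Ic := by
      rw [cov_eq μ _ _ hme2 (hmem _ hmes hme2)]
      simp only [Function.comp_apply]
      have he1 : ∫ ω, (g1 (X1 ω) + g2 (X1 ω)) ∂μ = 0 := by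
        rw [integral_add ig1X1 ig2X1,
          hEg1X1, hEg2X1]; ring
      have he2 : ∫ ω, (g1 (X2 ω) + g2 (X2 ω)) ∂μ = 0 := by
        rw [integral_add ig1X2 ig2X2,
          hEg1X2, hEg2X2]; ring
      rw [he1, he2]
      have hexp : ∀ ω, (g1 (X1 ω) + g2 (X1 ω)) * (g1 (X2 ω) + g2 (X2 ω))
          = g1 (X1 ω) * g1 (X2 ω) + g1 (X1 ω) * g2 (X2 ω)
            + (g2 (X1 ω) * g1 (X2 ω) + g2 (X1 ω) * g2 (X2 ω)) := fun ω => by ring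
      simp_rw [hexp]
      have j1 : Integrable (fun ω => g1 (X1 ω) * g1 (X2 ω) + g1 (X1 ω) * g2 (X2 ω)) μ :=
        hint11.add hint12
      have j2 : Integrable (fun ω => g2 (X1 ω) * g1 (X2 ω) + g2 (X1 ω) * g2 (X2 ω)) μ :=
        hint21.add hint22
      rw [integral_add j1 j2, integral_add hint11 hint12, integral_add hint21 hint22, hIc']
      ring
    have hcov2 : cov μ ((fun a => g1 a + g2 a) ∘ X1) ((fun a => g1 a + g2 a) ∘ X1)
        = 2 + 2 * Ir := by
      rw [cov_eq μ _ _ hme2 hme2]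
      simp only [Function.comp_apply]
      have he1 : ∫ ω, (g1 (X1 ω) + g2 (X1 ω)) ∂μ = 0 := by
        rw [integral_add ig1X1 ig2X1,
          hEg1X1, hEg2X1]; ring
      rw [he1]
      have hexp : ∀ ω, (g1 (X1 ω) + g2 (X1 ω)) * (g1 (X1 ω) + g2 (X1 ω))
          = g1 (X1 ω) * g1 (X1 ω) + g1 (X1 ω) * g2 (X1 ω)
            + (g1 (X1 ω) * g2 (X1 ω) + g2 (X1 ω) * g2 (X1 ω)) := fun ω => by ring
      simp_rw [hexp]
      have j1 : Integrable (fun ω => g1 (X1 ω) * g1 (X1 ω) + g1 (X1 ω) * g2 (X1 ω)) μ :=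
        hintr11.add hintr12
      have j2 : Integrable (fun ω => g1 (X1 ω) * g2 (X1 ω) + g2 (X1 ω) * g2 (X1 ω)) μ :=
        hintr12.add hintr22
      rw [integral_add j1 j2, integral_add hintr11 hintr12, integral_add hintr12 hintr22, hJ1, hJ2]
      ring
    rw [hcov1, hcov2] at h
    exact h
  have hminus : |Ia + Ib - 2 * Ic| ≤ α * (2 - 2 * Ir) := by
    have hmes : Measurable (fun a => g1 a - g2 a) := hmg1.sub hmg2
    have hme2 : MemLp ((fun a => g1 a - g2 a) ∘ X1) 2 μ := hg1X1.sub hg2X1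
    have h := key (fun a => g1 a - g2 a) hmes hme2
    have hcov1 : cov μ ((fun a => g1 a - g2 a) ∘ X1) ((fun a => g1 a - g2 a) ∘ X2)
        = Ia + Ib - 2 * Ic := by
      rw [cov_eq μ _ _ hme2 (hmem _ hmes hme2)]
      simp only [Function.comp_apply]
      have he1 : ∫ ω, (g1 (X1 ω) - g2 (X1 ω)) ∂μ = 0 := by
        rw [integral_sub ig1X1 ig2X1,
          hEg1X1, hEg2X1]; ring
      have he2 : ∫ ω, (g1 (X2 ω) - g2 (X2 ω)) ∂μ = 0 := by
        rw [integral_sub ig1X2 ig2X2,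
          hEg1X2, hEg2X2]; ring
      rw [he1, he2]
      have hexp : ∀ ω, (g1 (X1 ω) - g2 (X1 ω)) * (g1 (X2 ω) - g2 (X2 ω))
          = g1 (X1 ω) * g1 (X2 ω) - g1 (X1 ω) * g2 (X2 ω)
            - (g2 (X1 ω) * g1 (X2 ω) - g2 (X1 ω) * g2 (X2 ω)) := fun ω => by ring
      simp_rw [hexp]
      have j1 : Integrable (fun ω => g1 (X1 ω) * g1 (X2 ω) - g1 (X1 ω) * g2 (X2 ω)) μ :=
        hint11.sub hint12
      have j2 : Integrable (fun ω => g2 (X1 ω) * g1 (X2 ω) - g2 (X1 ω) * g2 (X2 ω)) μ :=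
        hint21.sub hint22
      rw [integral_sub j1 j2, integral_sub hint11 hint12, integral_sub hint21 hint22, hIc']
      ring
    have hcov2 : cov μ ((fun a => g1 a - g2 a) ∘ X1) ((fun a => g1 a - g2 a) ∘ X1)
        = 2 - 2 * Ir := by
      rw [cov_eq μ _ _ hme2 hme2]
      simp only [Function.comp_apply]
      have he1 : ∫ ω, (g1 (X1 ω) - g2 (X1 ω)) ∂μ = 0 := by
        rw [integral_sub ig1X1 ig2X1,
          hEg1X1, hEg2X1]; ring
      rw [he1]
      have hexp : ∀ ω, (g1 (X1 ω) - g2 (X1 ω)) * (g1 (X1 ω) - g2 (X1 ω))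
          = g1 (X1 ω) * g1 (X1 ω) - g1 (X1 ω) * g2 (X1 ω)
            - (g1 (X1 ω) * g2 (X1 ω) - g2 (X1 ω) * g2 (X1 ω)) := fun ω => by ring
      simp_rw [hexp]
      have j1 : Integrable (fun ω => g1 (X1 ω) * g1 (X1 ω) - g1 (X1 ω) * g2 (X1 ω)) μ :=
        hintr11.sub hintr12
      have j2 : Integrable (fun ω => g1 (X1 ω) * g2 (X1 ω) - g2 (X1 ω) * g2 (X1 ω)) μ :=
        hintr12.sub hintr22
      rw [integral_sub j1 j2, integral_sub hintr11 hintr12, integral_sub hintr12 hintr22, hJ1, hJ2]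
      ring
    rw [hcov1, hcov2] at h
    exact h
  -- combine: |Ic| ≤ α
  have hIcle : |Ic| ≤ α := by
    have h4 : |(Ia + Ib + 2 * Ic) - (Ia + Ib - 2 * Ic)| ≤ |Ia + Ib + 2 * Ic| + |Ia + Ib - 2 * Ic| :=
      abs_sub _ _
    have heq4 : (Ia + Ib + 2 * Ic) - (Ia + Ib - 2 * Ic) = 4 * Ic := by ring
    rw [heq4, abs_mul] at h4
    have : |(4 : ℝ)| = 4 := by norm_num
    rw [this] at h4
    linarith
  -- identify corr with Ic
  have hcovIc : cov μ (g1 ∘ X1) (g2 ∘ X2) = Ic := by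
    rw [cov_eq μ _ _ hg1X1 hg2X2]
    simp only [Function.comp_apply]
    rw [hEg1X1, hEg2X2]
    ring
  have hcovaff : cov μ (g1 ∘ X1) (g2 ∘ X2)
      = s1⁻¹ * s2⁻¹ * cov μ (f1 ∘ X1) (f2 ∘ X2) := by
    have h := cov_affine μ (f1 ∘ X1) (f2 ∘ X2) (hm1.integrable one_le_two)
      (hm2.integrable one_le_two) s1⁻¹ s2⁻¹ m1 m2
    exact h
  have hcorr : corr μ (f1 ∘ X1) (f2 ∘ X2) = Ic := by
    unfold corr
    rw [← hV1def, ← hV2def, ← hs1def, ← hs2def, ← hcovIc, hcovaff]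
    field_simp
  rw [hcorr]
  exact hIcle
end

section
/- Let X and Y be discrete random variables where X takes m values, and suppose α ≥ 0 is such that for all real-valued functions f of X and g of Y with finite nonzero variance, |corr(f(X), g(Y))| ≤ α. Then the mutual information satisfies I(X;Y) ≤ (m-1)α². -/
open MeasureTheory

/-- Shannon entropy of a random variable with finitely many values. -/
noncomputable def ent {Ω A : Type*} [MeasurableSpace Ω] [Fintype A]
    (μ : Measure Ω) (X : Ω → A) : ℝ :=
  ∑ a, Real.negMulLog ((μ (X ⁻¹' {a})).toReal)

private lemma log_term_le {p q r : ℝ} (hp : 0 < p) (hq : 0 ≤ q) (hr : 0 ≤ r) (hrq : r ≤ q) :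
    r * Real.log r - r * Real.log p - r * Real.log q
      ≤ (r - p * q) ^ 2 / (p * q) + (r - p * q) := by
  rcases eq_or_lt_of_le hq with hq0 | hqpos
  · have hr0 : r = 0 := le_antisymm (hrq.trans hq0.symm.le) hr
    simp [hr0, ← hq0]
  · have hpq : 0 < p * q := mul_pos hp hqpos
    have key : (r - p * q) ^ 2 / (p * q) + (r - p * q) = r ^ 2 / (p * q) - r := by
      field_simp; ring
    rw [key]
    rcases eq_or_lt_of_le hr with hr0 | hrpos
    · simp [← hr0]
    · have hlog : Real.log (r / (p * q)) ≤ r / (p * q) - 1 :=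
        Real.log_le_sub_one_of_pos (div_pos hrpos hpq)
      have hsplit : Real.log (r / (p * q)) = Real.log r - Real.log p - Real.log q := by
        rw [Real.log_div hrpos.ne' hpq.ne', Real.log_mul hp.ne' hqpos.ne']; ring
      have h2 : r * Real.log (r / (p * q)) ≤ r * (r / (p * q) - 1) :=
        mul_le_mul_of_nonneg_left hlog hr
      have h3 : r * (r / (p * q) - 1) = r ^ 2 / (p * q) - r := by field_simp
      calc r * Real.log r - r * Real.log p - r * Real.log q
          = r * Real.log (r / (p * q)) := by rw [hsplit]; ring
        _ ≤ r * (r / (p * q) - 1) := h2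
        _ = r ^ 2 / (p * q) - r := h3

private lemma row_sum_le {B : Type*} [Fintype B] (r q : B → ℝ) (p : ℝ)
    (hr : ∀ b, 0 ≤ r b) (hrq : ∀ b, r b ≤ q b) (hq1 : ∑ b, q b = 1)
    (hpdef : p = ∑ b, r b) (hp : 0 < p) :
    ∑ b, (r b * Real.log (r b) - r b * Real.log p - r b * Real.log (q b))
      ≤ (∑ b, (r b - p * q b) ^ 2 / q b) / p := by
  have hq : ∀ b, 0 ≤ q b := fun b => (hr b).trans (hrq b)
  calc ∑ b, (r b * Real.log (r b) - r b * Real.log p - r b * Real.log (q b))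
      ≤ ∑ b, ((r b - p * q b) ^ 2 / (p * q b) + (r b - p * q b)) :=
        Finset.sum_le_sum fun b _ => log_term_le hp (hq b) (hr b) (hrq b)
    _ = ∑ b, (r b - p * q b) ^ 2 / (p * q b) + (∑ b, r b - p * ∑ b, q b) := by
        rw [Finset.sum_add_distrib, Finset.sum_sub_distrib, Finset.mul_sum]
    _ = ∑ b, (r b - p * q b) ^ 2 / (p * q b) := by rw [hq1, ← hpdef]; ring
    _ = (∑ b, (r b - p * q b) ^ 2 / q b) / p := by
        rw [Finset.sum_div]
        exact Finset.sum_congr rfl fun b _ => by rw [div_div, mul_comm]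

/-- If all correlations `|corr(f(X), g(Y))|` are at most `α`, then the mutual information
`I(X;Y)` is at most `(m-1)·α²`, where `m` is the number of values of `X`. -/
theorem mutual_information_le_of_corr_bound {Ω A B : Type*} [MeasurableSpace Ω]
    [Fintype A] [Fintype B] [MeasurableSpace A] [MeasurableSingletonClass A]
    [MeasurableSpace B] [MeasurableSingletonClass B]
    (μ : Measure Ω) [IsProbabilityMeasure μ]
    (X : Ω → A) (Y : Ω → B) (hX : Measurable X) (hY : Measurable Y)
    (α : ℝ) (hα : 0 ≤ α)
    (hbound : ∀ (f : A → ℝ) (g : B → ℝ),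
      cov μ (f ∘ X) (f ∘ X) ≠ 0 → cov μ (g ∘ Y) (g ∘ Y) ≠ 0 →
      |corr μ (f ∘ X) (g ∘ Y)| ≤ α) :
    ent μ X + ent μ Y - ent μ (fun ω => (X ω, Y ω)) ≤ (Fintype.card A - 1) * α ^ 2 := by
  classical
  have hXY : Measurable fun ω => (X ω, Y ω) := hX.prodMk hY
  set r : A → B → ℝ := fun a b => (μ ((fun ω => (X ω, Y ω)) ⁻¹' {(a, b)})).toReal with hrdef
  have hmap : IsProbabilityMeasure (μ.map (fun ω => (X ω, Y ω))) :=
    Measure.isProbabilityMeasure_map hXY.aemeasurable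
  -- key integral formula
  have Ekey : ∀ h : A × B → ℝ, ∫ ω, h (X ω, Y ω) ∂μ = ∑ a, ∑ b, r a b * h (a, b) := by
    intro h
    rw [← integral_map hXY.aemeasurable (measurable_of_finite h).aestronglyMeasurable,
      integral_fintype (.of_finite), Fintype.sum_prod_type]
    refine Finset.sum_congr rfl fun a _ => Finset.sum_congr rfl fun b _ => ?_
    rw [measureReal_def, Measure.map_apply hXY (measurableSet_singleton _), smul_eq_mul]
  have hr0 : ∀ a b, 0 ≤ r a b := fun a b => ENNReal.toReal_nonneg
  have hsum1 : ∑ a, ∑ b, r a b = 1 := by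
    have := Ekey (fun _ => 1)
    simpa using this.symm
  have hsumq1 : ∑ b, ∑ a, r a b = 1 := by rw [Finset.sum_comm]; exact hsum1
  -- marginals
  set p : A → ℝ := fun a => ∑ b, r a b with hpdef
  set q : B → ℝ := fun b => ∑ a, r a b with hqdef
  have hp0 : ∀ a, 0 ≤ p a := fun a => Finset.sum_nonneg fun b _ => hr0 a b
  have hq0 : ∀ b, 0 ≤ q b := fun b => Finset.sum_nonneg fun a _ => hr0 a b
  have hrp : ∀ a b, r a b ≤ p a := fun a b =>
    Finset.single_le_sum (fun b _ => hr0 a b) (Finset.mem_univ b)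
  have hrq : ∀ a b, r a b ≤ q b := fun a b =>
    Finset.single_le_sum (fun a _ => hr0 a b) (Finset.mem_univ a)
  have hp1 : ∀ a, p a ≤ 1 := fun a => by
    rw [← hsum1]
    exact Finset.single_le_sum (f := fun a => p a) (fun a _ => hp0 a) (Finset.mem_univ a)
  have hpa : ∀ a, (μ (X ⁻¹' {a})).toReal = p a := by
    intro a
    have h1 := Ekey (fun ab => if ab.1 = a then (1 : ℝ) else 0)
    have h2 : ∫ ω, (if X ω = a then (1 : ℝ) else 0) ∂μ = (μ (X ⁻¹' {a})).toReal := by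
      rw [← measureReal_def, ← integral_indicator_one (hX (measurableSet_singleton a))]
      exact integral_congr_ae (Filter.Eventually.of_forall fun ω => by
        simp [Set.indicator_apply])
    rw [← h2, h1]
    rw [show (∑ a', ∑ b, r a' b * if a' = a then (1:ℝ) else 0)
        = ∑ a', (if a' = a then p a' else 0) from
      Finset.sum_congr rfl fun a' _ => by split <;> simp [hpdef]]
    simp
  have hqb : ∀ b, (μ (Y ⁻¹' {b})).toReal = q b := by
    intro b
    have h1 := Ekey (fun ab => if ab.2 = b then (1 : ℝ) else 0)
    have h2 : ∫ ω, (if Y ω = b then (1 : ℝ) else 0) ∂μ = (μ (Y ⁻¹' {b})).toReal := by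
      rw [← measureReal_def, ← integral_indicator_one (hY (measurableSet_singleton b))]
      exact integral_congr_ae (Filter.Eventually.of_forall fun ω => by
        simp [Set.indicator_apply])
    rw [← h2, h1, Finset.sum_comm]
    rw [show (∑ b', ∑ a, r a b' * if b' = b then (1:ℝ) else 0)
        = ∑ b', (if b' = b then q b' else 0) from
      Finset.sum_congr rfl fun b' _ => by split <;> simp [hqdef]]
    simp
  -- rewrite the entropy difference as a double sum
  have e1 : ent μ X = ∑ a, ∑ b, -(r a b * Real.log (p a)) := by
    unfold ent
    refine Finset.sum_congr rfl fun a _ => ?_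
    rw [hpa a, Real.negMulLog, neg_mul, hpdef]
    rw [Finset.sum_neg_distrib, Finset.sum_mul]
  have e2 : ent μ Y = ∑ a, ∑ b, -(r a b * Real.log (q b)) := by
    unfold ent
    rw [Finset.sum_comm]
    refine Finset.sum_congr rfl fun b _ => ?_
    rw [hqb b, Real.negMulLog, neg_mul, hqdef]
    rw [Finset.sum_neg_distrib, Finset.sum_mul]
  have e3 : ent μ (fun ω => (X ω, Y ω)) = ∑ a, ∑ b, Real.negMulLog (r a b) := by
    unfold ent
    rw [Fintype.sum_prod_type]
  have key : ent μ X + ent μ Y - ent μ (fun ω => (X ω, Y ω))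
      = ∑ a, ∑ b, (r a b * Real.log (r a b) - r a b * Real.log (p a)
          - r a b * Real.log (q b)) := by
    rw [e1, e2, e3, ← Finset.sum_add_distrib, ← Finset.sum_sub_distrib]
    refine Finset.sum_congr rfl fun a _ => ?_
    rw [← Finset.sum_add_distrib, ← Finset.sum_sub_distrib]
    refine Finset.sum_congr rfl fun b _ => ?_
    rw [Real.negMulLog]; ring
  -- the correlation bound gives the chi-square bound for each row
  have hT : ∀ a, (∑ b, (r a b - p a * q b) ^ 2 / q b) / p a ≤ α ^ 2 * (1 - p a) := by
    intro a
    set T : ℝ := ∑ b, (r a b - p a * q b) ^ 2 / q b with hTdef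
    have hT0 : 0 ≤ T := Finset.sum_nonneg fun b _ => div_nonneg (sq_nonneg _) (hq0 b)
    rcases eq_or_lt_of_le (hp0 a) with hpz | hppos
    · have hz : ∀ b, r a b = 0 := fun b => le_antisymm ((hrp a b).trans hpz.symm.le) (hr0 a b)
      have hTz : T = 0 := Finset.sum_eq_zero fun b _ => by simp [hz b, ← hpz]
      rw [hTz, zero_div, ← hpz]
      positivity
    rcases eq_or_lt_of_le (hp1 a) with hpone | hplt
    · -- p a = 1 : the row equals the column marginal
      have hdz : ∑ b, (q b - r a b) = 0 := by
        rw [Finset.sum_sub_distrib, hsumq1, show ∑ b, r a b = p a from rfl, hpone]; ring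
      have hz : ∀ b, r a b = q b := by
        intro b
        have h := (Finset.sum_eq_zero_iff_of_nonneg
          (fun b _ => sub_nonneg.2 (hrq a b))).1 hdz b (Finset.mem_univ b)
        linarith [h]
      have hTz : T = 0 := Finset.sum_eq_zero fun b _ => by rw [hz b, hpone]; simp
      rw [hTz, zero_div, hpone]; simp
    by_cases hTz : T = 0
    · rw [hTz, zero_div]
      have h1p : 0 ≤ 1 - p a := by linarith
      exact mul_nonneg (sq_nonneg α) h1p
    have hTpos : 0 < T := lt_of_le_of_ne hT0 (Ne.symm hTz)
    set f : A → ℝ := fun a' => if a' = a then 1 else 0 with hfdef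
    set g : B → ℝ := fun b => (r a b - p a * q b) / q b with hgdef
    -- expectation of f ∘ X
    have hEf : ∫ ω, (f ∘ X) ω ∂μ = p a := by
      calc ∫ ω, (f ∘ X) ω ∂μ
          = ∫ ω, (fun ab : A × B => f ab.1) (X ω, Y ω) ∂μ := rfl
        _ = ∑ a', ∑ b, r a' b * f a' := by exact Ekey (fun ab => f ab.1)
        _ = p a := by
            rw [show (∑ a', ∑ b, r a' b * f a') = ∑ a', (if a' = a then p a' else 0) from
              Finset.sum_congr rfl fun a' _ => by simp only [hfdef]; split <;> simp [hpdef]]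
            simp
    -- expectation of g ∘ Y
    have hqg : ∀ b, q b * g b = r a b - p a * q b := by
      intro b
      by_cases hqz : q b = 0
      · have hrz : r a b = 0 := le_antisymm ((hrq a b).trans hqz.le) (hr0 a b)
        simp [hgdef, hqz, hrz]
      · simp only [hgdef]
        rw [mul_comm, div_mul_cancel₀ _ hqz]
    have hEg : ∫ ω, (g ∘ Y) ω ∂μ = 0 := by
      calc ∫ ω, (g ∘ Y) ω ∂μ
          = ∫ ω, (fun ab : A × B => g ab.2) (X ω, Y ω) ∂μ := rfl
        _ = ∑ a', ∑ b, r a' b * g b := by exact Ekey (fun ab => g ab.2)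
        _ = ∑ b, q b * g b := by
            rw [Finset.sum_comm]
            exact Finset.sum_congr rfl fun b _ => by rw [← Finset.sum_mul]
        _ = ∑ b, (r a b - p a * q b) := Finset.sum_congr rfl fun b _ => hqg b
        _ = 0 := by
            rw [Finset.sum_sub_distrib, ← Finset.mul_sum, hsumq1,
              show ∑ b, r a b = p a from rfl]
            ring
    -- variance of f ∘ X
    have covff : cov μ (f ∘ X) (f ∘ X) = p a * (1 - p a) := by
      unfold cov
      rw [hEf]
      calc ∫ ω, ((f ∘ X) ω - p a) * ((f ∘ X) ω - p a) ∂μ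
          = ∫ ω, (fun ab : A × B => (f ab.1 - p a) * (f ab.1 - p a)) (X ω, Y ω) ∂μ := rfl
        _ = ∑ a', ∑ b, r a' b * ((f a' - p a) * (f a' - p a)) := by
            exact Ekey (fun ab => (f ab.1 - p a) * (f ab.1 - p a))
        _ = ∑ a', p a' * ((f a' - p a) * (f a' - p a)) :=
            Finset.sum_congr rfl fun a' _ => by rw [← Finset.sum_mul]
        _ = ∑ a', (p a' * p a ^ 2
              + if a' = a then p a' * ((1 - p a) ^ 2 - p a ^ 2) else 0) := by
            refine Finset.sum_congr rfl fun a' _ => ?_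
            simp only [hfdef]
            split <;> ring
        _ = p a * (1 - p a) := by
            rw [Finset.sum_add_distrib, ← Finset.sum_mul, hsum1, Finset.sum_ite_eq']
            simp; ring
    -- variance of g ∘ Y
    have hqg2 : ∀ b, q b * (g b * g b) = (r a b - p a * q b) ^ 2 / q b := by
      intro b
      by_cases hqz : q b = 0
      · have hrz : r a b = 0 := le_antisymm ((hrq a b).trans hqz.le) (hr0 a b)
        simp [hgdef, hqz, hrz]
      · simp only [hgdef]
        field_simp
    have covgg : cov μ (g ∘ Y) (g ∘ Y) = T := by
      unfold cov
      rw [hEg]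
      calc ∫ ω, ((g ∘ Y) ω - 0) * ((g ∘ Y) ω - 0) ∂μ
          = ∫ ω, (fun ab : A × B => (g ab.2 - 0) * (g ab.2 - 0)) (X ω, Y ω) ∂μ := rfl
        _ = ∑ a', ∑ b, r a' b * ((g b - 0) * (g b - 0)) := by
            exact Ekey (fun ab => (g ab.2 - 0) * (g ab.2 - 0))
        _ = ∑ b, q b * (g b * g b) := by
            rw [Finset.sum_comm]
            refine Finset.sum_congr rfl fun b _ => ?_
            rw [← Finset.sum_mul]
            congr 1
            ring
        _ = T := Finset.sum_congr rfl fun b _ => hqg2 b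
    -- covariance of f ∘ X and g ∘ Y
    have hinner : ∀ b, (∑ a', r a' b * (f a' - p a)) = r a b - p a * q b := by
      intro b
      rw [show (∑ a', r a' b * (f a' - p a))
          = ∑ a', (r a' b * f a' - r a' b * p a) from
        Finset.sum_congr rfl fun a' _ => by ring]
      rw [Finset.sum_sub_distrib, ← Finset.sum_mul,
        show (∑ a', r a' b) = q b from rfl]
      rw [show (∑ a', r a' b * f a') = ∑ a', (if a' = a then r a' b else 0) from
        Finset.sum_congr rfl fun a' _ => by simp only [hfdef]; split <;> simp]
      rw [Finset.sum_ite_eq']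
      simp [mul_comm]
    have covfg : cov μ (f ∘ X) (g ∘ Y) = T := by
      unfold cov
      rw [hEf, hEg]
      calc ∫ ω, ((f ∘ X) ω - p a) * ((g ∘ Y) ω - 0) ∂μ
          = ∫ ω, (fun ab : A × B => (f ab.1 - p a) * (g ab.2 - 0)) (X ω, Y ω) ∂μ := rfl
        _ = ∑ a', ∑ b, r a' b * ((f a' - p a) * (g b - 0)) := by
            exact Ekey (fun ab => (f ab.1 - p a) * (g ab.2 - 0))
        _ = ∑ b, (∑ a', r a' b * (f a' - p a)) * g b := by
            rw [Finset.sum_comm]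
            refine Finset.sum_congr rfl fun b _ => ?_
            rw [Finset.sum_mul]
            exact Finset.sum_congr rfl fun a' _ => by ring
        _ = ∑ b, (r a b - p a * q b) * g b :=
            Finset.sum_congr rfl fun b _ => by rw [hinner b]
        _ = T := by
            refine Finset.sum_congr rfl fun b _ => ?_
            by_cases hqz : q b = 0
            · have hrz : r a b = 0 := le_antisymm ((hrq a b).trans hqz.le) (hr0 a b)
              simp [hgdef, hqz, hrz]
            · simp only [hgdef]
              field_simp
    -- apply the correlation bound
    have h1p : 0 < 1 - p a := by linarith
    have hppos' : 0 < p a * (1 - p a) := mul_pos hppos h1p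
    have hbnd := hbound f g (by rw [covff]; exact hppos'.ne') (by rw [covgg]; exact hTpos.ne')
    have hcorr : corr μ (f ∘ X) (g ∘ Y)
        = T / (Real.sqrt (p a * (1 - p a)) * Real.sqrt T) := by
      unfold corr
      rw [covff, covgg, covfg]
    rw [hcorr] at hbnd
    have hsp : 0 < Real.sqrt (p a * (1 - p a)) := Real.sqrt_pos.2 hppos'
    have hst : 0 < Real.sqrt T := Real.sqrt_pos.2 hTpos
    have habs : T / (Real.sqrt (p a * (1 - p a)) * Real.sqrt T)
        = Real.sqrt T / Real.sqrt (p a * (1 - p a)) := by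
      have hTT : T = Real.sqrt T * Real.sqrt T := (Real.mul_self_sqrt hT0).symm
      calc T / (Real.sqrt (p a * (1 - p a)) * Real.sqrt T)
          = Real.sqrt T * Real.sqrt T / (Real.sqrt (p a * (1 - p a)) * Real.sqrt T) := by
            rw [← hTT]
        _ = Real.sqrt T / Real.sqrt (p a * (1 - p a)) :=
            mul_div_mul_right _ _ hst.ne'
    rw [habs, abs_of_nonneg (div_nonneg hst.le hsp.le)] at hbnd
    have h1 : Real.sqrt T ≤ α * Real.sqrt (p a * (1 - p a)) := (div_le_iff₀ hsp).1 hbnd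
    have h2 : T ≤ α ^ 2 * (p a * (1 - p a)) := by
      have h3 := mul_le_mul h1 h1 hst.le (by positivity)
      nlinarith [Real.sq_sqrt hT0, Real.sq_sqrt hppos'.le]
    rw [div_le_iff₀ hppos]
    nlinarith [h2]
  -- combine
  rw [key]
  have hrow : ∀ a, ∑ b, (r a b * Real.log (r a b) - r a b * Real.log (p a)
      - r a b * Real.log (q b)) ≤ α ^ 2 * (1 - p a) := by
    intro a
    rcases eq_or_lt_of_le (hp0 a) with hpz | hppos
    · have hz : ∀ b, r a b = 0 := fun b => le_antisymm ((hrp a b).trans hpz.symm.le) (hr0 a b)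
      have : ∑ b, (r a b * Real.log (r a b) - r a b * Real.log (p a)
          - r a b * Real.log (q b)) = 0 := Finset.sum_eq_zero fun b _ => by simp [hz b]
      rw [this]
      have : p a = 0 := hpz.symm
      nlinarith [sq_nonneg α, hp1 a, hp0 a]
    · exact (row_sum_le (r a) q (p a) (hr0 a) (hrq a) hsumq1 rfl hppos).trans (hT a)
  calc ∑ a, ∑ b, (r a b * Real.log (r a b) - r a b * Real.log (p a)
          - r a b * Real.log (q b))
      ≤ ∑ a, α ^ 2 * (1 - p a) := Finset.sum_le_sum fun a _ => hrow a
    _ = α ^ 2 * (Fintype.card A - ∑ a, p a) := by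
        simp [mul_sub, Finset.sum_sub_distrib, Finset.mul_sum, Finset.card_univ, mul_comm]
    _ = (Fintype.card A - 1) * α ^ 2 := by rw [hsum1]; ring
end

section
/- In the free group F_r = ⟨a_1,…,a_r⟩ with r ≥ 1, if s_1,…,s_n are elements whose reduced forms are palindromes of length 2l+1 and s_{i+1} ≠ s_i^{-1} for all i, then the reduced form of the product s_1⋯s_n has length at least 2l+n, and its last l+1 letters agree with the last l+1 letters of s_n. -/
namespace PalAux

open FreeGroup List

variable {α : Type*} [DecidableEq α]

/-- Adjacent letters do not cancel. -/
def Ok (x y : α × Bool) : Prop := ¬(x.1 = y.1 ∧ x.2 = !y.2)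

lemma reduce_eq_self : ∀ {w : List (α × Bool)}, List.Chain' Ok w → FreeGroup.reduce w = w
  | [], _ => rfl
  | [_], _ => rfl
  | x :: y :: L, h => by
    have h1 : Ok x y := (List.isChain_cons_cons.1 h).1
    have h2 : FreeGroup.reduce (y :: L) = y :: L := reduce_eq_self (List.isChain_cons_cons.1 h).2
    rw [FreeGroup.reduce.cons, h2]
    exact if_neg h1

lemma chain_reduce : ∀ (w : List (α × Bool)), List.Chain' Ok (FreeGroup.reduce w)
  | [] => List.isChain_nil
  | x :: L => by
    have ih := chain_reduce L
    rw [FreeGroup.reduce.cons]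
    cases h : FreeGroup.reduce L with
    | nil => exact List.isChain_singleton x
    | cons hd tl =>
      rw [h] at ih
      show List.Chain' Ok (if x.1 = hd.1 ∧ x.2 = !hd.2 then tl else x :: hd :: tl)
      by_cases hc : x.1 = hd.1 ∧ x.2 = !hd.2
      · rw [if_pos hc]; exact ih.tail
      · rw [if_neg hc]; exact List.isChain_cons_cons.2 ⟨hc, ih⟩

lemma chain_toWord (x : FreeGroup α) : List.Chain' Ok x.toWord := by
  have := chain_reduce x.toWord
  rwa [FreeGroup.reduce_toWord] at this

lemma invRev_append (L₁ L₂ : List (α × Bool)) :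
    invRev (L₁ ++ L₂) = invRev L₂ ++ invRev L₁ := by
  simp [invRev]

/-- Cancellation decomposition for products of reduced words. -/
lemma decomp (a : List (α × Bool)) : ∀ (b : List (α × Bool)),
    List.Chain' Ok a → List.Chain' Ok b →
    ∃ a' w b', a = a' ++ w ∧ b = invRev w ++ b' ∧
      FreeGroup.reduce (a ++ b) = a' ++ b' := by
  induction a using List.reverseRecOn with
  | nil =>
    intro b _ hb
    exact ⟨[], [], b, rfl, rfl, reduce_eq_self hb⟩
  | append_singleton c x ih =>
    intro b ha hb
    cases b with
    | nil =>
      exact ⟨c ++ [x], [], [], by simp, rfl, by simpa using reduce_eq_self ha⟩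
    | cons y b₀ =>
      by_cases hxy : y = (x.1, !x.2)
      · have hstep : Red.Step (c ++ x :: y :: b₀) (c ++ b₀) := by
          subst hxy
          have := @FreeGroup.Red.Step.not α c b₀ x.1 x.2
          simpa using this
        have hred : FreeGroup.reduce ((c ++ [x]) ++ y :: b₀) = FreeGroup.reduce (c ++ b₀) := by
          have heq : (c ++ [x]) ++ y :: b₀ = c ++ x :: y :: b₀ := by simp
          rw [heq]
          exact FreeGroup.reduce.Step.eq hstep
        obtain ⟨a', w₀, b', h1, h2, h3⟩ :=
          ih b₀ (ha.prefix ⟨[x], rfl⟩) ((List.isChain_cons.1 hb).2)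
        refine ⟨a', w₀ ++ [x], b', ?_, ?_, ?_⟩
        · rw [h1, List.append_assoc]
        · rw [invRev_append, hxy, h2]
          simp [invRev]
        · rw [hred, h3]
      · have hchain : List.Chain' Ok ((c ++ [x]) ++ y :: b₀) := by
          apply ha.append hb
          intro p hp q hq
          rw [List.getLast?_concat] at hp
          simp only [List.head?_cons, Option.mem_some_iff] at hp hq
          subst hp; subst hq
          intro ⟨e1, e2⟩
          exact hxy (Prod.ext e1.symm (by rw [e2, Bool.not_not]))
        exact ⟨c ++ [x], [], y :: b₀, by simp, rfl, reduce_eq_self hchain⟩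

/-- A palindrome of length `2l+1` is determined by its first `l+1` letters. -/
lemma pal_take_eq {β : Type*} {l : ℕ} {p q : List β}
    (hp : p.reverse = p) (hq : q.reverse = q)
    (hpl : p.length = 2 * l + 1) (hql : q.length = 2 * l + 1)
    (h : p.take (l + 1) = q.take (l + 1)) : p = q := by
  apply List.ext_getElem?
  intro i
  by_cases hi : i < 2 * l + 1
  · have key : ∀ j, j < l + 1 → p[j]? = q[j]? := by
      intro j hj
      have := congrArg (fun t => t[j]?) h
      simpa [List.getElem?_take, hj] using this
    by_cases hc : i < l + 1
    · exact key i hc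
    · have hpi : p[i]? = p[2 * l - i]? := by
        conv_lhs => rw [← hp]
        rw [List.getElem?_reverse (by omega), hpl]
        have e : 2 * l + 1 - 1 - i = 2 * l - i := by omega
        rw [e]
      have hqi : q[i]? = q[2 * l - i]? := by
        conv_lhs => rw [← hq]
        rw [List.getElem?_reverse (by omega), hql]
        have e : 2 * l + 1 - 1 - i = 2 * l - i := by omega
        rw [e]
      rw [hpi, hqi]
      exact key _ (by omega)
  · rw [List.getElem?_eq_none (by omega), List.getElem?_eq_none (by omega)]

/-- One multiplication step. -/
lemma step (l m : ℕ) (p t u : FreeGroup α)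
    (hp : 2 * l + m ≤ p.toWord.length)
    (hsuf : p.toWord.reverse.take (l + 1) = t.toWord.reverse.take (l + 1))
    (htp : t.toWord.reverse = t.toWord) (htl : t.toWord.length = 2 * l + 1)
    (hup : u.toWord.reverse = u.toWord) (hul : u.toWord.length = 2 * l + 1)
    (hne : u ≠ t⁻¹) :
    2 * l + (m + 1) ≤ (p * u).toWord.length ∧
      (p * u).toWord.reverse.take (l + 1) = u.toWord.reverse.take (l + 1) := by
  obtain ⟨a', w, b', h1, h2, h3⟩ :=
    decomp p.toWord u.toWord (chain_toWord p) (chain_toWord u)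
  have hmul : (p * u).toWord = a' ++ b' := by
    conv_lhs => rw [← FreeGroup.mk_toWord (x := p), ← FreeGroup.mk_toWord (x := u)]
    rw [FreeGroup.mul_mk, FreeGroup.toWord_mk, h3]
  have la : p.toWord.length = a'.length + w.length := by rw [h1]; simp
  have lb : u.toWord.length = w.length + b'.length := by
    rw [h2]; simp [invRev]
  have hw : w.length ≤ l := by
    by_contra hw'
    push_neg at hw'
    -- deduce u = t⁻¹
    have h4 : p.toWord.reverse.take (l + 1) = w.reverse.take (l + 1) := by
      rw [h1, List.reverse_append, List.take_append_of_le_length (by simp; omega)]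
    have h5 : u.toWord.take (l + 1) = (invRev w).take (l + 1) := by
      rw [h2, List.take_append_of_le_length (by simp [invRev]; omega)]
    have h6 : (invRev w).take (l + 1)
        = (w.reverse.take (l + 1)).map (fun g => (g.1, !g.2)) := by
      simp [invRev, ← List.map_reverse, List.map_take]
    have hinv : invRev t.toWord = t.toWord.map (fun g : α × Bool => (g.1, !g.2)) := by
      rw [invRev, ← List.map_reverse, htp]
    have h7 : u.toWord.take (l + 1) = (invRev t.toWord).take (l + 1) := by
      rw [h5, h6, ← h4, hsuf, htp, hinv, List.map_take]
    have h8 : u.toWord = invRev t.toWord := by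
      apply pal_take_eq hup ?_ hul (by simp [invRev]; omega) h7
      rw [hinv, ← List.map_reverse, htp]
    exact hne (FreeGroup.toWord_injective (h8.trans (FreeGroup.toWord_inv t).symm))
  constructor
  · rw [hmul, List.length_append]
    omega
  · rw [hmul, List.reverse_append,
      List.take_append_of_le_length (l₁ := b'.reverse) (l₂ := a'.reverse) (by simp; omega)]
    conv_rhs => rw [h2, List.reverse_append]
    rw [List.take_append_of_le_length (l₁ := b'.reverse)
      (l₂ := (invRev w).reverse) (by simp; omega)]

lemma main_aux (l : ℕ) : ∀ (n : ℕ) (_hn : 1 ≤ n), ∀ (s : Fin n → FreeGroup α),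
    (∀ i, List.Palindrome (s i).toWord ∧ (s i).toWord.length = 2 * l + 1) →
    (∀ (i : ℕ) (h : i + 1 < n), s ⟨i + 1, h⟩ ≠ (s ⟨i, by omega⟩)⁻¹) →
    2 * l + n ≤ ((List.ofFn s).prod).toWord.length ∧
      (((List.ofFn s).prod).toWord).reverse.take (l + 1)
        = ((s ⟨n - 1, by omega⟩).toWord).reverse.take (l + 1) := by
  intro n
  induction n with
  | zero => omega
  | succ m ih =>
    intro _ s hpal hne
    rcases Nat.eq_zero_or_pos m with hm | hm
    · subst hm
      have : List.ofFn s = [s 0] := by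
        simp [List.ofFn_succ]
      rw [this]
      simp only [List.prod_cons, List.prod_nil, mul_one]
      refine ⟨by rw [(hpal 0).2], ?_⟩
      congr 1
    · -- m ≥ 1
      set s' : Fin m → FreeGroup α := fun i => s i.castSucc with hs'
      have hpal' : ∀ i, List.Palindrome (s' i).toWord ∧ (s' i).toWord.length = 2 * l + 1 :=
        fun i => hpal i.castSucc
      have hne' : ∀ (i : ℕ) (h : i + 1 < m), s' ⟨i + 1, h⟩ ≠ (s' ⟨i, by omega⟩)⁻¹ := by
        intro i h
        have := hne i (by omega)
        convert this using 2 <;> rfl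
      obtain ⟨IH1, IH2⟩ := ih hm s' hpal' hne'
      have hofn : List.ofFn s = (List.ofFn s').concat (s (Fin.last m)) := List.ofFn_succ' s
      have hprod : (List.ofFn s).prod = (List.ofFn s').prod * s (Fin.last m) := by
        rw [hofn, List.prod_concat]
      have hlast : s ⟨m - 1, by omega⟩ = s' ⟨m - 1, by omega⟩ := by
        congr 1
      rw [hlast] at *
      have hstep := step l m ((List.ofFn s').prod) (s' ⟨m - 1, by omega⟩) (s (Fin.last m))
        IH1 IH2
        ((hpal' ⟨m - 1, by omega⟩).1.reverse_eq) ((hpal' ⟨m - 1, by omega⟩).2)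
        ((hpal (Fin.last m)).1.reverse_eq) ((hpal (Fin.last m)).2)
        ?_
      · rw [hprod]
        refine ⟨hstep.1, ?_⟩
        rw [hstep.2]
        congr 2
      · -- s (Fin.last m) ≠ (s' ⟨m-1⟩)⁻¹
        have := hne (m - 1) (by omega)
        convert this using 3 <;> simp [hs', Fin.last] <;> omega

end PalAux

/-- Products of distinct-from-inverse palindromes of length `2l+1` in the free group:
the reduced form of `s₁⋯sₙ` has length at least `2l+n` and its last `l+1` letters agree
with those of `sₙ`. -/
theorem palindrome_product_length (r l n : ℕ) (hr : 1 ≤ r) (hn : 1 ≤ n)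
    (s : Fin n → FreeGroup (Fin r))
    (hpal : ∀ i, List.Palindrome (s i).toWord ∧ (s i).toWord.length = 2 * l + 1)
    (hne : ∀ (i : ℕ) (h : i + 1 < n), s ⟨i + 1, h⟩ ≠ (s ⟨i, by omega⟩)⁻¹) :
    2 * l + n ≤ ((List.ofFn s).prod).toWord.length ∧
      (((List.ofFn s).prod).toWord).reverse.take (l + 1)
        = ((s ⟨n - 1, by omega⟩).toWord).reverse.take (l + 1) := by
  exact PalAux.main_aux l n hn s hpal hne
end

section
/- In the free group F_r with r ≥ 2 and odd integer k = 2l+1, there is a subset S_0 of elements of length k (in the word metric with respect to the standard symmetric generating set) with |S_0| = r(2r-1)^l that freely generates a free subgroup of rank r(2r-1)^l. -/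
set_option linter.unusedSectionVars false

namespace PingPongAux

open FreeGroup List

variable {β : Type*} [DecidableEq β]

/-- The no-cancellation relation between adjacent letters. -/
def NC (a b : β × Bool) : Prop := ¬(a.1 = b.1 ∧ a.2 = !b.2)

/-- A word is reduced. -/
def Red' (L : List (β × Bool)) : Prop := List.Chain' NC L

lemma NC.symm' {a b : β × Bool} (h : NC a b) : NC b a := by
  rintro ⟨h1, h2⟩; exact h ⟨h1.symm, by simp [h2]⟩

lemma red'_reverse {L : List (β × Bool)} (h : Red' L) : Red' L.reverse := by
  rw [Red', List.Chain', List.isChain_reverse]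
  exact h.imp fun a b hab => hab.symm'

lemma red'_reduce_eq_self {L : List (β × Bool)} (h : Red' L) : reduce L = L := by
  induction L with
  | nil => rfl
  | cons x L ih =>
    have hL : Red' L := h.tail
    rw [reduce.cons, ih hL]
    cases L with
    | nil => rfl
    | cons b t =>
      have : NC x b := List.isChain_cons_cons.mp h |>.1
      simp only [this, if_false]
      exact if_neg this

lemma red'_reduce (L : List (β × Bool)) : Red' (reduce L) := by
  induction L with
  | nil => exact List.isChain_nil
  | cons x L ih =>
    rw [reduce.cons]
    rcases hL : reduce L with _ | ⟨b, t⟩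
    · exact List.isChain_singleton x
    · rw [hL] at ih
      by_cases hxb : x.1 = b.1 ∧ x.2 = !b.2
      · simp only [hxb, if_true]
        exact ih.tail
      · simp only [hxb, if_false]
        exact List.isChain_cons_cons.mpr ⟨hxb, ih⟩

lemma red'_toWord (g : FreeGroup β) : Red' g.toWord := by
  rw [← FreeGroup.reduce_toWord]; exact red'_reduce _

lemma invRev_append (L₁ L₂ : List (β × Bool)) :
    invRev (L₁ ++ L₂) = invRev L₂ ++ invRev L₁ := by
  simp [invRev]

lemma invRev_singleton (x : β × Bool) : invRev [x] = [(x.1, !x.2)] := by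
  simp [invRev]

/-- The key cancellation lemma: the reduction of a concatenation of two reduced
words is obtained by cancelling `n` letters at the junction. -/
lemma reduce_append (A : List (β × Bool)) :
    ∀ B : List (β × Bool), Red' A → Red' B →
    ∃ n, n ≤ A.length ∧ n ≤ B.length ∧
      reduce (A ++ B) = A.take (A.length - n) ++ B.drop n ∧
      B.take n = invRev (A.drop (A.length - n)) := by
  induction A using List.reverseRecOn with
  | nil =>
    intro B _ hB
    exact ⟨0, by simp, by simp, by simpa using red'_reduce_eq_self hB, by simp [invRev]⟩
  | append_singleton A' x IH =>
    intro B hA hB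
    rcases B with _ | ⟨y, B'⟩
    · refine ⟨0, by simp, by simp, ?_, by simp [invRev]⟩
      rw [List.append_nil, List.take_of_length_le (by simp), red'_reduce_eq_self hA]
      simp
    · by_cases hxy : y.1 = x.1 ∧ y.2 = !x.2
      · -- cancellation at the junction
        have hy : y = (x.1, !x.2) := by
          obtain ⟨h1, h2⟩ := hxy; exact Prod.ext h1 h2
        have hstep : FreeGroup.Red.Step ((A' ++ [x]) ++ (y :: B')) (A' ++ B') := by
          subst hy
          have := @FreeGroup.Red.Step.not β A' B' x.1 x.2
          simpa using this
        obtain ⟨n, hn1, hn2, hn3, hn4⟩ :=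
          IH B' (hA.prefix (by simp)) hB.tail
        refine ⟨n + 1, by simp only [List.length_append, List.length_singleton]; omega,
          by simp only [List.length_cons]; omega, ?_, ?_⟩
        · rw [reduce.Step.eq hstep, hn3]
          have h1 : (A' ++ [x]).length - (n + 1) = A'.length - n := by
            simp
          rw [h1, List.take_append_of_le_length (by omega)]
          simp
        · have h1 : (A' ++ [x]).length - (n + 1) = A'.length - n := by
            simp
          rw [h1, List.drop_append_of_le_length (by omega), invRev_append,
            invRev_singleton]
          rw [hy, List.take_succ_cons, hn4]
          rfl
      · -- no cancellation: the concatenation is reduced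
        refine ⟨0, by simp, by simp, ?_, by simp [invRev]⟩
        have hred : Red' ((A' ++ [x]) ++ y :: B') := by
          rw [Red', List.Chain', List.isChain_append]
          refine ⟨hA, hB, ?_⟩
          intro u hu v hv
          simp only [List.getLast?_append, List.getLast?_singleton] at hu
          simp only [List.head?_cons, Option.mem_some_iff] at hv
          subst hv
          -- hu : u ∈ some x
          have hu' : x = u := by simpa using hu
          subst hu'
          intro ⟨h1, h2⟩
          exact hxy ⟨h1.symm, by simp [h2]⟩
        rw [red'_reduce_eq_self hred, List.take_of_length_le (by simp)]
        simp

lemma invRev_drop (A : List (β × Bool)) (m : ℕ) :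
    invRev (A.drop m) = (invRev A).take (A.length - m) := by
  simp [invRev, List.map_drop, List.reverse_drop]

/-- Key lemma: if `g` does not start with the first `l+1` letters of `s⁻¹`,
then `s * g` starts with the first `l+1` letters of `s`. -/
lemma prefix_mul (l : ℕ) (s g : FreeGroup β)
    (hs : s.toWord.length = 2 * l + 1)
    (hg : ¬ s⁻¹.toWord.take (l + 1) <+: g.toWord) :
    s.toWord.take (l + 1) <+: (s * g).toWord := by
  set A := s.toWord with hA
  set B := g.toWord with hB
  have hsg : (s * g).toWord = reduce (A ++ B) := by
    conv_lhs => rw [← FreeGroup.mk_toWord (x := s), ← FreeGroup.mk_toWord (x := g)]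
    rw [FreeGroup.mul_mk, FreeGroup.toWord_mk]
  obtain ⟨n, h1, h2, h3, h4⟩ := reduce_append A B (red'_toWord s) (red'_toWord g)
  have hinv : B.take n = (invRev A).take n := by
    rw [h4, invRev_drop]
    congr 1
    omega
  by_cases hn : n ≤ l
  · rw [hsg, h3]
    have hlen : l + 1 ≤ (A.take (A.length - n)).length := by
      rw [List.length_take]
      omega
    have : A.take (l + 1) = (A.take (A.length - n) ++ B.drop n).take (l + 1) := by
      rw [List.take_append_of_le_length hlen, List.take_take]
      congr 1
      omega
    rw [this]
    exact List.take_prefix _ _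
  · exfalso
    apply hg
    have : s⁻¹.toWord = invRev A := FreeGroup.toWord_inv s
    rw [this]
    have : (invRev A).take (l + 1) = B.take (l + 1) := by
      have h5 : (B.take n).take (l + 1) = B.take (l + 1) := by
        rw [List.take_take]
        congr 1
        omega
      rw [← h5, hinv, List.take_take]
      congr 1
      omega
    rw [this]
    exact List.take_prefix _ _

lemma NC_iff (a b : β × Bool) : NC a b ↔ b ≠ (a.1, !a.2) := by
  constructor
  · intro h hb
    exact h ⟨by rw [hb], by rw [hb]; simp⟩
  · rintro h ⟨h1, h2⟩
    exact h (Prod.ext h1.symm (by simp [h2]))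

/-! ### The encoding of reduced words -/

/-- An equivalence between letters and `Fin (2*r-1+1)`. -/
def letterEquiv (r : ℕ) (hr : 1 ≤ r) : (Fin r × Bool) ≃ Fin (2 * r - 1 + 1) :=
  ((Equiv.prodCongr (Equiv.refl (Fin r)) finTwoEquiv.symm).trans finProdFinEquiv).trans
    (finCongr (by omega))

/-- The `d`-th letter different from the formal inverse of `a`. -/
def next (r : ℕ) (hr : 1 ≤ r) (a : Fin r × Bool) (d : Fin (2 * r - 1)) : Fin r × Bool :=
  (letterEquiv r hr).symm ((letterEquiv r hr (a.1, !a.2)).succAbove d)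

lemma next_ne (r : ℕ) (hr : 1 ≤ r) (a : Fin r × Bool) (d : Fin (2 * r - 1)) :
    next r hr a d ≠ (a.1, !a.2) := by
  intro h
  have := congrArg (letterEquiv r hr) h
  simp only [next, Equiv.apply_symm_apply] at this
  exact Fin.succAbove_ne _ d this

lemma next_injective (r : ℕ) (hr : 1 ≤ r) (a : Fin r × Bool) :
    Function.Injective (next r hr a) := fun d d' h => by
  apply Fin.succAbove_right_injective (p := letterEquiv r hr (a.1, !a.2))
  have := congrArg (letterEquiv r hr) h
  simpa only [next, Equiv.apply_symm_apply] using this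

/-- Decoding a sequence of "offsets" into a reduced word with prescribed first letter. -/
def decode (r : ℕ) (hr : 1 ≤ r) (a : Fin r × Bool) :
    List (Fin (2 * r - 1)) → List (Fin r × Bool)
  | [] => [a]
  | d :: ds => a :: decode r hr (next r hr a d) ds

lemma decode_length (r : ℕ) (hr : 1 ≤ r) (a : Fin r × Bool)
    (ds : List (Fin (2 * r - 1))) : (decode r hr a ds).length = ds.length + 1 := by
  induction ds generalizing a with
  | nil => rfl
  | cons d ds ih => simp [decode, ih]

lemma decode_head (r : ℕ) (hr : 1 ≤ r) (a : Fin r × Bool)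
    (ds : List (Fin (2 * r - 1))) : (decode r hr a ds).head? = some a := by
  cases ds <;> rfl

lemma decode_red (r : ℕ) (hr : 1 ≤ r) (a : Fin r × Bool)
    (ds : List (Fin (2 * r - 1))) : Red' (decode r hr a ds) := by
  induction ds generalizing a with
  | nil => exact List.isChain_singleton a
  | cons d ds ih =>
    rw [decode]
    rcases hd : decode r hr (next r hr a d) ds with _ | ⟨b, t⟩
    · exact List.isChain_singleton a
    · refine List.isChain_cons_cons.mpr ⟨?_, hd ▸ ih (next r hr a d)⟩
      have hb : b = next r hr a d := by
        have := decode_head r hr (next r hr a d) ds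
        rw [hd] at this
        simpa using this
      rw [NC_iff, hb]
      exact next_ne r hr a d

lemma decode_injective (r : ℕ) (hr : 1 ≤ r) :
    ∀ (ds ds' : List (Fin (2 * r - 1))) (a a' : Fin r × Bool),
      decode r hr a ds = decode r hr a' ds' → a = a' ∧ ds = ds' := by
  intro ds
  induction ds with
  | nil =>
    intro ds' a a' h
    cases ds' with
    | nil => simpa [decode] using h
    | cons d' t' =>
      exfalso
      have := congrArg List.length h
      simp [decode, decode_length] at this
  | cons d t ih =>
    intro ds' a a' h
    cases ds' with
    | nil =>
      exfalso
      have := congrArg List.length h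
      simp [decode, decode_length] at this
    | cons d' t' =>
      rw [decode, decode] at h
      obtain ⟨ha, hrest⟩ := List.cons_eq_cons.mp h
      subst ha
      obtain ⟨hn, ht⟩ := ih t' (next r hr a d) (next r hr a d') hrest
      have hd : d = d' := next_injective r hr a hn
      exact ⟨rfl, by rw [hd, ht]⟩

/-! ### Palindromes -/

/-- The palindrome word built on `p`. -/
def pal (p : List (β × Bool)) : List (β × Bool) := p ++ p.dropLast.reverse

lemma pal_length {p : List (β × Bool)} (hp : p ≠ []) :
    (pal p).length = 2 * (p.length - 1) + 1 := by
  have : 1 ≤ p.length := List.length_pos_iff.mpr hp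
  simp only [pal, List.length_append, List.length_reverse, List.length_dropLast]
  omega

lemma pal_take (p : List (β × Bool)) : (pal p).take p.length = p :=
  List.take_left ..

lemma pal_reverse (p : List (β × Bool)) : (pal p).reverse = pal p := by
  induction p using List.reverseRecOn with
  | nil => rfl
  | append_singleton q x _ => simp [pal, List.reverse_append]

lemma pal_red {p : List (β × Bool)} (hp : p ≠ []) (h : Red' p) : Red' (pal p) := by
  rw [pal, Red', List.Chain', List.isChain_append]
  refine ⟨h, red'_reverse (h.prefix (List.dropLast_prefix p)), ?_⟩
  intro u hu v hv
  rw [List.head?_reverse] at hv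
  have hp2 : p.dropLast ++ [p.getLast hp] = p := List.dropLast_append_getLast hp
  have hu' : u = p.getLast hp := by
    rw [← hp2, List.getLast?_concat] at hu
    exact (by simpa using hu : p.getLast hp = u).symm
  have h2 : List.Chain' NC (p.dropLast ++ [p.getLast hp]) := by rw [hp2]; exact h
  have hnc : NC v u := by
    refine (List.isChain_append.mp h2).2.2 v hv u ?_
    simp [hu']
  exact hnc.symm'

/-- The letter-inverse map. -/
def finv (x : β × Bool) : β × Bool := (x.1, !x.2)

lemma invRev_eq_reverse_map (L : List (β × Bool)) :
    invRev L = (L.map finv).reverse := rfl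

lemma invRev_pal (p : List (β × Bool)) : invRev (pal p) = pal (p.map finv) := by
  rw [invRev_eq_reverse_map, ← List.map_reverse, pal_reverse]
  simp [pal, List.map_dropLast, List.map_reverse]

end PingPongAux

open PingPongAux in
/-- In `F_r` (`r ≥ 2`), for odd `k = 2l+1` there is a set `S₀` of `r(2r-1)^l` elements,
all of length `k`, freely generating a free subgroup of rank `r(2r-1)^l`. -/
theorem exists_free_subgroup_odd_length (r l : ℕ) (hr : 2 ≤ r) :
    ∃ S0 : Finset (FreeGroup (Fin r)),
      S0.card = r * (2 * r - 1) ^ l ∧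
      (∀ s ∈ S0, s.toWord.length = 2 * l + 1) ∧
      Function.Injective
        (FreeGroup.lift (fun x : {x // x ∈ S0} => (x : FreeGroup (Fin r)))) := by
  have hr1 : 1 ≤ r := by omega
  let P : Fin r × (Fin l → Fin (2 * r - 1)) → List (Fin r × Bool) :=
    fun z => decode r hr1 (z.1, true) (List.ofFn z.2)
  let W : Fin r × (Fin l → Fin (2 * r - 1)) → List (Fin r × Bool) := fun z => pal (P z)
  let F : Fin r × (Fin l → Fin (2 * r - 1)) → FreeGroup (Fin r) := fun z => FreeGroup.mk (W z)
  have hPlen : ∀ z, (P z).length = l + 1 := fun z => by simp [P, decode_length]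
  have hPne : ∀ z, P z ≠ [] := fun z => by
    intro h; have := hPlen z; rw [h] at this; simp at this
  have hPred : ∀ z, Red' (P z) := fun z => decode_red r hr1 _ _
  have hPhead : ∀ z, (P z).head? = some (z.1, true) := fun z => decode_head r hr1 _ _
  have hWred : ∀ z, Red' (W z) := fun z => pal_red (hPne z) (hPred z)
  have hWlen : ∀ z, (W z).length = 2 * l + 1 := fun z => by
    rw [pal_length (hPne z), hPlen]; simp
  have htoWord : ∀ z, (F z).toWord = W z := fun z => by
    rw [FreeGroup.toWord_mk, red'_reduce_eq_self (hWred z)]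
  have hprefix : ∀ z, (F z).toWord.take (l + 1) = P z := fun z => by
    rw [htoWord z, ← hPlen z]; exact pal_take _
  have hinvWord : ∀ z, ((F z)⁻¹).toWord = pal ((P z).map finv) := fun z => by
    rw [FreeGroup.toWord_inv, htoWord z]; exact invRev_pal _
  have hinvprefix : ∀ z, ((F z)⁻¹).toWord.take (l + 1) = (P z).map finv := fun z => by
    rw [hinvWord z]
    have : l + 1 = ((P z).map finv).length := by rw [List.length_map, hPlen]
    rw [this]; exact pal_take _
  have hPinj : Function.Injective P := by
    intro z z' h
    obtain ⟨ha, hds⟩ := decode_injective r hr1 _ _ _ _ h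
    have h1 : z.1 = z'.1 := by simpa using congrArg Prod.fst ha
    have h2 : z.2 = z'.2 := List.ofFn_inj.mp hds
    exact Prod.ext h1 h2
  have hFinj : Function.Injective F := by
    intro z z' h
    apply hPinj
    rw [← hprefix z, ← hprefix z', h]
  refine ⟨Finset.image F Finset.univ, ?_, ?_, ?_⟩
  · rw [Finset.card_image_of_injective _ hFinj, Finset.card_univ]
    simp [Fintype.card_fun]
  · intro s hs
    obtain ⟨z, _, rfl⟩ := Finset.mem_image.mp hs
    rw [htoWord z]; exact hWlen z
  · set S0 := Finset.image F Finset.univ with hS0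
    haveI : Nontrivial {x // x ∈ S0} := by
      have hcard : 1 < S0.card := by
        rw [hS0, Finset.card_image_of_injective _ hFinj, Finset.card_univ]
        have : 1 ≤ (2 * r - 1) ^ l := Nat.one_le_pow _ _ (by omega)
        simp only [Fintype.card_prod, Fintype.card_fun, Fintype.card_fin]
        nlinarith
      obtain ⟨a, ha, b, hb, hab⟩ := Finset.one_lt_card.mp hcard
      exact ⟨⟨⟨a, ha⟩, ⟨b, hb⟩, by simpa using hab⟩⟩
    have hmem : ∀ x : {x // x ∈ S0}, ∃ z, F z = x.val := fun x => by
      obtain ⟨z, _, hz⟩ := Finset.mem_image.mp x.2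
      exact ⟨z, hz⟩
    choose zof hzof using hmem
    have hlen : ∀ x : {x // x ∈ S0}, (x : FreeGroup (Fin r)).toWord.length = 2 * l + 1 :=
      fun x => by rw [← hzof x, htoWord]; exact hWlen _
    have hx1 : ∀ x : {x // x ∈ S0},
        (x : FreeGroup (Fin r)).toWord.take (l + 1) = P (zof x) := fun x => by
      rw [← hzof x]; exact hprefix _
    have hx2 : ∀ x : {x // x ∈ S0},
        ((x : FreeGroup (Fin r))⁻¹).toWord.take (l + 1) = (P (zof x)).map finv := fun x => by
      rw [← hzof x]; exact hinvprefix _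
    set X : {x // x ∈ S0} → Set (FreeGroup (Fin r)) :=
      fun x => {g | (x : FreeGroup (Fin r)).toWord.take (l + 1) <+: g.toWord} with hX
    set Y : {x // x ∈ S0} → Set (FreeGroup (Fin r)) :=
      fun x => {g | ((x : FreeGroup (Fin r))⁻¹).toWord.take (l + 1) <+: g.toWord} with hY
    -- a helper for disjointness from distinct equal-length prefixes
    have disj : ∀ (p₁ p₂ : List (Fin r × Bool)), p₁.length = p₂.length → p₁ ≠ p₂ →
        Disjoint {g : FreeGroup (Fin r) | p₁ <+: g.toWord} {g | p₂ <+: g.toWord} := by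
      intro p₁ p₂ hl hne
      rw [Set.disjoint_left]
      intro g hg1 hg2
      rcases List.prefix_or_prefix_of_prefix hg1 hg2 with h | h
      · exact hne (h.eq_of_length hl)
      · exact hne (h.eq_of_length hl.symm).symm
    have finv_inj : Function.Injective (finv (β := Fin r)) := by
      intro a b h
      obtain ⟨h1, h2⟩ := Prod.mk.injEq .. ▸ h
      exact Prod.ext h1 (by simpa using h2)
    apply FreeGroup.injective_lift_of_ping_pong _ X Y
    · -- nonempty
      intro x
      exact ⟨(x : FreeGroup (Fin r)), List.take_prefix _ _⟩
    · -- X pairwise disjoint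
      intro x y hxy
      simp only [Function.onFun, hX, hx1]
      apply disj _ _ (by rw [hPlen, hPlen])
      intro h
      exact hxy (Subtype.ext (by rw [← hzof x, ← hzof y, hPinj h]))
    · -- Y pairwise disjoint
      intro x y hxy
      simp only [Function.onFun, hY, hx2]
      apply disj _ _ (by simp [hPlen])
      intro h
      have := List.map_injective_iff.mpr finv_inj h
      exact hxy (Subtype.ext (by rw [← hzof x, ← hzof y, hPinj this]))
    · -- X i disjoint from Y j
      intro x y
      rw [hX, hY]
      simp only [hx1, hx2]
      apply disj _ _ (by simp [hPlen])
      intro h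
      have hh := congrArg List.head? h
      rw [hPhead, List.head?_map, hPhead] at hh
      simp [finv] at hh
    · -- ping
      rintro x _ ⟨g, hg, rfl⟩
      simp only [Set.mem_compl_iff, hY, Set.mem_setOf_eq] at hg
      have := prefix_mul l (x : FreeGroup (Fin r)) g (hlen x) hg
      simpa [hX, smul_eq_mul] using this
    · -- pong
      rintro x _ ⟨g, hg, rfl⟩
      simp only [Set.mem_compl_iff, hX, Set.mem_setOf_eq] at hg
      have hlen' : ((x : FreeGroup (Fin r))⁻¹).toWord.length = 2 * l + 1 := by
        rw [FreeGroup.toWord_inv, FreeGroup.invRev_length, hlen]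
      have hg' : ¬ (((x : FreeGroup (Fin r))⁻¹)⁻¹).toWord.take (l + 1) <+: g.toWord := by
        rw [inv_inv]; exact hg
      have := prefix_mul l ((x : FreeGroup (Fin r))⁻¹) g hlen' hg'
      simpa [hY, smul_eq_mul] using this
end

section
/- Let G = Z_2 * ⋯ * Z_2 (d ≥ 3 factors), and for j ∈ {1,…,d-1} let φ_j be the index shift a_i ↦ a_{i+j mod d}. Let S_0 be the set of words φ_j(b_l)⋯φ_j(b_1) b_1 b_2⋯b_l where b_1 = a_1, b_{i+1} ≠ b_i, and j ∈ {1,…,d-1}. If s_1,…,s_n ∈ S_0 ∪ S_0^{-1} with s_{i+1} ≠ s_i^{-1} for all i, then the reduced form of s_1⋯s_n ends with the last l letters of s_n if s_n ∈ S_0^{-1}, and with the last l+1 letters of s_n if s_n ∈ S_0; in particular s_1⋯s_n ≠ e for n ≥ 1. -/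
/-- Reduction of words over the alphabet `{a_1,…,a_d}` where each letter is an
involution: repeatedly cancel adjacent equal letters. The result is the reduced form. -/
def reduceZ {d : ℕ} : List (Fin d) → List (Fin d)
  | [] => []
  | a :: t =>
    match reduceZ t with
    | [] => [a]
    | b :: t' => if a = b then t' else a :: b :: t'

namespace NP

variable {d : ℕ}

def rstep (a : Fin d) : List (Fin d) → List (Fin d)
  | [] => [a]
  | b :: t => if a = b then t else a :: b :: t

lemma reduceZ_cons (a : Fin d) (t : List (Fin d)) :
    reduceZ (a :: t) = rstep a (reduceZ t) := by
  cases h : reduceZ t <;> simp [reduceZ, rstep, h]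

lemma chain'_rstep {a : Fin d} {z : List (Fin d)} (hz : z.Chain' (· ≠ ·)) :
    (rstep a z).Chain' (· ≠ ·) := by
  match z with
  | [] => simp [rstep, List.Chain']
  | b :: t =>
    by_cases h : a = b
    · simpa [rstep, h, List.Chain'] using hz.tail
    · have : rstep a (b :: t) = a :: b :: t := by simp [rstep, h]
      rw [this]; exact List.isChain_cons_cons.mpr ⟨h, hz⟩

lemma reduceZ_chain' (x : List (Fin d)) : (reduceZ x).Chain' (· ≠ ·) := by
  induction x with
  | nil => simp [reduceZ, List.Chain']
  | cons a t ih => rw [reduceZ_cons]; exact chain'_rstep ih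

lemma reduceZ_of_chain' {x : List (Fin d)} (hx : x.Chain' (· ≠ ·)) : reduceZ x = x := by
  induction x with
  | nil => rfl
  | cons a t ih =>
    rw [reduceZ_cons, ih hx.tail]
    match t, hx with
    | [], _ => rfl
    | b :: t', hx => simp [rstep, (List.isChain_cons_cons.mp hx).1]

lemma reduceZ_idem (x : List (Fin d)) : reduceZ (reduceZ x) = reduceZ x :=
  reduceZ_of_chain' (reduceZ_chain' x)

lemma rstep_rstep {a : Fin d} {z : List (Fin d)} (hz : z.Chain' (· ≠ ·)) :
    rstep a (rstep a z) = z := by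
  match z with
  | [] => simp [rstep]
  | b :: t =>
    by_cases h : a = b
    · subst h
      match t, hz with
      | [], _ => simp [rstep]
      | c :: t', hz => simp [rstep, (List.isChain_cons_cons.mp hz).1]
    · simp [rstep, h]

lemma reduceZ_append_right (x y : List (Fin d)) :
    reduceZ (x ++ y) = reduceZ (x ++ reduceZ y) := by
  induction x with
  | nil => simpa using (reduceZ_idem y).symm
  | cons a t ih => simp only [List.cons_append, reduceZ_cons, ih]

lemma reduceZ_append_left (x y : List (Fin d)) :
    reduceZ (x ++ y) = reduceZ (reduceZ x ++ y) := by
  induction x with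
  | nil => rfl
  | cons a t ih =>
    rw [List.cons_append, reduceZ_cons, ih, reduceZ_cons a t]
    cases h : reduceZ t with
    | nil =>
      simp only [rstep, List.nil_append, List.singleton_append, reduceZ_cons]
    | cons b t' =>
      by_cases hab : a = b
      · subst hab
        simp only [rstep, if_pos rfl]
        rw [List.cons_append, reduceZ_cons]
        exact rstep_rstep (reduceZ_chain' _)
      · simp only [rstep, if_neg hab]
        rw [List.cons_append, reduceZ_cons, List.cons_append, reduceZ_cons]
        rfl

end NP

namespace NP
variable {d : ℕ}

lemma reduceZ_cancel_one (u v' : List (Fin d)) (x : Fin d)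
    (hv : (x :: v').Chain' (· ≠ ·)) :
    reduceZ (u ++ [x] ++ (x :: v')) = reduceZ (u ++ v') := by
  rw [List.append_assoc, reduceZ_append_right u ([x] ++ x :: v')]
  have h1 : reduceZ ([x] ++ (x :: v')) = v' := by
    have hv' : reduceZ (x :: v') = x :: v' := reduceZ_of_chain' hv
    rw [List.singleton_append, reduceZ_cons, hv']
    simp [rstep]
  rw [h1, reduceZ_append_right u v']

lemma reduceZ_no_cancel {u v : List (Fin d)} (hu : u.Chain' (· ≠ ·)) (hv : v.Chain' (· ≠ ·))
    (h : ∀ x ∈ u.getLast?, ∀ y ∈ v.head?, x ≠ y) :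
    reduceZ (u ++ v) = u ++ v :=
  reduceZ_of_chain' (List.isChain_append.mpr ⟨hu, hv, h⟩)

lemma reduceZ_cancel (m : ℕ) : ∀ (P v : List (Fin d)), P.Chain' (· ≠ ·) → v.Chain' (· ≠ ·) →
    m < P.length → m < v.length →
    P.reverse.take m = v.take m → P.reverse[m]? ≠ v[m]? →
    reduceZ (P ++ v) = (P.reverse.drop m).reverse ++ v.drop m := by
  induction m with
  | zero =>
    intro P v hP hv hmP hmv _ hne
    simp only [List.drop_zero, List.reverse_reverse]
    refine reduceZ_no_cancel hP hv ?_
    intro x hx y hy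
    rw [Option.mem_def, List.getLast?_eq_head?_reverse, List.head?_eq_getElem?] at hx
    rw [Option.mem_def, List.head?_eq_getElem?] at hy
    rintro rfl
    rw [hx, hy] at hne; exact hne rfl
  | succ m ih =>
    intro P v hP hv hmP hmv htake hne
    have hPne : P ≠ [] := by intro h; subst h; simp at hmP
    obtain ⟨x, vt, rfl⟩ : ∃ x vt, v = x :: vt :=
      ⟨v.head (by intro h; subst h; simp at hmv), v.tail,
        (List.cons_head_tail _).symm⟩
    have h0 : P.reverse[0]? = some x := by
      have := congrArg (·[0]?) htake
      simpa [List.getElem?_take] using this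
    have hPrev : P.reverse = x :: P.dropLast.reverse := by
      rw [← List.tail_reverse]
      cases hc : P.reverse with
      | nil => rw [hc] at h0; simp at h0
      | cons c cs =>
        rw [hc] at h0
        simp only [List.getElem?_cons_zero, Option.some.injEq] at h0
        simp [h0]
    have hlast : P = P.dropLast ++ [x] := by
      have := congrArg List.reverse hPrev
      simpa using this
    have hchain : P.dropLast.Chain' (· ≠ ·) := hP.prefix (List.dropLast_prefix P)
    have h1 : P.dropLast.reverse.take m = vt.take m := by
      rw [hPrev] at htake
      simpa using htake
    have h2 : P.dropLast.reverse[m]? ≠ vt[m]? := by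
      rw [hPrev] at hne
      simpa using hne
    have h3 : m < P.dropLast.length := by
      rw [List.length_dropLast]; omega
    have h4 : m < vt.length := by simp at hmv; omega
    rw [hlast, reduceZ_cancel_one _ _ _ hv,
      ih P.dropLast vt hchain hv.tail h3 h4 h1 h2]
    simp [List.reverse_append]

lemma exists_first_mismatch {α : Type*} (k : ℕ) :
    ∀ (x y : List α), x.take k ≠ y.take k →
    ∃ m < k, x.take m = y.take m ∧ x[m]? ≠ y[m]? := by
  induction k with
  | zero => intro x y h; simp at h
  | succ k ih =>
    intro x y h
    by_cases hk : x.take k = y.take k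
    · refine ⟨k, Nat.lt_succ_self k, hk, ?_⟩
      intro hg
      apply h
      rw [List.take_succ, List.take_succ, hk, hg]
    · obtain ⟨m, hm, h1, h2⟩ := ih x y hk
      exact ⟨m, by omega, h1, h2⟩

lemma suffix_after_cancel {R v : List (Fin d)} {m K : ℕ}
    (h : reduceZ (R ++ v) = (R.reverse.drop m).reverse ++ v.drop m)
    (hK : K + m ≤ v.length) :
    (reduceZ (R ++ v)).reverse.take K = v.reverse.take K ∧ K ≤ (reduceZ (R ++ v)).length := by
  have hlen : K ≤ (v.drop m).length := by simp; omega
  constructor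
  · rw [h, List.reverse_append, List.reverse_reverse]
    rw [List.take_append_of_le_length (by simpa using hlen)]
    have hv : v.reverse = (v.drop m).reverse ++ (v.take m).reverse := by
      rw [← List.reverse_append, List.take_append_drop]
    rw [hv, List.take_append_of_le_length (by simpa using hlen)]
  · rw [h]; simp; omega


set_option linter.unusedSectionVars false

section W

variable {d n : ℕ}

lemma ofFn_chain' (b : Fin (n + 1) → Fin d)
    (hb : ∀ (i : ℕ) (h : i + 1 < n + 1), b ⟨i + 1, h⟩ ≠ b ⟨i, by omega⟩) :
    (List.ofFn b).Chain' (· ≠ ·) := by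
  rw [List.Chain', List.isChain_iff_getElem]
  intro i hi
  simp only [List.length_ofFn] at hi
  rw [List.getElem_ofFn, List.getElem_ofFn]
  intro h
  exact hb i (by omega) (by simpa using h.symm)

lemma chain'_rev {z : List (Fin d)} (h : z.Chain' (· ≠ ·)) : z.reverse.Chain' (· ≠ ·) :=
  List.isChain_reverse.mpr (h.imp fun _ _ hab => hab.symm)

variable [NeZero d]

lemma W_chain' (j : Fin d) (hj : j ≠ 0) (b : Fin (n + 1) → Fin d) (hb0 : b 0 = 0)
    (hb : ∀ (i : ℕ) (h : i + 1 < n + 1), b ⟨i + 1, h⟩ ≠ b ⟨i, by omega⟩) :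
    (((List.ofFn b).map (· + j)).reverse ++ List.ofFn b).Chain' (· ≠ ·) := by
  have hB : (List.ofFn b).Chain' (· ≠ ·) := ofFn_chain' b hb
  have hM : ((List.ofFn b).map (· + j)).Chain' (· ≠ ·) := by
    rw [List.Chain', List.isChain_map]
    exact hB.imp fun a c hac h => hac (add_left_injective j h)
  refine List.isChain_append.mpr ⟨chain'_rev hM, hB, ?_⟩
  intro x hx y hy
  rw [Option.mem_def, List.getLast?_reverse, List.ofFn_succ, List.map_cons,
    List.head?_cons, Option.some.injEq] at hx
  rw [Option.mem_def, List.ofFn_succ, List.head?_cons, Option.some.injEq] at hy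
  subst hx hy
  rw [hb0, zero_add]
  exact hj
  
end W


section Main

variable {d n : ℕ} [NeZero d]

lemma take_len_succ_append (A : List (Fin d)) (x : Fin d) (C : List (Fin d)) {k : ℕ}
    (h : A.length = k) : (A ++ x :: C).take (k + 1) = A ++ [x] := by
  subst h
  have := List.take_append (l₁ := A) (l₂ := x :: C) (i := A.length + 1)
  simpa [List.take_of_length_le (Nat.le_succ A.length)] using this

variable (S0 : Set (List (Fin d)))
variable (hS0 : ∀ w, w ∈ S0 ↔ ∃ j : Fin d, j ≠ 0 ∧ ∃ b : Fin (n + 1) → Fin d,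
      b 0 = 0 ∧ (∀ (i : ℕ) (h : i + 1 < n + 1), b ⟨i + 1, h⟩ ≠ b ⟨i, by omega⟩) ∧
      w = ((List.ofFn b).map (· + j)).reverse ++ List.ofFn b)

include hS0

lemma not_both {w : List (Fin d)} (h1 : w ∈ S0) (h2 : w.reverse ∈ S0) : False := by
  rw [hS0] at h1 h2
  obtain ⟨j, hj, b, hb0, -, rfl⟩ := h1
  obtain ⟨j2, hj2, c, hc0, -, hrev⟩ := h2
  rw [List.reverse_append, List.reverse_reverse] at hrev
  have hlen : (List.ofFn b).reverse.length = ((List.ofFn c).map (· + j2)).reverse.length := by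
    simp
  obtain ⟨-, h2'⟩ := List.append_inj hrev hlen
  rw [List.ofFn_succ (f := b), List.ofFn_succ (f := c), List.map_cons] at h2'
  obtain ⟨h0, -⟩ := List.cons_eq_cons.mp h2'
  rw [hb0, hc0, zero_add] at h0
  exact hj h0

lemma chain'_of_mem {w : List (Fin d)} (h : w ∈ S0 ∨ w.reverse ∈ S0) :
    w.Chain' (· ≠ ·) := by
  rcases h with h | h <;> rw [hS0] at h <;> obtain ⟨j, hj, b, hb0, hb, he⟩ := h
  · rw [he]; exact W_chain' j hj b hb0 hb
  · rw [← List.reverse_reverse w, he]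
    exact chain'_rev (W_chain' j hj b hb0 hb)

lemma length_of_mem {w : List (Fin d)} (h : w ∈ S0 ∨ w.reverse ∈ S0) :
    w.length = 2 * n + 2 := by
  rcases h with h | h <;> rw [hS0] at h <;> obtain ⟨j, hj, b, hb0, hb, he⟩ := h
  · rw [he]; simp; ring
  · rw [← List.length_reverse, he]; simp; ring

lemma step (R t u : List (Fin d)) (hR : R.Chain' (· ≠ ·))
    (ht : t ∈ S0 ∨ t.reverse ∈ S0)
    (hut : t ≠ u.reverse)
    (hinv1 : u.reverse ∈ S0 →
      R.reverse.take (n + 1) = u.reverse.take (n + 1) ∧ n + 1 ≤ R.length)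
    (hinv2 : u ∈ S0 →
      R.reverse.take (n + 2) = u.reverse.take (n + 2) ∧ n + 2 ≤ R.length)
    (hu : u ∈ S0 ∨ u.reverse ∈ S0) :
    ((t.reverse ∈ S0 → (reduceZ (R ++ t)).reverse.take (n + 1) = t.reverse.take (n + 1) ∧
        n + 1 ≤ (reduceZ (R ++ t)).length) ∧
     (t ∈ S0 → (reduceZ (R ++ t)).reverse.take (n + 2) = t.reverse.take (n + 2) ∧
        n + 2 ≤ (reduceZ (R ++ t)).length)) := by
  have htlen : t.length = 2 * n + 2 := length_of_mem S0 hS0 ht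
  have htc : t.Chain' (· ≠ ·) := chain'_of_mem S0 hS0 ht
  -- find a mismatch index m with a suitable bound
  suffices hm : ∃ m, (m < n + 2) ∧ ((t ∈ S0 ∨ u.reverse ∈ S0) → m < n + 1) ∧ m < R.length ∧
      R.reverse.take m = t.take m ∧ R.reverse[m]? ≠ t[m]? by
    obtain ⟨m, hm2, hm1, hmR, htk, hgne⟩ := hm
    have happ := reduceZ_cancel m R t hR htc hmR (by omega) htk hgne
    constructor
    · intro htr
      rcases ht with ht' | ht'
      · exact absurd (not_both S0 hS0 ht' htr) id
      · exact suffix_after_cancel happ (by omega)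
    · intro ht'
      have : m < n + 1 := hm1 (Or.inl ht')
      exact suffix_after_cancel happ (by omega)
  -- now produce the mismatch
  rcases hu with hu' | hu'
  · -- u ∈ S0
    obtain ⟨hsuf, hlenR⟩ := hinv2 hu'
    rw [hS0] at hu'
    obtain ⟨j, hj, b, hb0, hb, hueq⟩ := hu'
    have hurev : u.reverse = (List.ofFn b).reverse ++ (List.ofFn b).map (· + j) := by
      rw [hueq]; simp
    have hu2 : u.reverse.take (n + 2) =
        (List.ofFn b).reverse ++ [b 0 + j] := by
      rw [hurev, List.ofFn_succ (f := b), List.map_cons]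
      exact take_len_succ_append _ _ _ (by simp)
    have hu1 : R.reverse.take (n + 1) = (List.ofFn b).reverse := by
      have h' := congrArg (List.take (n + 1)) (hsuf.trans hu2)
      rw [List.take_take] at h'
      rw [show min (n+1) (n+2) = n + 1 by omega] at h'
      rw [h', List.take_left' (by simp)]
    rcases ht with ht' | ht'
    · -- t ∈ S0 : mismatch within n+1
      have ht'' := ht'
      rw [hS0] at ht''
      obtain ⟨j2, hj2, c, hc0, hc, hteq⟩ := ht''
      have hKne : R.reverse.take (n + 1) ≠ t.take (n + 1) := by
        rw [hu1, hteq, List.take_left' (by simp)]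
        intro heq
        have heq' := List.reverse_injective heq
        rw [List.ofFn_succ (f := b), List.ofFn_succ (f := c), List.map_cons] at heq'
        obtain ⟨h0, -⟩ := List.cons_eq_cons.mp heq'
        rw [hb0, hc0, zero_add] at h0
        exact hj2 h0.symm
      obtain ⟨m, hmlt, htk, hgne⟩ := exists_first_mismatch (n + 1) R.reverse t hKne
      exact ⟨m, by omega, fun _ => hmlt, by omega, htk, hgne⟩
    · -- t⁻¹ ∈ S0 : mismatch within n+2
      have ht'' := ht'
      rw [hS0] at ht''
      obtain ⟨j2, hj2, c, hc0, hc, hteq⟩ := ht''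
      have hteq' : t = (List.ofFn c).reverse ++ (List.ofFn c).map (· + j2) := by
        have := congrArg List.reverse hteq
        simpa using this
      have ht2 : t.take (n + 2) = (List.ofFn c).reverse ++ [c 0 + j2] := by
        rw [hteq', List.ofFn_succ (f := c), List.map_cons]
        exact take_len_succ_append _ _ _ (by simp)
      have hKne : R.reverse.take (n + 2) ≠ t.take (n + 2) := by
        rw [hsuf, hu2, ht2]
        intro heq
        obtain ⟨hBC, hone⟩ := List.append_inj heq (by simp)
        have hBC' := List.reverse_injective hBC
        rw [List.ofFn_inj] at hBC'
        obtain ⟨h0⟩ := List.cons_eq_cons.mp hone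
        rw [hb0, hc0, zero_add, zero_add] at h0
        apply hut
        rw [hteq', hurev, hBC', h0]
      obtain ⟨m, hmlt, htk, hgne⟩ := exists_first_mismatch (n + 2) R.reverse t hKne
      refine ⟨m, by omega, ?_, by omega, htk, hgne⟩
      rintro (h' | h')
      · exact absurd (not_both S0 hS0 h' ht') id
      · -- u.reverse ∈ S0 and u ∈ S0 : impossible
        exact absurd (not_both S0 hS0 (by rw [hS0]; exact ⟨j, hj, b, hb0, hb, hueq⟩) h') id
  · -- u⁻¹ ∈ S0
    obtain ⟨hsuf, hlenR⟩ := hinv1 hu'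
    rw [hS0] at hu'
    obtain ⟨j, hj, b, hb0, hb, hueq⟩ := hu'
    have hu1 : R.reverse.take (n + 1) = ((List.ofFn b).map (· + j)).reverse := by
      rw [hsuf, hueq, List.take_left' (by simp)]
    rcases ht with ht' | ht'
    · -- t ∈ S0
      have ht'' := ht'
      rw [hS0] at ht''
      obtain ⟨j2, hj2, c, hc0, hc, hteq⟩ := ht''
      have hKne : R.reverse.take (n + 1) ≠ t.take (n + 1) := by
        rw [hu1, hteq, List.take_left' (by simp)]
        intro heq
        have heq' := List.reverse_injective heq
        have h0 : b 0 + j = c 0 + j2 := by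
          have := congrArg List.head? heq'
          rw [List.ofFn_succ (f := b), List.ofFn_succ (f := c), List.map_cons,
            List.map_cons, List.head?_cons, List.head?_cons] at this
          exact Option.some.inj this
        rw [hb0, hc0, zero_add, zero_add] at h0
        subst h0
        have hBC := List.map_injective_iff.mpr (add_left_injective j) heq'
        rw [List.ofFn_inj] at hBC
        apply hut
        rw [hBC] at hueq
        rw [hteq]
        exact hueq.symm
      obtain ⟨m, hmlt, htk, hgne⟩ := exists_first_mismatch (n + 1) R.reverse t hKne
      exact ⟨m, by omega, fun _ => hmlt, by omega, htk, hgne⟩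
    · -- t⁻¹ ∈ S0
      have ht'' := ht'
      rw [hS0] at ht''
      obtain ⟨j2, hj2, c, hc0, hc, hteq⟩ := ht''
      have hteq' : t = (List.ofFn c).reverse ++ (List.ofFn c).map (· + j2) := by
        have := congrArg List.reverse hteq
        simpa using this
      have hKne : R.reverse.take (n + 1) ≠ t.take (n + 1) := by
        rw [hu1, hteq', List.take_left' (by simp)]
        intro heq
        have heq' := List.reverse_injective heq
        have h0 : b 0 + j = c 0 := by
          have := congrArg List.head? heq'
          rw [List.ofFn_succ (f := b), List.ofFn_succ (f := c), List.map_cons,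
            List.head?_cons, List.head?_cons] at this
          exact Option.some.inj this
        rw [hb0, hc0, zero_add] at h0
        exact hj h0
      obtain ⟨m, hmlt, htk, hgne⟩ := exists_first_mismatch (n + 1) R.reverse t hKne
      exact ⟨m, by omega, fun _ => hmlt, by omega, htk, hgne⟩

end Main

section Main2
variable {d n : ℕ} [NeZero d]
variable (S0 : Set (List (Fin d)))
variable (hS0 : ∀ w, w ∈ S0 ↔ ∃ j : Fin d, j ≠ 0 ∧ ∃ b : Fin (n + 1) → Fin d,
      b 0 = 0 ∧ (∀ (i : ℕ) (h : i + 1 < n + 1), b ⟨i + 1, h⟩ ≠ b ⟨i, by omega⟩) ∧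
      w = ((List.ofFn b).map (· + j)).reverse ++ List.ofFn b)
include hS0

lemma main (L : List (List (Fin d))) : ∀ (hL : L ≠ []),
    (∀ w ∈ L, w ∈ S0 ∨ w.reverse ∈ S0) →
    L.Chain' (fun x y => y ≠ x.reverse) →
    ((L.getLast hL).reverse ∈ S0 →
      (reduceZ L.flatten).reverse.take (n + 1) = (L.getLast hL).reverse.take (n + 1) ∧
        n + 1 ≤ (reduceZ L.flatten).length) ∧
    ((L.getLast hL) ∈ S0 →
      (reduceZ L.flatten).reverse.take (n + 2) = (L.getLast hL).reverse.take (n + 2) ∧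
        n + 2 ≤ (reduceZ L.flatten).length) := by
  induction L using List.reverseRecOn with
  | nil => intro hL; exact absurd rfl hL
  | append_singleton L' t ih =>
    intro hL hmem hchain
    have hgl : (L' ++ [t]).getLast hL = t := List.getLast_concat
    have hfl : (L' ++ [t]).flatten = L'.flatten ++ t := by simp
    have htmem : t ∈ S0 ∨ t.reverse ∈ S0 := hmem t (by simp)
    rcases eq_or_ne L' [] with rfl | hL'
    · have htc := chain'_of_mem S0 hS0 htmem
      have htlen := length_of_mem S0 hS0 htmem
      rw [hgl]
      have : ([] ++ [t] : List (List (Fin d))).flatten = t := by simp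
      rw [this, reduceZ_of_chain' htc]
      exact ⟨fun _ => ⟨rfl, by omega⟩, fun _ => ⟨rfl, by omega⟩⟩
    · have hu := ih hL' (fun w hw => hmem w (by simp [hw]))
        (hchain.prefix ⟨[t], rfl⟩)
      have humem : (L'.getLast hL') ∈ S0 ∨ (L'.getLast hL').reverse ∈ S0 :=
        hmem _ (by exact List.mem_append_left _ (List.getLast_mem hL'))
      have hut : t ≠ (L'.getLast hL').reverse := by
        have h3 := (List.isChain_append.mp hchain).2.2
        exact h3 _ (by rw [List.getLast?_eq_getLast_of_ne_nil hL']; rfl) t rfl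
      have hstep := step S0 hS0 (reduceZ L'.flatten) t (L'.getLast hL')
        (reduceZ_chain' _) htmem hut (fun h => hu.1 h) (fun h => hu.2 h) humem
      rw [hgl, hfl, reduceZ_append_left]
      exact hstep

end Main2

end NP

/-- In `ℤ/2 * ⋯ * ℤ/2` (`d` factors): with `φ_j` the index shift by `j` and `S₀` the set
of nested words `φ_j(b_l)⋯φ_j(b_1) b_1⋯b_l` (with `b_1 = a_1`, `b_{i+1} ≠ b_i`,
`j ≠ 0`), any product `s₁⋯sₙ` of elements of `S₀ ∪ S₀⁻¹` with `s_{i+1} ≠ s_i⁻¹` has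
reduced form ending with the last `l` (resp. `l+1`) letters of `sₙ` when
`sₙ ∈ S₀⁻¹` (resp. `sₙ ∈ S₀`); in particular `s₁⋯sₙ ≠ e` for `n ≥ 1`. -/
theorem nested_palindrome_products (d l n : ℕ) (hd : 3 ≤ d) (hl : 1 ≤ l) (hn : 1 ≤ n)
    (S0 : Set (List (Fin d)))
    (hS0 : S0 = {w | ∃ j : Fin d, j ≠ ⟨0, by omega⟩ ∧ ∃ b : Fin l → Fin d,
      b ⟨0, by omega⟩ = ⟨0, by omega⟩ ∧
      (∀ (i : ℕ) (h : i + 1 < l), b ⟨i + 1, h⟩ ≠ b ⟨i, by omega⟩) ∧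
      w = ((List.ofFn b).map (· + j)).reverse ++ List.ofFn b})
    (s : Fin n → List (Fin d))
    (hs : ∀ i, s i ∈ S0 ∪ {w | w.reverse ∈ S0})
    (hne : ∀ (i : ℕ) (h : i + 1 < n), s ⟨i + 1, h⟩ ≠ (s ⟨i, by omega⟩).reverse) :
    (((s ⟨n - 1, by omega⟩).reverse ∈ S0 →
        (reduceZ ((List.ofFn s).flatten)).reverse.take l
          = (s ⟨n - 1, by omega⟩).reverse.take l)) ∧
    ((s ⟨n - 1, by omega⟩ ∈ S0 →
        (reduceZ ((List.ofFn s).flatten)).reverse.take (l + 1)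
          = (s ⟨n - 1, by omega⟩).reverse.take (l + 1))) ∧
    reduceZ ((List.ofFn s).flatten) ≠ [] := by
  haveI : NeZero d := ⟨by omega⟩
  obtain ⟨l0, rfl⟩ : ∃ l0, l = l0 + 1 := ⟨l - 1, by omega⟩
  have hz : (⟨0, by omega⟩ : Fin d) = 0 := Fin.ext (by simp)
  have hzl : (⟨0, by omega⟩ : Fin (l0 + 1)) = 0 := Fin.ext (by simp)
  have hS0' : ∀ w, w ∈ S0 ↔ ∃ j : Fin d, j ≠ 0 ∧ ∃ b : Fin (l0 + 1) → Fin d,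
      b 0 = 0 ∧ (∀ (i : ℕ) (h : i + 1 < l0 + 1), b ⟨i + 1, h⟩ ≠ b ⟨i, by omega⟩) ∧
      w = ((List.ofFn b).map (· + j)).reverse ++ List.ofFn b := by
    intro w
    rw [hS0]
    simp only [Set.mem_setOf_eq]
    constructor
    · rintro ⟨j, hj, b, hb0, hb, rfl⟩
      exact ⟨j, by rw [← hz]; exact hj, b, by rw [← hzl, ← hz]; exact hb0, hb, rfl⟩
    · rintro ⟨j, hj, b, hb0, hb, rfl⟩
      exact ⟨j, by rw [hz]; exact hj, b, by rw [hzl, hz]; exact hb0, hb, rfl⟩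
  have hLne : List.ofFn s ≠ [] := by
    intro h
    have := congrArg List.length h
    simp at this
    omega
  have hmem : ∀ w ∈ List.ofFn s, w ∈ S0 ∨ w.reverse ∈ S0 := by
    intro w hw
    rw [List.mem_ofFn] at hw
    obtain ⟨i, rfl⟩ := hw
    exact hs i
  have hchain : (List.ofFn s).Chain' (fun x y => y ≠ x.reverse) := by
    rw [List.Chain', List.isChain_iff_getElem]
    intro i hi
    simp only [List.length_ofFn] at hi
    rw [List.getElem_ofFn, List.getElem_ofFn]
    have := hne i (by omega)
    simpa using this
  have hgl : (List.ofFn s).getLast hLne = s ⟨n - 1, by omega⟩ := by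
    rw [List.getLast_eq_getElem, List.getElem_ofFn]
    congr 1
    ext
    simp
  have hmain := NP.main S0 hS0' (List.ofFn s) hLne hmem hchain
  rw [hgl] at hmain
  refine ⟨fun h => (hmain.1 h).1, fun h => (hmain.2 h).1, ?_⟩
  intro hnil
  rcases hs ⟨n - 1, by omega⟩ with h | h
  · have := (hmain.2 h).2
    rw [hnil] at this
    simp at this
  · have := (hmain.1 h).2
    rw [hnil] at this
    simp at this
end

section
/- Let H be a subgroup of a countable group G, and equip [0,1]^H and [0,1]^G with the product of Lebesgue measures. Then there exists a measure-preserving H-equivariant measurable map [0,1]^H → [0,1]^G, where H acts on each space by (h·f)(x) = f(h^{-1}x). -/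
open MeasureTheory Set Function Filter
open scoped ENNReal Topology NNReal

noncomputable section
namespace UPP

def lam : Measure ℝ := volume.restrict (Set.Icc 0 1)

lemma lam_eq_ico : lam = volume.restrict (Set.Ico 0 1) :=
  (Measure.restrict_congr_set Ico_ae_eq_Icc).symm

instance : IsProbabilityMeasure lam :=
  ⟨by simp [lam, Real.volume_Icc]⟩

/-- the k-th binary digit of x -/
def dig (k : ℕ) (x : ℝ) : ℕ := ⌊x * 2 ^ (k + 1)⌋₊ % 2

lemma dig_le_one (k : ℕ) (x : ℝ) : dig k x ≤ 1 := Nat.lt_succ_iff.mp (Nat.mod_lt _ two_pos)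

lemma measurable_dig (k : ℕ) : Measurable fun x => dig k x := by
  apply measurable_of_countable (fun n : ℕ => n % 2) |>.comp
  exact Nat.measurable_floor.comp (measurable_id.mul_const _)

/-- sum of binary digits b j / 2^(j+1) over j < m -/
def val (m : ℕ) (b : ℕ → ℕ) : ℝ := ∑ j ∈ Finset.range m, (b j : ℝ) / 2 ^ (j + 1)

lemma summable_digs (b : ℕ → ℕ) (hb : ∀ j, b j ≤ 1) :
    Summable (fun j => (b j : ℝ) / 2 ^ (j + 1)) := by
  have h : Summable (fun j : ℕ => ((1:ℝ) / 2) ^ (j + 1)) :=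
    summable_geometric_two.comp_injective (add_left_injective 1)
  refine Summable.of_nonneg_of_le (fun j => by positivity) (fun j => ?_) h
  rw [div_pow, one_pow]
  gcongr
  exact_mod_cast hb j

lemma tail_geom (m : ℕ) : ∑' j : ℕ, ((1:ℝ) / 2) ^ (j + (m + 1)) = ((2:ℝ) ^ m)⁻¹ := by
  have : ∀ j : ℕ, ((1:ℝ) / 2) ^ (j + (m + 1)) = ((1:ℝ)/2) ^ (m+1) * ((1:ℝ)/2) ^ j := fun j => by
    rw [pow_add, mul_comm]
  rw [tsum_congr this, tsum_mul_left, tsum_geometric_two]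
  rw [div_pow, one_pow, pow_succ]
  field_simp

lemma val_le_tsum (m : ℕ) (b : ℕ → ℕ) (hb : ∀ j, b j ≤ 1) :
    val m b ≤ ∑' j, (b j : ℝ) / 2 ^ (j + 1) :=
  Summable.sum_le_tsum _ (fun j _ => by positivity) (summable_digs b hb)

lemma tsum_le_val (m : ℕ) (b : ℕ → ℕ) (hb : ∀ j, b j ≤ 1) :
    ∑' j, (b j : ℝ) / 2 ^ (j + 1) ≤ val m b + ((2:ℝ) ^ m)⁻¹ := by
  rw [← Summable.sum_add_tsum_nat_add m (summable_digs b hb)]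
  unfold val
  gcongr
  rw [← tail_geom m]
  refine Summable.tsum_le_tsum (fun j => ?_) ((summable_digs b hb).comp_injective (add_left_injective m)) 
    (summable_geometric_two.comp_injective (add_left_injective (m+1)))
  rw [div_pow, one_pow]
  have h : j + (m + 1) = j + m + 1 := by omega
  rw [h]
  gcongr
  exact_mod_cast hb _

lemma val_succ_bound (m : ℕ) (b : ℕ → ℕ) (hb : ∀ j, b j ≤ 1) :
    val (m + 1) b + ((2:ℝ) ^ (m+1))⁻¹ ≤ val m b + ((2:ℝ) ^ m)⁻¹ := by
  unfold val
  rw [Finset.sum_range_succ, add_assoc]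
  refine add_le_add_right ?_ _
  have h1 : ((b m : ℝ)) ≤ 1 := by exact_mod_cast hb m
  have hp : (0:ℝ) < 2 ^ m := by positivity
  rw [pow_succ, ← one_div, ← one_div, ← add_div,
    div_le_div_iff₀ (by positivity) (by positivity)]
  nlinarith

def Ecomp (x : ℝ) : ℝ := ∑' j, (dig (2*j) x : ℝ) / 2 ^ (j + 1)
def Ocomp (x : ℝ) : ℝ := ∑' j, (dig (2*j+1) x : ℝ) / 2 ^ (j + 1)

lemma measurable_tsum_digs (c : ℕ → ℕ) :
    Measurable fun x => ∑' j, (dig (c j) x : ℝ) / 2 ^ (j + 1) := by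
  apply measurable_of_tendsto_metrizable
    (f := fun m x => ∑ j ∈ Finset.range m, (dig (c j) x : ℝ) / 2 ^ (j + 1))
  · intro m
    exact Finset.measurable_sum _ fun j _ =>
      ((measurable_from_top (f := fun n : ℕ => (n:ℝ))).comp (measurable_dig (c j))).div_const _
  · rw [tendsto_pi_nhds]
    intro x
    exact (summable_digs _ (fun j => dig_le_one _ _)).hasSum.tendsto_sum_nat

lemma measurable_Ecomp : Measurable Ecomp := measurable_tsum_digs _
lemma measurable_Ocomp : Measurable Ocomp := measurable_tsum_digs _

/-! ### bit extraction and interleaving on ℕ -/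

def uext (m N : ℕ) : ℕ := ∑ i ∈ Finset.range m, (N / 2^(2*i+1) % 2) * 2^i
def vext (m N : ℕ) : ℕ := ∑ i ∈ Finset.range m, (N / 2^(2*i) % 2) * 2^i
def itl (m u v : ℕ) : ℕ :=
  ∑ i ∈ Finset.range m, ((u / 2^i % 2) * 2^(2*i+1) + (v / 2^i % 2) * 2^(2*i))

lemma uext_succ (m N : ℕ) : uext (m+1) N = N / 2 % 2 + 2 * uext m (N / 4) := by
  unfold uext
  rw [Finset.sum_range_succ', Finset.mul_sum, add_comm]
  congr 1
  · simp
  · apply Finset.sum_congr rfl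
    intro i _
    have h1 : N / 2 ^ (2*(i+1)+1) = (N / 4) / 2 ^ (2*i+1) := by
      rw [Nat.div_div_eq_div_mul]
      congr 1
      ring
    rw [h1]
    ring

lemma vext_succ (m N : ℕ) : vext (m+1) N = N % 2 + 2 * vext m (N / 4) := by
  unfold vext
  rw [Finset.sum_range_succ', Finset.mul_sum, add_comm]
  congr 1
  · simp [Nat.div_one]
  · apply Finset.sum_congr rfl
    intro i _
    have h1 : N / 2 ^ (2*(i+1)) = (N / 4) / 2 ^ (2*i) := by
      rw [Nat.div_div_eq_div_mul]
      congr 1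
      ring
    rw [h1]
    ring

lemma itl_succ (m u v : ℕ) : itl (m+1) u v = v % 2 + 2 * (u % 2) + 4 * itl m (u/2) (v/2) := by
  unfold itl
  rw [Finset.sum_range_succ', Finset.mul_sum, add_comm]
  congr 1
  · simp [Nat.div_one]
    ring
  · apply Finset.sum_congr rfl
    intro i _
    have h1 : u / 2 ^ (i+1) = (u / 2) / 2 ^ i := by
      rw [Nat.div_div_eq_div_mul]; congr 1; ring
    have h2 : v / 2 ^ (i+1) = (v / 2) / 2 ^ i := by
      rw [Nat.div_div_eq_div_mul]; congr 1; ring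
    rw [h1, h2]
    ring

lemma uext_lt (m N : ℕ) : uext m N < 2 ^ m := by
  induction m generalizing N with
  | zero => simp [uext]
  | succ m ih =>
    have h1 := ih (N / 4)
    have h2 : N / 2 % 2 < 2 := Nat.mod_lt _ two_pos
    rw [uext_succ, pow_succ]
    omega

lemma vext_lt (m N : ℕ) : vext m N < 2 ^ m := by
  induction m generalizing N with
  | zero => simp [vext]
  | succ m ih =>
    have h1 := ih (N / 4)
    have h2 : N % 2 < 2 := Nat.mod_lt _ two_pos
    rw [vext_succ, pow_succ]
    omega

lemma itl_lt (m u v : ℕ) : itl m u v < 4 ^ m := by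
  induction m generalizing u v with
  | zero => simp [itl]
  | succ m ih =>
    have h1 := ih (u/2) (v/2)
    have h2 : u % 2 < 2 := Nat.mod_lt _ two_pos
    have h3 : v % 2 < 2 := Nat.mod_lt _ two_pos
    rw [itl_succ, pow_succ]
    omega

lemma uext_itl (m u v : ℕ) (hu : u < 2 ^ m) : uext m (itl m u v) = u := by
  induction m generalizing u v with
  | zero => simp [uext]; omega
  | succ m ih =>
    have h2 : u % 2 < 2 := Nat.mod_lt _ two_pos
    have h3 : v % 2 < 2 := Nat.mod_lt _ two_pos
    have hW := itl_lt m (u/2) (v/2)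
    rw [itl_succ, uext_succ]
    have e1 : (v % 2 + 2 * (u % 2) + 4 * itl m (u/2) (v/2)) / 2 % 2 = u % 2 := by omega
    have e2 : (v % 2 + 2 * (u % 2) + 4 * itl m (u/2) (v/2)) / 4 = itl m (u/2) (v/2) := by omega
    have hu2 : u / 2 < 2 ^ m := by rw [pow_succ] at hu; omega
    rw [e1, e2, ih (u/2) (v/2) hu2]
    omega

lemma vext_itl (m u v : ℕ) (hv : v < 2 ^ m) : vext m (itl m u v) = v := by
  induction m generalizing u v with
  | zero => simp [vext]; omega
  | succ m ih =>
    have h2 : u % 2 < 2 := Nat.mod_lt _ two_pos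
    have h3 : v % 2 < 2 := Nat.mod_lt _ two_pos
    have hW := itl_lt m (u/2) (v/2)
    rw [itl_succ, vext_succ]
    have e1 : (v % 2 + 2 * (u % 2) + 4 * itl m (u/2) (v/2)) % 2 = v % 2 := by omega
    have e2 : (v % 2 + 2 * (u % 2) + 4 * itl m (u/2) (v/2)) / 4 = itl m (u/2) (v/2) := by omega
    have hv2 : v / 2 < 2 ^ m := by rw [pow_succ] at hv; omega
    rw [e1, e2, ih (u/2) (v/2) hv2]
    omega

lemma itl_ext (m N : ℕ) (hN : N < 4 ^ m) : itl m (uext m N) (vext m N) = N := by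
  induction m generalizing N with
  | zero => simp [itl]; omega
  | succ m ih =>
    have h4 : (4:ℕ) ^ (m+1) = 4 * 4 ^ m := by rw [pow_succ]; ring
    have hN4 : N / 4 < 4 ^ m := by omega
    have hu := uext_lt m (N/4)
    have hv := vext_lt m (N/4)
    rw [uext_succ, vext_succ, itl_succ]
    have e1 : (N % 2 + 2 * vext m (N/4)) % 2 = N % 2 := by omega
    have e2 : (N % 2 + 2 * vext m (N/4)) / 2 = vext m (N/4) := by omega
    have e3 : (N / 2 % 2 + 2 * uext m (N/4)) % 2 = N / 2 % 2 := by omega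
    have e4 : (N / 2 % 2 + 2 * uext m (N/4)) / 2 = uext m (N/4) := by omega
    rw [e1, e2, e3, e4, ih _ hN4]
    omega

/-! ### digits and dyadic intervals -/

lemma dig_eq (M k : ℕ) (hk : k < M) (x : ℝ) :
    dig k x = ⌊x * 2^M⌋₊ / 2^(M-k-1) % 2 := by
  unfold dig
  congr 1
  have h2 : (2:ℝ)^(k+1) = 2^M / 2^(M-k-1) := by
    rw [eq_div_iff (by positivity), ← pow_add]
    congr 1
    omega
  have h3 : (2:ℝ)^(M-k-1) = ((2^(M-k-1) : ℕ) : ℝ) := by push_cast; ring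
  rw [h2, h3, ← mul_div_assoc, Nat.floor_div_natCast]

lemma four_pow (m : ℕ) : (4:ℝ)^m = 2^(2*m) := by
  rw [show (4:ℝ) = 2^2 by norm_num, ← pow_mul]

lemma valE_eq (m : ℕ) (x : ℝ) :
    val m (fun j => dig (2*j) x) = (uext m ⌊x * 4^m⌋₊ : ℝ) / 2^m := by
  unfold val uext
  push_cast
  rw [Finset.sum_div]
  conv_rhs => rw [← Finset.sum_range_reflect]
  apply Finset.sum_congr rfl
  intro j hj
  have hjm : j < m := Finset.mem_range.mp hj
  have e1 : 2*(m-1-j)+1 = 2*m - 2*j - 1 := by omega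
  have e2 : dig (2*j) x = ⌊x * 2^(2*m)⌋₊ / 2^(2*(m-1-j)+1) % 2 := by
    rw [e1]; exact dig_eq (2*m) (2*j) (by omega) x
  have e3 : (2:ℝ) ^ (m - 1 - j) * 2 ^ (j+1) = 2 ^ m := by
    rw [← pow_add]; congr 1; omega
  rw [four_pow, e2, div_eq_div_iff (by positivity) (by positivity), mul_assoc, e3]

lemma valO_eq (m : ℕ) (x : ℝ) :
    val m (fun j => dig (2*j+1) x) = (vext m ⌊x * 4^m⌋₊ : ℝ) / 2^m := by
  unfold val vext
  push_cast
  rw [Finset.sum_div]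
  conv_rhs => rw [← Finset.sum_range_reflect]
  apply Finset.sum_congr rfl
  intro j hj
  have hjm : j < m := Finset.mem_range.mp hj
  have e1 : 2*(m-1-j) = 2*m - (2*j+1) - 1 := by omega
  have e2 : dig (2*j+1) x = ⌊x * 2^(2*m)⌋₊ / 2^(2*(m-1-j)) % 2 := by
    rw [e1]; exact dig_eq (2*m) (2*j+1) (by omega) x
  have e3 : (2:ℝ) ^ (m - 1 - j) * 2 ^ (j+1) = 2 ^ m := by
    rw [← pow_add]; congr 1; omega
  rw [four_pow, e2, div_eq_div_iff (by positivity) (by positivity), mul_assoc, e3]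

lemma Nfloor_lt (m : ℕ) (x : ℝ) (hx : x ∈ Set.Ico (0:ℝ) 1) : ⌊x * 4^m⌋₊ < 4^m := by
  rw [Nat.floor_lt (by nlinarith [hx.1, pow_pos (show (0:ℝ)<4 by norm_num) m] : (0:ℝ) ≤ x * 4^m)]
  push_cast
  nlinarith [hx.2, pow_pos (show (0:ℝ)<4 by norm_num) m]

lemma mem_dyadic (m : ℕ) (x : ℝ) (hx : x ∈ Set.Ico (0:ℝ) 1) :
    x ∈ Set.Ico ((⌊x * 4^m⌋₊ : ℝ) / 4^m) ((⌊x * 4^m⌋₊ + 1 : ℝ) / 4^m) := by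
  have hp : (0:ℝ) < 4^m := by positivity
  have h0 : (0:ℝ) ≤ x * 4^m := by nlinarith [hx.1]
  constructor
  · rw [div_le_iff₀ hp]
    exact Nat.floor_le h0
  · rw [lt_div_iff₀ hp]
    exact_mod_cast Nat.lt_floor_add_one (x * 4^m)

lemma dyadic_mem (m N : ℕ) (hN : N < 4^m) (x : ℝ)
    (hx : x ∈ Set.Ico ((N : ℝ) / 4^m) ((N + 1 : ℝ) / 4^m)) :
    x ∈ Set.Ico (0:ℝ) 1 ∧ ⌊x * 4^m⌋₊ = N := by
  have hp : (0:ℝ) < 4^m := by positivity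
  have h1 : (N:ℝ)/4^m ≤ x := hx.1
  have h2 : x < ((N:ℝ)+1)/4^m := hx.2
  have hNr : (N:ℝ) + 1 ≤ (4:ℝ)^m := by
    have : (N:ℕ) + 1 ≤ 4^m := hN
    exact_mod_cast this
  constructor
  · constructor
    · have : (0:ℝ) ≤ (N:ℝ)/4^m := by positivity
      linarith
    · have : ((N:ℝ)+1)/4^m ≤ 1 := by
        rw [div_le_one hp]; exact hNr
      linarith
  · rw [Nat.floor_eq_iff (mul_nonneg (le_trans (by positivity) h1) hp.le)]
    constructor
    · rw [div_le_iff₀ hp] at h1; linarith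
    · rw [lt_div_iff₀ hp] at h2; push_cast; linarith

/-! ### counting -/

open scoped Classical in
noncomputable def cnt (m : ℕ) (a : ℝ) : ℕ :=
  ((Finset.range (2^m)).filter (fun u : ℕ => ((u:ℝ)+1)/2^m < a)).card

open scoped Classical in
lemma card_split (m : ℕ) (a b : ℝ) :
    ((Finset.range (4^m)).filter
        (fun N => ((uext m N : ℝ)+1)/2^m < a ∧ ((vext m N : ℝ)+1)/2^m < b)).card
      = cnt m a * cnt m b := by
  unfold cnt
  rw [← Finset.card_product
    (s := (Finset.range (2^m)).filter (fun u : ℕ => ((u:ℝ)+1)/2^m < a))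
    (t := (Finset.range (2^m)).filter (fun u : ℕ => ((u:ℝ)+1)/2^m < b))]
  apply Finset.card_nbij' (fun N => (uext m N, vext m N)) (fun p => itl m p.1 p.2)
  · intro N hN
    simp only [Finset.mem_coe, Finset.mem_filter, Finset.mem_range, Finset.mem_product] at *
    exact ⟨⟨uext_lt m N, hN.2.1⟩, ⟨vext_lt m N, hN.2.2⟩⟩
  · intro p hp
    simp only [Finset.mem_coe, Finset.mem_filter, Finset.mem_range, Finset.mem_product] at *
    refine ⟨itl_lt m p.1 p.2, ?_, ?_⟩
    · rw [uext_itl m p.1 p.2 hp.1.1]; exact hp.1.2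
    · rw [vext_itl m p.1 p.2 hp.2.1]; exact hp.2.2
  · intro N hN
    simp only [Finset.mem_coe, Finset.mem_filter, Finset.mem_range] at hN
    exact itl_ext m N hN.1
  · intro p hp
    simp only [Finset.mem_coe, Finset.mem_filter, Finset.mem_range, Finset.mem_product] at hp
    have h1 := uext_itl m p.1 p.2 hp.1.1
    have h2 := vext_itl m p.1 p.2 hp.2.1
    simp [h1, h2]

/-! ### the core measure computation -/

lemma measurable_val (m : ℕ) (c : ℕ → ℕ) :
    Measurable fun x => val m (fun j => dig (c j) x) := by
  apply Finset.measurable_sum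
  intro j _
  exact ((measurable_from_top (f := fun n : ℕ => (n:ℝ))).comp (measurable_dig (c j))).div_const _

lemma core_meas (m : ℕ) (a b : ℝ) :
    volume {x : ℝ | x ∈ Set.Ico (0:ℝ) 1 ∧
      val m (fun j => dig (2*j) x) + ((2:ℝ)^m)⁻¹ < a ∧
      val m (fun j => dig (2*j+1) x) + ((2:ℝ)^m)⁻¹ < b}
      = (cnt m a : ℝ≥0∞) * (cnt m b) / 4^m := by
  classical
  set S := ((Finset.range (4^m)).filter
      (fun N => ((uext m N : ℝ)+1)/2^m < a ∧ ((vext m N : ℝ)+1)/2^m < b)) with hS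
  have hcond : ∀ (u : ℕ), ((u:ℝ))/2^m + ((2:ℝ)^m)⁻¹ = ((u:ℝ)+1)/2^m := by
    intro u
    rw [add_div, one_div]
  have hset : {x : ℝ | x ∈ Set.Ico (0:ℝ) 1 ∧
      val m (fun j => dig (2*j) x) + ((2:ℝ)^m)⁻¹ < a ∧
      val m (fun j => dig (2*j+1) x) + ((2:ℝ)^m)⁻¹ < b}
      = ⋃ N ∈ S, Set.Ico ((N:ℝ)/4^m) (((N:ℝ)+1)/4^m) := by
    ext x
    simp only [Set.mem_setOf_eq, Set.mem_iUnion, exists_prop]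
    constructor
    · rintro ⟨hx, ha, hb⟩
      refine ⟨⌊x * 4^m⌋₊, ?_, ?_⟩
      · rw [hS, Finset.mem_filter, Finset.mem_range]
        refine ⟨Nfloor_lt m x hx, ?_, ?_⟩
        · rw [← hcond]; rw [valE_eq] at ha; exact ha
        · rw [← hcond]; rw [valO_eq] at hb; exact hb
      · exact mem_dyadic m x hx
    · rintro ⟨N, hNS, hxN⟩
      rw [hS, Finset.mem_filter, Finset.mem_range] at hNS
      obtain ⟨hmem, hflr⟩ := dyadic_mem m N hNS.1 x hxN
      refine ⟨hmem, ?_, ?_⟩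
      · rw [valE_eq, hflr, hcond]; exact hNS.2.1
      · rw [valO_eq, hflr, hcond]; exact hNS.2.2
  rw [hset, measure_biUnion_finset ?hd (fun N _ => measurableSet_Ico)]
  · have hvol : ∀ N : ℕ, volume (Set.Ico ((N:ℝ)/4^m) (((N:ℝ)+1)/4^m)) = (4^m : ℝ≥0∞)⁻¹ := by
      intro N
      rw [Real.volume_Ico]
      have : ((N:ℝ)+1)/4^m - (N:ℝ)/4^m = (4^m)⁻¹ := by
        field_simp
        ring
      rw [this, ENNReal.ofReal_inv_of_pos (by positivity), ENNReal.ofReal_pow (by norm_num),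
        ENNReal.ofReal_ofNat]
    rw [Finset.sum_congr rfl (fun N _ => hvol N), Finset.sum_const, hS, card_split m a b]
    rw [nsmul_eq_mul, div_eq_mul_inv]
    push_cast
    ring
  · intro N hN N' hN' hne
    simp only [Function.onFun]
    apply Set.Ico_disjoint_Ico.mpr
    have hp : (0:ℝ) < 4^m := by positivity
    rcases lt_or_gt_of_ne (show (N:ℕ) ≠ N' from hne) with h | h
    · apply le_trans (min_le_left _ _)
      apply le_max_of_le_right
      rw [div_le_div_iff₀ hp hp]  -- (N+1)/4^m ≤ N'/4^m
      have : (N:ℝ) + 1 ≤ (N':ℝ) := by exact_mod_cast h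
      nlinarith
    · apply le_trans (min_le_right _ _)
      apply le_max_of_le_left
      rw [div_le_div_iff₀ hp hp]
      have : (N':ℝ) + 1 ≤ (N:ℝ) := by exact_mod_cast h
      nlinarith

/-! ### the limit -/

lemma cnt_eq (m : ℕ) (a : ℝ) : cnt m a = min (⌈a * 2^m - 1⌉₊) (2^m) := by
  classical
  unfold cnt
  have hp : (0:ℝ) < 2^m := by positivity
  have h1 : ∀ u : ℕ, (((u:ℝ)+1)/2^m < a ↔ u < ⌈a * 2^m - 1⌉₊) := by
    intro u
    rw [div_lt_iff₀ hp, Nat.lt_ceil]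
    constructor <;> intro h <;> nlinarith
  have h2 : (Finset.range (2^m)).filter (fun u : ℕ => ((u:ℝ)+1)/2^m < a)
      = Finset.range (min (⌈a * 2^m - 1⌉₊) (2^m)) := by
    ext u
    simp only [Finset.mem_filter, Finset.mem_range, h1, lt_min_iff]
    tauto
  rw [h2, Finset.card_range]

lemma lam_Iio (a : ℝ) : lam (Set.Iio a) = ENNReal.ofReal (min a 1) := by
  rw [lam, Measure.restrict_apply measurableSet_Iio]
  rcases le_or_gt a 0 with ha | ha
  · have h1 : Set.Iio a ∩ Set.Icc 0 1 = ∅ := by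
      ext x; simp only [Set.mem_inter_iff, Set.mem_Iio, Set.mem_Icc, Set.mem_empty_iff_false,
        iff_false, not_and, and_imp]
      intro hx h0 _; linarith
    rw [h1, measure_empty, Eq.comm, ENNReal.ofReal_eq_zero]
    exact le_trans (min_le_left _ _) ha
  · rcases le_or_gt a 1 with ha1 | ha1
    · have h1 : Set.Iio a ∩ Set.Icc 0 1 = Set.Ico 0 a := by
        ext x; simp only [Set.mem_inter_iff, Set.mem_Iio, Set.mem_Icc, Set.mem_Ico]
        constructor
        · rintro ⟨h1, h2, h3⟩; exact ⟨h2, h1⟩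
        · rintro ⟨h1, h2⟩; exact ⟨h2, h1, by linarith⟩
      rw [h1, Real.volume_Ico, min_eq_left ha1, sub_zero]
    · have h1 : Set.Iio a ∩ Set.Icc 0 1 = Set.Icc 0 1 := by
        rw [Set.inter_eq_right]
        intro x hx
        simp only [Set.mem_Icc] at hx
        simp only [Set.mem_Iio]
        linarith [hx.2]
      rw [h1, Real.volume_Icc, min_eq_right ha1.le, sub_zero]

lemma cnt_tendsto_real (a : ℝ) :
    Filter.Tendsto (fun m => (cnt m a : ℝ) / 2^m) atTop (𝓝 (max 0 (min a 1))) := by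
  rcases le_or_gt a 0 with ha | ha
  · have h0 : ∀ m, (cnt m a : ℝ) / 2^m = 0 := by
      intro m
      have : ⌈a * 2^m - 1⌉₊ = 0 := by
        apply Nat.ceil_eq_zero.mpr
        nlinarith [pow_pos (show (0:ℝ) < 2 by norm_num) m]
      rw [cnt_eq, this, Nat.min_eq_left (Nat.zero_le _), Nat.cast_zero, zero_div]
    rw [funext h0]
    have : max 0 (min a 1) = 0 := max_eq_left (le_trans (min_le_left _ _) ha)
    rw [this]
    exact tendsto_const_nhds
  · have hmax : max 0 (min a 1) = min a 1 := max_eq_right (le_min ha.le zero_le_one)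
    rw [hmax]
    have hceil_le : ∀ m : ℕ, (⌈a * 2^m - 1⌉₊ : ℝ) ≤ a * 2^m := by
      intro m
      rcases le_or_gt (a * 2^m - 1) 0 with h | h
      · rw [Nat.ceil_eq_zero.mpr h, Nat.cast_zero]
        positivity
      · linarith [Nat.ceil_lt_add_one h.le]
    have hle_ceil : ∀ m : ℕ, a * 2^m - 1 ≤ (⌈a * 2^m - 1⌉₊ : ℝ) := fun m => Nat.le_ceil _
    have hcast : ∀ m : ℕ, (cnt m a : ℝ) = min ((⌈a * 2^m - 1⌉₊ : ℝ)) ((2:ℝ)^m) := by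
      intro m
      rw [cnt_eq]
      push_cast [Nat.cast_min]
      ring_nf
    have hlo : ∀ m : ℕ, min a 1 - ((2:ℝ)^m)⁻¹ ≤ (cnt m a : ℝ) / 2^m := by
      intro m
      have hp : (0:ℝ) < 2^m := by positivity
      rw [hcast, le_div_iff₀ hp, sub_mul, inv_mul_cancel₀ hp.ne', min_mul_of_nonneg _ _ hp.le,
        one_mul]
      apply le_min
      · linarith [min_le_left (a * 2^m) ((2:ℝ)^m), hle_ceil m]
      · linarith [min_le_right (a * 2^m) ((2:ℝ)^m)]
    have hhi : ∀ m : ℕ, (cnt m a : ℝ) / 2^m ≤ min a 1 := by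
      intro m
      have hp : (0:ℝ) < 2^m := by positivity
      rw [hcast, div_le_iff₀ hp, min_mul_of_nonneg _ _ hp.le, one_mul]
      exact min_le_min (hceil_le m) le_rfl
    have hinv : Filter.Tendsto (fun m : ℕ => min a 1 - ((2:ℝ)^m)⁻¹) atTop (𝓝 (min a 1)) := by
      have h2 : Filter.Tendsto (fun m : ℕ => ((2:ℝ)^m)⁻¹) atTop (𝓝 0) := by
        have : ∀ m : ℕ, ((2:ℝ)^m)⁻¹ = ((2:ℝ)⁻¹)^m := fun m => by rw [inv_pow]
        rw [funext this]
        exact tendsto_pow_atTop_nhds_zero_of_lt_one (by norm_num) (by norm_num)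
      simpa using tendsto_const_nhds.sub h2
    exact tendsto_of_tendsto_of_tendsto_of_le_of_le hinv tendsto_const_nhds hlo hhi

lemma cnt_tendsto (a : ℝ) :
    Filter.Tendsto (fun m => (cnt m a : ℝ≥0∞) / 2^m) atTop (𝓝 (lam (Set.Iio a))) := by
  have key : ∀ m : ℕ, (cnt m a : ℝ≥0∞) / 2^m = ENNReal.ofReal ((cnt m a : ℝ) / 2^m) := by
    intro m
    rw [ENNReal.ofReal_div_of_pos (by positivity), ENNReal.ofReal_natCast,
      ENNReal.ofReal_pow (by norm_num), ENNReal.ofReal_ofNat]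
  rw [funext key, lam_Iio]
  have h := ENNReal.tendsto_ofReal (cnt_tendsto_real a)
  have : ENNReal.ofReal (max 0 (min a 1)) = ENNReal.ofReal (min a 1) := by
    rcases le_or_gt 0 (min a 1) with h0 | h0
    · rw [max_eq_right h0]
    · rw [max_eq_left h0.le, ENNReal.ofReal_zero, Eq.comm, ENNReal.ofReal_eq_zero]
      exact h0.le
  rw [← this]
  exact h

/-! ### the map x ↦ (E x, O x) is measure preserving -/

lemma inv_pow_lt (ε : ℝ) (hε : 0 < ε) : ∃ m : ℕ, ((2:ℝ)^m)⁻¹ < ε := by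
  obtain ⟨m, hm⟩ := exists_pow_lt_of_lt_one hε (show (1:ℝ)/2 < 1 by norm_num)
  refine ⟨m, ?_⟩
  calc ((2:ℝ)^m)⁻¹ = (1/2)^m := by rw [div_pow, one_pow, one_div]
    _ < ε := hm

lemma Sm_mono (a b : ℝ) : Monotone (fun m => {x : ℝ | x ∈ Set.Ico (0:ℝ) 1 ∧
    val m (fun j => dig (2*j) x) + ((2:ℝ)^m)⁻¹ < a ∧
    val m (fun j => dig (2*j+1) x) + ((2:ℝ)^m)⁻¹ < b}) := by
  have hanti : ∀ (c : ℕ → ℕ), (∀ j, c j ≤ 1) → Antitone (fun m => val m c + ((2:ℝ)^m)⁻¹) :=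
    fun c hc => antitone_nat_of_succ_le (fun m => val_succ_bound m c hc)
  apply monotone_nat_of_le_succ
  intro m x hx
  obtain ⟨h0, h1, h2⟩ := hx
  refine ⟨h0, ?_, ?_⟩
  · exact lt_of_le_of_lt (hanti _ (fun j => dig_le_one _ _) (Nat.le_succ m)) h1
  · exact lt_of_le_of_lt (hanti _ (fun j => dig_le_one _ _) (Nat.le_succ m)) h2

lemma event_eq (a b : ℝ) :
    {x : ℝ | x ∈ Set.Ico (0:ℝ) 1 ∧ Ecomp x < a ∧ Ocomp x < b}
      = ⋃ m, {x : ℝ | x ∈ Set.Ico (0:ℝ) 1 ∧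
          val m (fun j => dig (2*j) x) + ((2:ℝ)^m)⁻¹ < a ∧
          val m (fun j => dig (2*j+1) x) + ((2:ℝ)^m)⁻¹ < b} := by
  ext x
  simp only [Set.mem_setOf_eq, Set.mem_iUnion]
  constructor
  · rintro ⟨h0, hE, hO⟩
    obtain ⟨m1, hm1⟩ := inv_pow_lt (a - Ecomp x) (by linarith)
    obtain ⟨m2, hm2⟩ := inv_pow_lt (b - Ocomp x) (by linarith)
    have hanti : ∀ (c : ℕ → ℕ), (∀ j, c j ≤ 1) → Antitone (fun m => val m c + ((2:ℝ)^m)⁻¹) :=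
      fun c hc => antitone_nat_of_succ_le (fun m => val_succ_bound m c hc)
    refine ⟨max m1 m2, h0, ?_, ?_⟩
    · calc val (max m1 m2) (fun j => dig (2*j) x) + ((2:ℝ)^(max m1 m2))⁻¹
          ≤ val m1 (fun j => dig (2*j) x) + ((2:ℝ)^m1)⁻¹ :=
            hanti _ (fun j => dig_le_one _ _) (le_max_left _ _)
        _ ≤ Ecomp x + ((2:ℝ)^m1)⁻¹ := by
            gcongr
            exact val_le_tsum m1 _ (fun j => dig_le_one _ _)
        _ < a := by linarith
    · calc val (max m1 m2) (fun j => dig (2*j+1) x) + ((2:ℝ)^(max m1 m2))⁻¹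
          ≤ val m2 (fun j => dig (2*j+1) x) + ((2:ℝ)^m2)⁻¹ :=
            hanti _ (fun j => dig_le_one _ _) (le_max_right _ _)
        _ ≤ Ocomp x + ((2:ℝ)^m2)⁻¹ := by
            gcongr
            exact val_le_tsum m2 _ (fun j => dig_le_one _ _)
        _ < b := by linarith
  · rintro ⟨m, h0, h1, h2⟩
    refine ⟨h0, ?_, ?_⟩
    · calc Ecomp x ≤ val m (fun j => dig (2*j) x) + ((2:ℝ)^m)⁻¹ :=
          tsum_le_val m _ (fun j => dig_le_one _ _)
        _ < a := h1
    · calc Ocomp x ≤ val m (fun j => dig (2*j+1) x) + ((2:ℝ)^m)⁻¹ :=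
          tsum_le_val m _ (fun j => dig_le_one _ _)
        _ < b := h2

lemma ennreal_split (u v m : ℕ) :
    ((u : ℝ≥0∞) * v) / 4^m = ((u : ℝ≥0∞)/2^m) * ((v : ℝ≥0∞)/2^m) := by
  rw [div_eq_mul_inv, div_eq_mul_inv, div_eq_mul_inv]
  have h4 : ((4:ℝ≥0∞))^m = (2^m) * (2^m) := by rw [← mul_pow]; norm_num
  rw [h4, ENNReal.mul_inv (Or.inl (pow_ne_zero m (by norm_num)))
    (Or.inl (ENNReal.pow_ne_top (by norm_num)))]
  ring

lemma rect_meas (a b : ℝ) :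
    lam ((fun x => (Ecomp x, Ocomp x)) ⁻¹' (Set.Iio a ×ˢ Set.Iio b))
      = lam (Set.Iio a) * lam (Set.Iio b) := by
  have hpre : (fun x => (Ecomp x, Ocomp x)) ⁻¹' (Set.Iio a ×ˢ Set.Iio b)
      = {x : ℝ | Ecomp x < a ∧ Ocomp x < b} := by
    ext x; simp [Set.mem_prod]
  have hmeas : MeasurableSet {x : ℝ | Ecomp x < a ∧ Ocomp x < b} :=
    (measurable_Ecomp measurableSet_Iio).inter (measurable_Ocomp measurableSet_Iio)
  have hinter : {x : ℝ | Ecomp x < a ∧ Ocomp x < b} ∩ Set.Ico 0 1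
      = {x : ℝ | x ∈ Set.Ico (0:ℝ) 1 ∧ Ecomp x < a ∧ Ocomp x < b} := by
    ext x; simp only [Set.mem_inter_iff, Set.mem_setOf_eq]; tauto
  have hL : lam {x : ℝ | Ecomp x < a ∧ Ocomp x < b}
      = volume (⋃ m, {x : ℝ | x ∈ Set.Ico (0:ℝ) 1 ∧
          val m (fun j => dig (2*j) x) + ((2:ℝ)^m)⁻¹ < a ∧
          val m (fun j => dig (2*j+1) x) + ((2:ℝ)^m)⁻¹ < b}) := by
    rw [lam_eq_ico, Measure.restrict_apply hmeas, hinter, event_eq]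
  rw [hpre, hL]
  have htend := tendsto_measure_iUnion_atTop (μ := volume) (Sm_mono a b)
  simp only [Function.comp_def] at htend
  have htend2 : Filter.Tendsto (fun m => volume {x : ℝ | x ∈ Set.Ico (0:ℝ) 1 ∧
      val m (fun j => dig (2*j) x) + ((2:ℝ)^m)⁻¹ < a ∧
      val m (fun j => dig (2*j+1) x) + ((2:ℝ)^m)⁻¹ < b}) atTop
      (𝓝 (lam (Set.Iio a) * lam (Set.Iio b))) := by
    have hc : ∀ m, volume {x : ℝ | x ∈ Set.Ico (0:ℝ) 1 ∧
        val m (fun j => dig (2*j) x) + ((2:ℝ)^m)⁻¹ < a ∧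
        val m (fun j => dig (2*j+1) x) + ((2:ℝ)^m)⁻¹ < b}
        = ((cnt m a : ℝ≥0∞)/2^m) * ((cnt m b : ℝ≥0∞)/2^m) := by
      intro m
      rw [core_meas, ennreal_split]
    rw [funext hc]
    exact ENNReal.Tendsto.mul (cnt_tendsto a) (Or.inr (measure_ne_top lam _))
      (cnt_tendsto b) (Or.inr (measure_ne_top lam _))
  exact tendsto_nhds_unique htend htend2

lemma isPiSystem_Iio : IsPiSystem (Set.range (Set.Iio (α := ℝ))) := by
  rintro _ ⟨a, rfl⟩ _ ⟨b, rfl⟩ _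
  rw [Set.Iio_inter_Iio]
  exact ⟨min a b, rfl⟩

def spanIio : (Measure.FiniteSpanningSetsIn lam (Set.range (Set.Iio (α := ℝ)))) where
  set := fun n => Set.Iio n
  set_mem := fun n => ⟨n, rfl⟩
  finite := fun n => measure_lt_top lam _
  spanning := by
    apply Set.eq_univ_of_forall
    intro x
    obtain ⟨n, hn⟩ := exists_nat_gt x
    exact Set.mem_iUnion.mpr ⟨n, hn⟩

lemma phi_measurable : Measurable (fun x => (Ecomp x, Ocomp x)) :=
  measurable_Ecomp.prodMk measurable_Ocomp

lemma phi_map : lam.map (fun x => (Ecomp x, Ocomp x)) = lam.prod lam := by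
  symm
  apply Measure.prod_eq_generateFrom
    ((borel_eq_generateFrom_Iio ℝ).symm.trans (BorelSpace.measurable_eq (α := ℝ)).symm)
    ((borel_eq_generateFrom_Iio ℝ).symm.trans (BorelSpace.measurable_eq (α := ℝ)).symm)
    isPiSystem_Iio isPiSystem_Iio spanIio spanIio
  rintro _ ⟨a, rfl⟩ _ ⟨b, rfl⟩
  rw [Measure.map_apply phi_measurable (measurableSet_Iio.prod measurableSet_Iio)]
  exact rect_meas a b

/-! ### iterating the splitting: a measure preserving map to `[0,1]^ℕ` -/

def psi : ℕ → ℝ → ℝ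
  | 0 => Ecomp
  | n+1 => fun x => psi n (Ocomp x)

lemma measurable_psi (n : ℕ) : Measurable (psi n) := by
  induction n with
  | zero => exact measurable_Ecomp
  | succ n ih => exact ih.comp measurable_Ocomp

lemma psi_cyl (M : ℕ) : ∀ (s : Finset ℕ), s ⊆ Finset.range M → ∀ (t : ℕ → Set ℝ),
    (∀ n, MeasurableSet (t n)) →
    lam {x | ∀ n ∈ s, psi n x ∈ t n} = ∏ n ∈ s, lam (t n) := by
  induction M with
  | zero =>
    intro s hs t ht
    have : s = ∅ := Finset.subset_empty.mp (by simpa using hs)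
    subst this
    simp only [Finset.notMem_empty, false_implies, implies_true, Set.setOf_true,
      Finset.prod_empty]
    exact measure_univ
  | succ M ih =>
    intro s hs t ht
    classical
    set s' := (s.erase 0).image (· - 1) with hs'
    have hmem' : ∀ k, k ∈ s' ↔ k + 1 ∈ s := by
      intro k
      rw [hs', Finset.mem_image]
      constructor
      · rintro ⟨n, hn, rfl⟩
        have h0 : n ≠ 0 := (Finset.mem_erase.mp hn).1
        have : n - 1 + 1 = n := by omega
        rw [this]
        exact (Finset.mem_erase.mp hn).2
      · intro h
        exact ⟨k+1, Finset.mem_erase.mpr ⟨by omega, h⟩, by omega⟩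
    have hsub' : s' ⊆ Finset.range M := by
      intro k hk
      rw [hmem'] at hk
      have := hs hk
      rw [Finset.mem_range] at *
      omega
    set T0 : Set ℝ := if 0 ∈ s then t 0 else Set.univ with hT0
    set C : Set ℝ := {y | ∀ k ∈ s', psi k y ∈ t (k+1)} with hC
    have hCmeas : MeasurableSet C := by
      have : C = ⋂ k ∈ (s' : Set ℕ), psi k ⁻¹' t (k+1) := by
        ext y; simp [hC]
      rw [this]
      exact MeasurableSet.biInter s'.countable_toSet
        (fun k _ => (measurable_psi k) (ht (k+1)))
    have hT0meas : MeasurableSet T0 := by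
      rw [hT0]; split <;> [exact ht 0; exact MeasurableSet.univ]
    have hset : {x | ∀ n ∈ s, psi n x ∈ t n}
        = (fun x => (Ecomp x, Ocomp x)) ⁻¹' (T0 ×ˢ C) := by
      ext x
      simp only [Set.mem_setOf_eq, Set.mem_preimage, Set.mem_prod, hC, Set.mem_setOf_eq]
      constructor
      · intro h
        refine ⟨?_, ?_⟩
        · rw [hT0]
          split
          · next h0 => exact h 0 h0
          · exact Set.mem_univ _
        · intro k hk
          rw [hmem'] at hk
          exact h (k+1) hk
      · rintro ⟨h1, h2⟩ n hn
        cases n with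
        | zero =>
          rw [hT0] at h1
          rw [if_pos hn] at h1
          exact h1
        | succ k =>
          exact h2 k ((hmem' k).mpr hn)
    rw [hset, ← Measure.map_apply phi_measurable (hT0meas.prod hCmeas), phi_map,
      Measure.prod_prod]
    have hC_eq : lam C = ∏ k ∈ s', lam (t (k+1)) := ih s' hsub' (fun k => t (k+1))
      (fun k => ht (k+1))
    have hprod' : ∏ k ∈ s', lam (t (k+1)) = ∏ n ∈ s.erase 0, lam (t n) := by
      rw [hs', Finset.prod_image]
      · apply Finset.prod_congr rfl
        intro n hn
        have h0 : n ≠ 0 := (Finset.mem_erase.mp hn).1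
        have : n - 1 + 1 = n := by omega
        rw [this]
      · intro n hn n' hn' h
        have := (Finset.mem_erase.mp hn).1
        have := (Finset.mem_erase.mp hn').1
        simp only at h
        omega
    have hT0val : lam T0 = if 0 ∈ s then lam (t 0) else 1 := by
      rw [hT0]
      split <;> [rfl; exact measure_univ]
    rw [hC_eq, hprod', hT0val]
    split
    · next h0 => exact Finset.mul_prod_erase s (fun n => lam (t n)) h0
    · next h0 => rw [one_mul, Finset.erase_eq_of_notMem h0]

/-! ### cylinder sets on product spaces -/

lemma cyl_meas {ι : Type*} (s : Finset ι) (t : ι → Set ℝ) (ht : ∀ i, MeasurableSet (t i)) :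
    MeasurableSet {f : ι → ℝ | ∀ i ∈ s, f i ∈ t i} := by
  have h : {f : ι → ℝ | ∀ i ∈ s, f i ∈ t i}
      = ⋂ i ∈ (s : Set ι), (fun f : ι → ℝ => f i) ⁻¹' t i := by
    ext f; simp
  rw [h]
  exact MeasurableSet.biInter s.countable_toSet (fun i _ => measurable_pi_apply i (ht i))

def cylSets (ι : Type*) : Set (Set (ι → ℝ)) :=
  {S | ∃ (s : Finset ι) (t : ι → Set ℝ),
    (∀ i, MeasurableSet (t i)) ∧ S = {f | ∀ i ∈ s, f i ∈ t i}}

lemma generateFrom_cyl (ι : Type*) :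
    (inferInstance : MeasurableSpace (ι → ℝ)) = MeasurableSpace.generateFrom (cylSets ι) := by
  apply le_antisymm
  · refine iSup_le fun i => ?_
    rintro S ⟨A, hA, rfl⟩
    apply MeasurableSpace.measurableSet_generateFrom
    refine ⟨{i}, fun _ => A, fun _ => hA, ?_⟩
    ext f; simp
  · apply MeasurableSpace.generateFrom_le
    rintro S ⟨s, t, ht, rfl⟩
    exact cyl_meas s t ht

lemma isPiSystem_cyl (ι : Type*) : IsPiSystem (cylSets ι) := by
  classical
  rintro S1 ⟨s1, t1, ht1, rfl⟩ S2 ⟨s2, t2, ht2, rfl⟩ -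
  refine ⟨s1 ∪ s2,
    fun i => (if i ∈ s1 then t1 i else Set.univ) ∩ (if i ∈ s2 then t2 i else Set.univ),
    fun i => MeasurableSet.inter (by split <;> [exact ht1 i; exact .univ])
      (by split <;> [exact ht2 i; exact .univ]), ?_⟩
  ext f
  simp only [Set.mem_inter_iff, Set.mem_setOf_eq, Finset.mem_union]
  constructor
  · rintro ⟨h1, h2⟩ i hi
    constructor
    · split
      · next h => exact h1 i h
      · trivial
    · split
      · next h => exact h2 i h
      · trivial
  · intro h
    constructor
    · intro i hi
      have := (h i (Or.inl hi)).1
      rwa [if_pos hi] at this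
    · intro i hi
      have := (h i (Or.inr hi)).2
      rwa [if_pos hi] at this

end UPP

open MeasureTheory

/-- `μ` is the product over `ι` of uniform measures on `[0,1]`: it is a probability
measure whose values on measurable cylinders are the corresponding products of
Lebesgue measures of the factors intersected with `[0,1]`. -/
def IsUnifProd {ι : Type*} (μ : Measure (ι → ℝ)) : Prop :=
  IsProbabilityMeasure μ ∧
    ∀ (s : Finset ι) (t : ι → Set ℝ), (∀ i, MeasurableSet (t i)) →
      μ {f | ∀ i ∈ s, f i ∈ t i}
        = ∏ i ∈ s, (volume.restrict (Set.Icc (0 : ℝ) 1)) (t i)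

namespace UPP

lemma lam_def : volume.restrict (Set.Icc (0:ℝ) 1) = lam := rfl

lemma unif_ext {ι : Type*} {μ ν : Measure (ι → ℝ)} (hμ : IsUnifProd μ) (hν : IsUnifProd ν) :
    μ = ν := by
  haveI := hμ.1
  haveI := hν.1
  apply MeasureTheory.ext_of_generate_finite (cylSets ι) (generateFrom_cyl ι) (isPiSystem_cyl ι)
  · rintro S ⟨s, t, ht, rfl⟩
    rw [hμ.2 s t ht, hν.2 s t ht]
  · rw [measure_univ, measure_univ]

/-! ### the group part -/

section GroupPart

variable {G : Type*} [Group G] (H : Subgroup G)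

abbrev qmk (g : G) : Quotient (MulAction.orbitRel H G) := Quotient.mk _ g

lemma exists_rep (g : G) : ∃ h : ↥H, (h : G) * (qmk H g).out = g := by
  have h1 : qmk H ((qmk H g).out) = qmk H g := Quotient.out_eq _
  have h2 : (MulAction.orbitRel H G) ((qmk H g).out) g := Quotient.exact h1
  rw [MulAction.orbitRel_apply] at h2
  obtain ⟨h, hh⟩ := h2
  refine ⟨h⁻¹, ?_⟩
  have hh' : (h : G) * g = (qmk H g).out := by
    rw [← hh]; rfl
  rw [← hh']
  simp [mul_assoc]

def hp (g : G) : ↥H :=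
  ⟨g * ((qmk H g).out)⁻¹, by
    obtain ⟨h, hh⟩ := exists_rep H g
    have h2 : g * ((qmk H g).out)⁻¹ = (h : G) := by
      rw [mul_inv_eq_iff_eq_mul]
      exact hh.symm
    rw [h2]; exact h.2⟩

lemma qmk_mul (h : ↥H) (g : G) : qmk H ((h : G) * g) = qmk H g := by
  apply Quotient.sound
  show MulAction.orbitRel H G ((h : G) * g) g
  rw [MulAction.orbitRel_apply]
  exact ⟨h, by simp [HSMul.hSMul, SMul.smul]⟩

lemma hp_mul (h : ↥H) (g : G) : hp H ((h : G) * g) = h * hp H g := by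
  apply Subtype.ext
  show ((h : G) * g) * ((qmk H ((h : G) * g)).out)⁻¹ = (h : G) * (g * ((qmk H g).out)⁻¹)
  rw [qmk_mul, mul_assoc]

lemma g_eq (g : G) : ((hp H g : G)) * (qmk H g).out = g := by
  show (g * ((qmk H g).out)⁻¹) * (qmk H g).out = g
  simp

lemma qmk_uniq {g g' : G} (hq : qmk H g = qmk H g') (hh : hp H g = hp H g') : g = g' := by
  rw [← g_eq H g, ← g_eq H g', hq, hh]

end GroupPart

end UPP

/-- For a subgroup `H` of a countable group `G`, there is a measure-preserving
`H`-equivariant map `[0,1]^H → [0,1]^G`, where `H` acts by `(h·f)(x) = f(h⁻¹x)`. -/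
theorem exists_equivariant_measure_preserving (G : Type*) [Group G] [Countable G]
    (H : Subgroup G) (μH : Measure (↥H → ℝ)) (μG : Measure (G → ℝ))
    (hμH : IsUnifProd μH) (hμG : IsUnifProd μG) :
    ∃ F : (↥H → ℝ) → (G → ℝ), Measurable F ∧ μH.map F = μG ∧
      ∀ (h : ↥H) (f : ↥H → ℝ),
        F (fun x => f (h⁻¹ * x)) = fun g => F f ((h : G)⁻¹ * g) := by
  classical
  obtain ⟨idx, hidx⟩ := Countable.exists_injective_nat (Quotient (MulAction.orbitRel H G))
  set F : (↥H → ℝ) → (G → ℝ) :=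
    fun f g => UPP.psi (idx (UPP.qmk H g)) (f (UPP.hp H g)) with hF
  have hFmeas : Measurable F := by
    apply measurable_pi_iff.mpr
    intro g
    exact (UPP.measurable_psi _).comp (measurable_pi_apply (UPP.hp H g))
  have hequiv : ∀ (h : ↥H) (f : ↥H → ℝ),
      F (fun x => f (h⁻¹ * x)) = fun g => F f ((h : G)⁻¹ * g) := by
    intro h f
    funext g
    simp only [hF]
    have hco : ((h : G))⁻¹ = ((h⁻¹ : ↥H) : G) := by simp
    rw [hco, UPP.qmk_mul H h⁻¹ g, UPP.hp_mul H h⁻¹ g]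
  refine ⟨F, hFmeas, ?_, hequiv⟩
  haveI := hμH.1
  apply UPP.unif_ext ?_ hμG
  constructor
  · exact Measure.isProbabilityMeasure_map hFmeas.aemeasurable
  intro S t ht
  rw [Measure.map_apply hFmeas (UPP.cyl_meas S t ht)]
  set A : ↥H → Set ℝ := fun h' => {y | ∀ g ∈ S.filter (fun g => UPP.hp H g = h'),
    UPP.psi (idx (UPP.qmk H g)) y ∈ t g} with hA
  have hAmeas : ∀ h', MeasurableSet (A h') := by
    intro h'
    have heq : A h' = ⋂ g ∈ ((S.filter (fun g => UPP.hp H g = h')) : Set G),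
        UPP.psi (idx (UPP.qmk H g)) ⁻¹' t g := by
      ext y; simp [hA]
    rw [heq]
    exact MeasurableSet.biInter (Finset.countable_toSet _)
      (fun g _ => (UPP.measurable_psi _) (ht g))
  have hpre : F ⁻¹' {f | ∀ g ∈ S, f g ∈ t g}
      = {f | ∀ h' ∈ S.image (UPP.hp H), f h' ∈ A h'} := by
    ext f
    simp only [Set.mem_preimage, Set.mem_setOf_eq, hF, hA, Finset.mem_image, Finset.mem_filter]
    constructor
    · rintro hf h' ⟨g0, hg0, rfl⟩ g ⟨hgS, hg⟩
      rw [← hg]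
      exact hf g hgS
    · intro hf g hgS
      exact hf (UPP.hp H g) ⟨g, hgS, rfl⟩ g ⟨hgS, rfl⟩
  rw [hpre, hμH.2 _ _ hAmeas]
  simp only [UPP.lam_def]
  rw [← Finset.prod_fiberwise_of_maps_to (g := UPP.hp H)
    (fun g hg => Finset.mem_image_of_mem _ hg) (fun g => UPP.lam (t g))]
  apply Finset.prod_congr rfl
  intro h' _
  set Sf := S.filter (fun g => UPP.hp H g = h') with hSf
  set sn := Sf.image (fun g => idx (UPP.qmk H g)) with hsn
  set tn : ℕ → Set ℝ := fun n =>
    ⋂ g ∈ ((Sf.filter (fun g => idx (UPP.qmk H g) = n)) : Set G), t g with htn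
  have htnmeas : ∀ n, MeasurableSet (tn n) := fun n =>
    MeasurableSet.biInter (Finset.countable_toSet _) (fun g _ => ht g)
  have hAcyl : A h' = {y | ∀ n ∈ sn, UPP.psi n y ∈ tn n} := by
    ext y
    simp only [hA, Set.mem_setOf_eq, hsn, Finset.mem_image]
    constructor
    · rintro hy n ⟨g0, hg0, rfl⟩
      rw [htn]
      apply Set.mem_biInter
      intro g hg
      simp only [Finset.mem_coe, Finset.mem_filter] at hg
      rw [← hg.2]
      exact hy g hg.1
    · intro hy g hg
      have h1 : idx (UPP.qmk H g) ∈ sn := by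
        rw [hsn]; exact Finset.mem_image_of_mem _ hg
      have h2 := hy _ ⟨g, hg, rfl⟩
      rw [htn] at h2
      exact Set.biInter_subset_of_mem
        (by simpa [Finset.mem_coe, Finset.mem_filter, hSf] using hg) h2
  have huniq : ∀ g ∈ Sf, ∀ g' ∈ Sf, idx (UPP.qmk H g) = idx (UPP.qmk H g') → g = g' := by
    intro g hg g' hg' hgg'
    have e1 : UPP.hp H g = UPP.hp H g' := by
      rw [hSf, Finset.mem_filter] at hg hg'
      rw [hg.2, hg'.2]
    exact UPP.qmk_uniq H (hidx hgg') e1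
  rw [hAcyl, UPP.psi_cyl (sn.sup id + 1) sn
    (fun n hn => Finset.mem_range.mpr (Nat.lt_succ_of_le (Finset.le_sup (f := id) hn)))
    tn htnmeas]
  rw [hsn, Finset.prod_image huniq]
  apply Finset.prod_congr rfl
  intro g hg
  congr 1
  rw [htn]
  apply subset_antisymm
  · exact Set.biInter_subset_of_mem
      (by simp [Finset.mem_coe, Finset.mem_filter, hg])
  · intro x hx
    apply Set.mem_biInter
    intro g'' hg''
    simp only [Finset.mem_coe, Finset.mem_filter] at hg''
    have : g'' = g := huniq g'' hg''.1 g hg hg''.2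
    rw [this]
    exact hx
end
end

section
/- Let d ≥ 3 and consider the d-regular tree T_d. For vertices u, v at distance k and radius R, the quantity |B_R(u) ∩ B_R(v)| / |B_R(v)| converges as R → ∞ to 2/(d(d-1)^l) if k = 2l+1 is odd, and to 1/(d-1)^l if k = 2l is even. -/
open Filter SimpleGraph Finset

namespace TreeBallAux

variable {V : Type*} {G : SimpleGraph V}

/-- Vertices along a geodesic walk are at the expected distances from the endpoints. -/
lemma geo_dists (hconn : G.Connected) {u v : V} (p : G.Walk u v)
    (hp : p.length = G.dist u v) :
    ∀ i ≤ p.length, G.dist u (p.getVert i) = i ∧ G.dist (p.getVert i) v = p.length - i := by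
  induction p with
  | nil =>
    intro i hi
    have : i = 0 := by simpa using hi
    subst this
    simp
  | @cons a b c h q ih =>
    have hab : G.dist a b = 1 := dist_eq_one_iff_adj.mpr h
    have hlen : (Walk.cons h q).length = q.length + 1 := by simp
    have hq : q.length = G.dist b c := by
      have h1 : G.dist b c ≤ q.length := dist_le q
      have h2 : G.dist a c ≤ G.dist a b + G.dist b c := hconn.dist_triangle
      omega
    intro i hi
    match i with
    | 0 =>
      refine ⟨by simp, ?_⟩
      simpa using hp.symm
    | (j+1) =>
      have hj : j ≤ q.length := by simpa [hlen] using hi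
      have hgv : (Walk.cons h q).getVert (j+1) = q.getVert j := rfl
      obtain ⟨h1, h2⟩ := ih hq j hj
      rw [hgv]
      constructor
      · have hub : G.dist a (q.getVert j) ≤ G.dist a b + G.dist b (q.getVert j) :=
          hconn.dist_triangle
        have hlb : G.dist a c ≤ G.dist a (q.getVert j) + G.dist (q.getVert j) c :=
          hconn.dist_triangle
        omega
      · omega

/-- Distances between vertices along a geodesic walk. -/
lemma geo_pair (hconn : G.Connected) {u v : V} (p : G.Walk u v)
    (hp : p.length = G.dist u v) :
    ∀ i ≤ p.length, ∀ j ≤ p.length, i ≤ j → G.dist (p.getVert i) (p.getVert j) = j - i := by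
  intro i hi j hj hij
  have hup : ∀ m, m ≤ p.length → i ≤ m → G.dist (p.getVert i) (p.getVert m) ≤ m - i := by
    intro m
    induction m with
    | zero =>
      intro _ h0
      have : i = 0 := by omega
      subst this
      simp
    | succ n ihn =>
      intro hn hin
      rcases Nat.lt_or_ge i (n+1) with hlt | hge
      · have h1 : G.dist (p.getVert i) (p.getVert n) ≤ n - i := ihn (by omega) (by omega)
        have h2 : G.dist (p.getVert n) (p.getVert (n+1)) = 1 :=
          dist_eq_one_iff_adj.mpr (p.adj_getVert_succ (by omega))
        have h3 : G.dist (p.getVert i) (p.getVert (n+1)) ≤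
            G.dist (p.getVert i) (p.getVert n) + G.dist (p.getVert n) (p.getVert (n+1)) :=
          hconn.dist_triangle
        omega
      · have : i = n + 1 := by omega
        subst this
        simp
  have h1 : G.dist (p.getVert i) (p.getVert j) ≤ j - i := hup j hj hij
  obtain ⟨hui, hiv⟩ := geo_dists hconn p hp i hi
  obtain ⟨huj, hjv⟩ := geo_dists hconn p hp j hj
  have h2 : G.dist u v ≤ G.dist u (p.getVert i) + G.dist (p.getVert i) (p.getVert j)
      + G.dist (p.getVert j) v := by
    calc G.dist u v ≤ G.dist u (p.getVert i) + G.dist (p.getVert i) v := hconn.dist_triangle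
    _ ≤ G.dist u (p.getVert i) + (G.dist (p.getVert i) (p.getVert j)
        + G.dist (p.getVert j) v) := by
        have := hconn.dist_triangle (u := p.getVert i) (v := p.getVert j) (w := v)
        omega
    _ = _ := by ring
  omega

/-- In a tree, a vertex cannot be equidistant from the two ends of an edge. -/
lemma dist_ne_of_adj (hconn : G.Connected) (hacyclic : G.IsAcyclic) {w a b : V}
    (hab : G.Adj a b) : G.dist w a ≠ G.dist w b := by
  intro heq
  set n := G.dist w a with hn
  obtain ⟨P, hPp, hPl⟩ := hconn.exists_path_of_dist w a
  have hbP : b ∉ P.support := by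
    intro hmem
    obtain ⟨i, hgv, hile⟩ := Walk.mem_support_iff_exists_getVert.mp hmem
    obtain ⟨h1, h2⟩ := geo_dists hconn P hPl i hile
    rw [hgv] at h1 h2
    have hba : G.dist b a = 0 := by omega
    have : b = a := hconn.dist_eq_zero_iff.mp hba
    exact hab.ne' this
  -- now b is not on P, so P.concat is a path from w to b of length n+1
  have hQp : (P.concat hab).IsPath := by
    rw [Walk.isPath_def, Walk.support_concat]
    rw [Walk.isPath_def] at hPp
    simp [List.concat_eq_append, List.nodup_append, hPp, hbP]
    exact fun a ha h => hbP (h ▸ ha)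
  obtain ⟨P', hP'p, hP'l⟩ := hconn.exists_path_of_dist w b
  have := hacyclic.path_unique ⟨P.concat hab, hQp⟩ ⟨P', hP'p⟩
  have hlen : (P.concat hab).length = P'.length := by
    rw [show (P.concat hab) = P' from congrArg Subtype.val this]
  rw [Walk.length_concat] at hlen
  omega

/-- For adjacent vertices, distances from any vertex differ by exactly one. -/
lemma dist_step (hconn : G.Connected) (hacyclic : G.IsAcyclic) {w a b : V}
    (hab : G.Adj a b) : G.dist w b = G.dist w a + 1 ∨ G.dist w a = G.dist w b + 1 := by
  have h1 : G.dist w b ≤ G.dist w a + G.dist a b := hconn.dist_triangle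
  have h2 : G.dist w a ≤ G.dist w b + G.dist b a := hconn.dist_triangle
  have h3 : G.dist a b = 1 := dist_eq_one_iff_adj.mpr hab
  have h4 : G.dist b a = 1 := dist_eq_one_iff_adj.mpr hab.symm
  have h5 := dist_ne_of_adj hconn hacyclic hab (w := w)
  omega

/-- In a tree, the neighbor strictly closer to a given vertex is unique. -/
lemma closer_unique (hconn : G.Connected) (hacyclic : G.IsAcyclic) {w x a b : V}
    (ha : G.Adj x a) (hb : G.Adj x b)
    (hwa : G.dist w a + 1 = G.dist w x) (hwb : G.dist w b + 1 = G.dist w x) : a = b := by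
  set n := G.dist w x with hn
  have build : ∀ c : V, G.Adj x c → G.dist w c + 1 = n →
      ∃ Q : G.Walk w x, Q.IsPath ∧ Q.length = n ∧ Q.getVert (n-1) = c := by
    intro c hc hwc
    obtain ⟨P, hPp, hPl⟩ := hconn.exists_path_of_dist w c
    have hQl : (P.concat hc.symm).length = n := by rw [Walk.length_concat]; omega
    have hQp : (P.concat hc.symm).IsPath :=
      (P.concat hc.symm).isPath_of_length_eq_dist (by rw [hQl, hn])
    refine ⟨P.concat hc.symm, hQp, hQl, ?_⟩
    rw [Walk.concat_eq_append, Walk.getVert_append]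
    have hPlen : P.length = n - 1 := by omega
    have hn1 : ¬ (n - 1 < P.length) := by omega
    rw [if_neg hn1, hPlen, Nat.sub_self]
    simp
  obtain ⟨Qa, hQap, hQal, hQag⟩ := build a ha hwa
  obtain ⟨Qb, hQbp, hQbl, hQbg⟩ := build b hb hwb
  have := hacyclic.path_unique ⟨Qa, hQap⟩ ⟨Qb, hQbp⟩
  have hQQ : Qa = Qb := congrArg Subtype.val this
  rw [← hQag, ← hQbg, hQQ]

/-- Every vertex at positive distance has a neighbor strictly closer. -/
lemma closer_exists (hconn : G.Connected) {w x : V} (h : G.dist w x ≠ 0) :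
    ∃ a, G.Adj x a ∧ G.dist w a + 1 = G.dist w x := by
  obtain ⟨P, hPl⟩ := hconn.exists_walk_length_eq_dist w x
  set n := G.dist w x with hn
  have hPlen : P.length = n := hPl
  refine ⟨P.getVert (n-1), ?_, ?_⟩
  · have hadj : G.Adj (P.getVert (n-1)) (P.getVert ((n-1) + 1)) := P.adj_getVert_succ (by omega)
    have h2 : (n - 1) + 1 = n := by omega
    rw [h2] at hadj
    have : P.getVert n = x := by rw [← hPlen]; exact P.getVert_length
    rw [this] at hadj
    exact hadj.symm
  · obtain ⟨h1, _⟩ := geo_dists hconn P hPl (n-1) (by omega)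
    omega

/-- V-shape: along a geodesic, distances from any vertex `w` first decrease then increase. -/
lemma vshape (hconn : G.Connected) (hacyclic : G.IsAcyclic) {k : ℕ} {x : ℕ → V}
    (hadj : ∀ j, j < k → G.Adj (x j) (x (j+1)))
    (hx : ∀ i ≤ k, ∀ j ≤ k, i ≤ j → G.dist (x i) (x j) = j - i) (w : V) :
    ∃ i ≤ k, ∀ j ≤ k, G.dist w (x j) = G.dist w (x i) + ((i - j) + (j - i)) := by
  set n : ℕ → ℕ := fun j => G.dist w (x j) with hn
  have step : ∀ j, j < k → n (j+1) = n j + 1 ∨ n j = n (j+1) + 1 := by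
    intro j hj
    exact dist_step hconn hacyclic (hadj j hj)
  have nomax : ∀ j, j + 2 ≤ k → n j + 1 = n (j+1) → n (j+2) + 1 = n (j+1) → False := by
    intro j hj h1 h2
    have hb : G.Adj (x (j+1)) (x (j+2)) := by
      have h := hadj (j+1) (by omega)
      have e : j+1+1 = j+2 := rfl
      rwa [e] at h
    have hab : x j = x (j+2) :=
      closer_unique hconn hacyclic (hadj j (by omega)).symm hb h1 h2
    have hd : G.dist (x j) (x (j+2)) = 2 := by
      have := hx j (by omega) (j+2) (by omega) (by omega)
      omega
    rw [hab] at hd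
    rw [SimpleGraph.dist_self] at hd
    exact two_ne_zero hd.symm
  have up : ∀ j, j < k → n (j+1) = n j + 1 → ∀ m, j ≤ m → m < k → n (m+1) = n m + 1 := by
    intro j hj hup m
    induction m with
    | zero =>
      intro hjm hm
      have : j = 0 := by omega
      subst this
      exact hup
    | succ p ih =>
      intro hjm hm
      rcases Nat.eq_or_lt_of_le hjm with heq | hlt
      · subst heq
        exact hup
      · have hp : n (p+1) = n p + 1 := ih (by omega) (by omega)
        rcases step (p+1) hm with h | h
        · exact h
        · exact (nomax p (by omega) hp.symm h.symm).elim
  -- choose the turning index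
  have key : ∃ i ≤ k, (∀ j, j < i → n j = n (j+1) + 1) ∧
      (∀ m, i ≤ m → m < k → n (m+1) = n m + 1) := by
    by_cases hex : ∃ j, j < k ∧ n (j+1) = n j + 1
    · classical
      refine ⟨Nat.find hex, ?_, ?_, ?_⟩
      · exact le_of_lt (Nat.find_spec hex).1
      · intro j hj
        have h1 : ¬ (j < k ∧ n (j+1) = n j + 1) := Nat.find_min hex hj
        have hjk : j < k := lt_trans hj (Nat.find_spec hex).1
        rcases step j hjk with h | h
        · exact absurd ⟨hjk, h⟩ h1
        · exact h
      · intro m him hm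
        exact up (Nat.find hex) (Nat.find_spec hex).1 (Nat.find_spec hex).2 m him hm
    · push_neg at hex
      refine ⟨k, le_rfl, ?_, ?_⟩
      · intro j hj
        rcases step j hj with h | h
        · exact absurd h (hex j hj)
        · exact h
      · intro m him hm
        omega
  obtain ⟨i, hik, hdown, hup2⟩ := key
  refine ⟨i, hik, ?_⟩
  have hleft : ∀ t, t ≤ i → n (i - t) = n i + t := by
    intro t
    induction t with
    | zero => intro _; simp
    | succ s ih =>
      intro hs
      have h1 : n (i - (s+1)) = n (i - (s+1) + 1) + 1 := hdown _ (by omega)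
      have h2 : i - (s+1) + 1 = i - s := by omega
      rw [h2] at h1
      rw [h1, ih (by omega)]
      omega
  have hright : ∀ t, i + t ≤ k → n (i + t) = n i + t := by
    intro t
    induction t with
    | zero => intro _; simp
    | succ s ih =>
      intro hs
      have h1 : n (i + s + 1) = n (i + s) + 1 := hup2 (i + s) (by omega) (by omega)
      have h2 : i + (s + 1) = i + s + 1 := by omega
      rw [h2, h1, ih (by omega)]
      omega
  intro j hj
  rcases Nat.le_total j i with hji | hij
  · have := hleft (i - j) (by omega)
    have h2 : i - (i - j) = j := by omega
    rw [h2] at this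
    show n j = n i + ((i - j) + (j - i))
    omega
  · have := hright (j - i) (by omega)
    have h2 : i + (j - i) = j := by omega
    rw [h2] at this
    show n j = n i + ((i - j) + (j - i))
    omega

/-- The set of vertices branching off the path at `x i`, at distance `t` from `x i`. -/
def A (G : SimpleGraph V) (k : ℕ) (x : ℕ → V) (i t : ℕ) : Set V :=
  {w | G.dist w (x i) = t ∧ ∀ j ≤ k, j ≠ i → t < G.dist w (x j)}

section Branch

variable {k : ℕ} {x : ℕ → V}

lemma cover (hconn : G.Connected) (hacyclic : G.IsAcyclic)
    (hadj : ∀ j, j < k → G.Adj (x j) (x (j+1)))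
    (hx : ∀ i ≤ k, ∀ j ≤ k, i ≤ j → G.dist (x i) (x j) = j - i) (w : V) :
    ∃ i ≤ k, w ∈ A G k x i (G.dist w (x i)) := by
  obtain ⟨i, hik, hf⟩ := vshape hconn hacyclic hadj hx w
  refine ⟨i, hik, rfl, ?_⟩
  intro j hj hji
  have := hf j hj
  omega

lemma exact_dists (hconn : G.Connected) (hacyclic : G.IsAcyclic)
    (hadj : ∀ j, j < k → G.Adj (x j) (x (j+1)))
    (hx : ∀ i ≤ k, ∀ j ≤ k, i ≤ j → G.dist (x i) (x j) = j - i)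
    {i t : ℕ} (hik : i ≤ k) {w : V} (hw : w ∈ A G k x i t) :
    ∀ j ≤ k, G.dist w (x j) = t + ((i - j) + (j - i)) := by
  obtain ⟨ht, hgt⟩ := hw
  obtain ⟨i', hi'k, hf⟩ := vshape hconn hacyclic hadj hx w
  rcases eq_or_ne i' i with heq | hne
  · subst heq
    intro j hj
    rw [hf j hj, ht]
  · exfalso
    have h1 := hf i hik
    have h2 := hgt i' hi'k hne
    omega

lemma A_mem_unique (hconn : G.Connected) {i t i' t' : ℕ} (hik : i ≤ k) (hi'k : i' ≤ k)
    {w : V} (hw : w ∈ A G k x i t) (hw' : w ∈ A G k x i' t') : i = i' ∧ t = t' := by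
  obtain ⟨ht, hgt⟩ := hw
  obtain ⟨ht', hgt'⟩ := hw'
  rcases eq_or_ne i i' with heq | hne
  · subst heq
    omega
  · have h1 := hgt i' hi'k (fun h => hne h.symm)
    have h2 := hgt' i hik hne
    omega

lemma A_zero (hconn : G.Connected)
    (hx : ∀ i ≤ k, ∀ j ≤ k, i ≤ j → G.dist (x i) (x j) = j - i)
    {i : ℕ} (hik : i ≤ k) : A G k x i 0 = {x i} := by
  ext w
  constructor
  · rintro ⟨ht, -⟩
    exact hconn.dist_eq_zero_iff.mp ht
  · rintro rfl
    refine ⟨SimpleGraph.dist_self, ?_⟩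
    intro j hj hji
    rcases Nat.le_total i j with h | h
    · have := hx i hik j hj h
      omega
    · have := hx j hj i hik h
      rw [SimpleGraph.dist_comm]
      omega

end Branch

section Count

variable {d : ℕ} {k : ℕ} {x : ℕ → V}

lemma nbr_finite (hreg : ∀ y : V, (G.neighborSet y).ncard = d) (hd : 3 ≤ d) (y : V) :
    (G.neighborSet y).Finite := by
  by_contra h
  have h2 : (G.neighborSet y).Infinite := h
  have := h2.ncard
  rw [hreg y] at this
  omega

lemma A_one (hconn : G.Connected) (hacyclic : G.IsAcyclic)
    (hadj : ∀ j, j < k → G.Adj (x j) (x (j+1)))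
    (hx : ∀ i ≤ k, ∀ j ≤ k, i ≤ j → G.dist (x i) (x j) = j - i)
    {i : ℕ} (hik : i ≤ k) :
    A G k x i 1 = G.neighborSet (x i) \ {z | ∃ j ≤ k, (i - j) + (j - i) = 1 ∧ z = x j} := by
  ext z
  constructor
  · rintro ⟨ht, hgt⟩
    refine ⟨(dist_eq_one_iff_adj.mp ht).symm, ?_⟩
    rintro ⟨j, hj, hij1, rfl⟩
    have := hgt j hj (by omega)
    rw [SimpleGraph.dist_self] at this
    omega
  · rintro ⟨hadj', hrem⟩
    have hz1 : G.dist z (x i) = 1 := dist_eq_one_iff_adj.mpr hadj'.symm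
    refine ⟨hz1, ?_⟩
    obtain ⟨i'', hi''k, hmem⟩ := cover hconn hacyclic hadj hx z
    rcases eq_or_ne i'' i with heq | hne
    · subst heq
      intro j hj hji
      have := exact_dists hconn hacyclic hadj hx hi''k hmem j hj
      rw [hz1] at this
      omega
    · exfalso
      have h1 := exact_dists hconn hacyclic hadj hx hi''k hmem i hik
      rw [hz1] at h1
      have ht0 : G.dist z (x i'') = 0 := by omega
      have hzx : z = x i'' := hconn.dist_eq_zero_iff.mp ht0
      exact hrem ⟨i'', hi''k, by omega, hzx⟩

lemma A_one_ncard (hconn : G.Connected) (hacyclic : G.IsAcyclic)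
    (hreg : ∀ y : V, (G.neighborSet y).ncard = d) (hd : 3 ≤ d)
    (hadj : ∀ j, j < k → G.Adj (x j) (x (j+1)))
    (hx : ∀ i ≤ k, ∀ j ≤ k, i ≤ j → G.dist (x i) (x j) = j - i)
    {i : ℕ} (hik : i ≤ k) :
    (A G k x i 1).ncard
      = d - ((if 1 ≤ i then 1 else 0) + (if i + 1 ≤ k then 1 else 0)) := by
  rw [A_one hconn hacyclic hadj hx hik]
  set Rem : Set V := {z | ∃ j ≤ k, (i - j) + (j - i) = 1 ∧ z = x j} with hRem
  have hsub : Rem ⊆ G.neighborSet (x i) := by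
    rintro z ⟨j, hj, hij1, rfl⟩
    rcases Nat.lt_or_ge j i with h | h
    · have hji : j = i - 1 := by omega
      have h1 : G.Adj (x (i-1)) (x (i-1+1)) := hadj (i-1) (by omega)
      have h2 : i - 1 + 1 = i := by omega
      rw [h2] at h1
      rw [hji]
      exact h1.symm
    · have hji : j = i + 1 := by omega
      have h1 : G.Adj (x i) (x (i+1)) := hadj i (by omega)
      rw [hji]
      exact h1
  have hRemCard : Rem.ncard = (if 1 ≤ i then 1 else 0) + (if i + 1 ≤ k then 1 else 0) := by
    have hcases : Rem =
        (if 1 ≤ i then {x (i-1)} else (∅ : Set V)) ∪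
        (if i + 1 ≤ k then {x (i+1)} else (∅ : Set V)) := by
      ext z
      simp only [hRem, Set.mem_setOf_eq, Set.mem_union]
      constructor
      · rintro ⟨j, hj, hij1, rfl⟩
        rcases Nat.lt_or_ge j i with h | h
        · left
          rw [if_pos (by omega : 1 ≤ i)]
          have : j = i - 1 := by omega
          rw [this]
          rfl
        · right
          rw [if_pos (by omega : i + 1 ≤ k)]
          have : j = i + 1 := by omega
          rw [this]
          rfl
      · rintro (hz | hz)
        · by_cases h1 : 1 ≤ i
          · rw [if_pos h1] at hz
            exact ⟨i - 1, by omega, by omega, hz⟩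
          · rw [if_neg h1] at hz
            exact hz.elim
        · by_cases h1 : i + 1 ≤ k
          · rw [if_pos h1] at hz
            exact ⟨i + 1, by omega, by omega, hz⟩
          · rw [if_neg h1] at hz
            exact hz.elim
    rw [hcases]
    by_cases h1 : 1 ≤ i <;> by_cases h2 : i + 1 ≤ k <;>
      simp only [h1, h2, if_pos, if_neg, if_true, if_false]
    · have hne : x (i-1) ≠ x (i+1) := by
        intro heq
        have := hx (i-1) (by omega) (i+1) (by omega) (by omega)
        rw [heq, SimpleGraph.dist_self] at this
        omega
      rw [Set.union_singleton, Set.ncard_pair (Ne.symm hne)]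
    · simp
    · simp
    · simp
  rw [Set.ncard_diff hsub ((nbr_finite hreg hd (x i)).subset hsub), hRemCard, hreg]

end Count

section Recursion

variable {d : ℕ} {k : ℕ} {x : ℕ → V}

lemma fiber_card (hconn : G.Connected) (hacyclic : G.IsAcyclic)
    (hreg : ∀ y : V, (G.neighborSet y).ncard = d) (hd : 3 ≤ d)
    {i t : ℕ} (ht : 1 ≤ t) {y : V} (hy : G.dist y (x i) = t) :
    {z | G.Adj y z ∧ G.dist z (x i) = t + 1}.ncard = d - 1 := by
  have hy' : G.dist (x i) y = t := by rw [SimpleGraph.dist_comm]; exact hy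
  have hne : G.dist (x i) y ≠ 0 := by omega
  obtain ⟨a, haadj, hadist⟩ := closer_exists hconn hne
  have haY : a ∈ G.neighborSet y := haadj
  have hF : {z | G.Adj y z ∧ G.dist z (x i) = t + 1} = G.neighborSet y \ {a} := by
    ext z
    simp only [Set.mem_setOf_eq, Set.mem_diff, Set.mem_singleton_iff, mem_neighborSet]
    constructor
    · rintro ⟨hz, hzd⟩
      refine ⟨hz, ?_⟩
      rintro rfl
      rw [SimpleGraph.dist_comm] at hzd
      omega
    · rintro ⟨hz, hza⟩
      refine ⟨hz, ?_⟩
      have hcz : G.dist z (x i) = G.dist (x i) z := SimpleGraph.dist_comm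
      rcases dist_step hconn hacyclic hz (w := x i) with h | h
      · omega
      · exfalso
        apply hza
        have hz' : G.dist (x i) z + 1 = G.dist (x i) y := by omega
        exact (closer_unique (w := x i) hconn hacyclic haadj hz hadist hz').symm
  rw [hF, Set.ncard_diff_singleton_of_mem haY, hreg]

lemma A_succ (hconn : G.Connected) (hacyclic : G.IsAcyclic)
    (hadj : ∀ j, j < k → G.Adj (x j) (x (j+1)))
    (hx : ∀ i ≤ k, ∀ j ≤ k, i ≤ j → G.dist (x i) (x j) = j - i)
    {i t : ℕ} (hik : i ≤ k) (ht : 1 ≤ t) :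
    A G k x i (t+1) = ⋃ y ∈ A G k x i t, {z | G.Adj y z ∧ G.dist z (x i) = t + 1} := by
  ext z
  simp only [Set.mem_iUnion, Set.mem_setOf_eq, exists_prop]
  constructor
  · rintro ⟨hzd, hzgt⟩
    have hne : G.dist (x i) z ≠ 0 := by rw [SimpleGraph.dist_comm]; omega
    obtain ⟨y, hyadj, hydist⟩ := closer_exists hconn hne
    have hyd : G.dist y (x i) = t := by rw [SimpleGraph.dist_comm] at hzd ⊢; omega
    have hyz : G.dist z y = 1 := dist_eq_one_iff_adj.mpr hyadj
    refine ⟨y, ⟨hyd, ?_⟩, hyadj.symm, hzd⟩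
    intro j hj hji
    have h1 := hzgt j hj hji
    have h2 : G.dist z (x j) ≤ G.dist z y + G.dist y (x j) := hconn.dist_triangle
    omega
  · rintro ⟨y, ⟨hyd, hygt⟩, hyzadj, hzd⟩
    refine ⟨hzd, ?_⟩
    obtain ⟨i'', hi''k, hmem⟩ := cover hconn hacyclic hadj hx z
    rcases eq_or_ne i'' i with heq | hne
    · subst heq
      intro j hj hji
      have := exact_dists hconn hacyclic hadj hx hi''k hmem j hj
      rw [hzd] at this
      omega
    · exfalso
      set m := G.dist z (x i'') with hm
      have h1 := exact_dists hconn hacyclic hadj hx hi''k hmem i hik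
      rw [hzd] at h1
      have hzy : G.dist y z = 1 := dist_eq_one_iff_adj.mpr hyzadj
      have h2 : G.dist y (x i'') ≤ G.dist y z + G.dist z (x i'') := hconn.dist_triangle
      have h3 := hygt i'' hi''k hne
      have hmt : m = t ∧ (i - i'') + (i'' - i) = 1 := by omega
      -- build z', the neighbor of z closer to x i''
      have hne2 : G.dist (x i'') z ≠ 0 := by rw [SimpleGraph.dist_comm]; omega
      obtain ⟨z', hz'adj, hz'dist⟩ := closer_exists hconn hne2
      have hz'1 : G.dist z' (x i'') = t - 1 := by
        rw [SimpleGraph.dist_comm] at hm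
        rw [SimpleGraph.dist_comm]
        omega
      have hii'' : G.dist (x i'') (x i) = 1 := by
        rcases Nat.le_total i'' i with h | h
        · have := hx i'' hi''k i hik h
          omega
        · have := hx i hik i'' hi''k h
          rw [SimpleGraph.dist_comm]
          omega
      have hz'xi : G.dist z' (x i) = t := by
        have hub : G.dist z' (x i) ≤ G.dist z' (x i'') + G.dist (x i'') (x i) :=
          hconn.dist_triangle
        have hzz' : G.dist z z' = 1 := dist_eq_one_iff_adj.mpr hz'adj
        have hlb : G.dist z (x i) ≤ G.dist z z' + G.dist z' (x i) := hconn.dist_triangle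
        omega
      have hyz' : y = z' := by
        refine closer_unique (w := x i) hconn hacyclic hyzadj.symm hz'adj ?_ ?_
        · rw [SimpleGraph.dist_comm (v := y), SimpleGraph.dist_comm (v := z)]
          omega
        · rw [SimpleGraph.dist_comm (v := z'), SimpleGraph.dist_comm (v := z)]
          omega
      rw [hyz'] at h3
      rw [SimpleGraph.dist_comm] at hz'1
      rw [SimpleGraph.dist_comm] at h3
      omega

lemma A_finite (hconn : G.Connected) (hacyclic : G.IsAcyclic)
    (hreg : ∀ y : V, (G.neighborSet y).ncard = d) (hd : 3 ≤ d)
    (hadj : ∀ j, j < k → G.Adj (x j) (x (j+1)))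
    (hx : ∀ i ≤ k, ∀ j ≤ k, i ≤ j → G.dist (x i) (x j) = j - i)
    {i : ℕ} (hik : i ≤ k) : ∀ t, (A G k x i t).Finite := by
  intro t
  induction t with
  | zero => rw [A_zero hconn hx hik]; exact Set.finite_singleton _
  | succ s ih =>
    rcases Nat.eq_zero_or_pos s with rfl | hs
    · rw [A_one hconn hacyclic hadj hx hik]
      exact ((nbr_finite hreg hd (x i)).diff)
    · rw [A_succ hconn hacyclic hadj hx hik hs]
      refine Set.Finite.biUnion ih ?_
      intro y _
      exact (nbr_finite hreg hd y).subset (fun z hz => hz.1)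

lemma A_succ_ncard (hconn : G.Connected) (hacyclic : G.IsAcyclic)
    (hreg : ∀ y : V, (G.neighborSet y).ncard = d) (hd : 3 ≤ d)
    (hadj : ∀ j, j < k → G.Adj (x j) (x (j+1)))
    (hx : ∀ i ≤ k, ∀ j ≤ k, i ≤ j → G.dist (x i) (x j) = j - i)
    {i t : ℕ} (hik : i ≤ k) (ht : 1 ≤ t) :
    (A G k x i (t+1)).ncard = (d - 1) * (A G k x i t).ncard := by
  classical
  have hfin := A_finite hconn hacyclic hreg hd hadj hx hik
  set s : Finset V := (hfin t).toFinset with hs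
  have hFfin : ∀ y : V, {z | G.Adj y z ∧ G.dist z (x i) = t + 1}.Finite := fun y =>
    (nbr_finite hreg hd y).subset (fun z hz => hz.1)
  set F : V → Finset V := fun y => (hFfin y).toFinset with hF
  have hdisj : ∀ y ∈ s, ∀ y' ∈ s, y ≠ y' → Disjoint (F y) (F y') := by
    intro y hy y' hy' hne
    rw [Finset.disjoint_left]
    intro z hzy hzy'
    apply hne
    rw [hF] at hzy hzy'
    simp only [Set.Finite.mem_toFinset, Set.mem_setOf_eq] at hzy hzy'
    rw [hs, Set.Finite.mem_toFinset] at hy hy'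
    refine closer_unique (w := x i) hconn hacyclic hzy.1.symm hzy'.1.symm ?_ ?_
    · rw [SimpleGraph.dist_comm (v := y), SimpleGraph.dist_comm (v := z), hy.1, hzy.2]
    · rw [SimpleGraph.dist_comm (v := y'), SimpleGraph.dist_comm (v := z), hy'.1, hzy'.2]
  have hset : A G k x i (t+1) = ↑(s.biUnion F) := by
    rw [A_succ hconn hacyclic hadj hx hik ht]
    ext z
    simp only [Finset.coe_biUnion, Set.mem_iUnion, Finset.mem_coe, exists_prop]
    constructor
    · rintro ⟨y, hy, hz⟩
      exact ⟨y, by rw [hs, Set.Finite.mem_toFinset]; exact hy,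
        by rw [hF]; simp only [Set.Finite.mem_toFinset]; exact hz⟩
    · rintro ⟨y, hy, hz⟩
      rw [hs, Set.Finite.mem_toFinset] at hy
      rw [hF] at hz
      simp only [Set.Finite.mem_toFinset] at hz
      exact ⟨y, hy, hz⟩
  rw [hset, Set.ncard_coe_finset, Finset.card_biUnion hdisj]
  have hcard : ∀ y ∈ s, (F y).card = d - 1 := by
    intro y hy
    rw [hs, Set.Finite.mem_toFinset] at hy
    rw [hF, ← Set.ncard_eq_toFinset_card _ (hFfin y)]
    exact fiber_card hconn hacyclic hreg hd ht hy.1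
  rw [Finset.sum_congr rfl hcard, Finset.sum_const, smul_eq_mul]
  rw [hs, ← Set.ncard_eq_toFinset_card _ (hfin t)]
  ring

lemma A_ncard_closed (hconn : G.Connected) (hacyclic : G.IsAcyclic)
    (hreg : ∀ y : V, (G.neighborSet y).ncard = d) (hd : 3 ≤ d)
    (hadj : ∀ j, j < k → G.Adj (x j) (x (j+1)))
    (hx : ∀ i ≤ k, ∀ j ≤ k, i ≤ j → G.dist (x i) (x j) = j - i)
    {i : ℕ} (hik : i ≤ k) : ∀ t, 1 ≤ t →
    (A G k x i t).ncard
      = (d - ((if 1 ≤ i then 1 else 0) + (if i + 1 ≤ k then 1 else 0))) * (d-1)^(t-1) := by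
  intro t
  induction t with
  | zero => omega
  | succ s ih =>
    intro _
    rcases Nat.eq_zero_or_pos s with rfl | hs
    · simpa using A_one_ncard hconn hacyclic hreg hd hadj hx hik
    · rw [A_succ_ncard hconn hacyclic hreg hd hadj hx hik hs, ih hs]
      have h1 : s + 1 - 1 = (s - 1) + 1 := by omega
      rw [h1, pow_succ]
      ring

end Recursion

section Decomp

variable {d : ℕ} {k : ℕ} {x : ℕ → V}

lemma inter_decomp (hconn : G.Connected) (hacyclic : G.IsAcyclic)
    (hadj : ∀ j, j < k → G.Adj (x j) (x (j+1)))
    (hx : ∀ i ≤ k, ∀ j ≤ k, i ≤ j → G.dist (x i) (x j) = j - i) (R : ℕ) :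
    {w | G.dist w (x 0) ≤ R} ∩ {w | G.dist w (x k) ≤ R} =
      ⋃ i ∈ Finset.range (k+1), ⋃ t ∈ Finset.range (R + 1 - max i (k - i)),
        A G k x i t := by
  ext w
  simp only [Set.mem_inter_iff, Set.mem_setOf_eq, Set.mem_iUnion, Finset.mem_range,
    exists_prop]
  constructor
  · rintro ⟨h0, hk⟩
    obtain ⟨i, hik, hmem⟩ := cover hconn hacyclic hadj hx w
    set t := G.dist w (x i) with hts
    have e0 := exact_dists hconn hacyclic hadj hx hik hmem 0 (by omega)
    have ek := exact_dists hconn hacyclic hadj hx hik hmem k le_rfl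
    have hmc := max_choice i (k - i)
    have hm1 := Nat.le_max_left i (k - i)
    have hm2 := Nat.le_max_right i (k - i)
    exact ⟨i, by omega, t, by omega, hmem⟩
  · rintro ⟨i, hik, t, htlt, hmem⟩
    have hik' : i ≤ k := by omega
    have e0 := exact_dists hconn hacyclic hadj hx hik' hmem 0 (by omega)
    have ek := exact_dists hconn hacyclic hadj hx hik' hmem k le_rfl
    have hm1 := Nat.le_max_left i (k - i)
    have hm2 := Nat.le_max_right i (k - i)
    constructor <;> omega

lemma decomp_ncard (hconn : G.Connected) (hacyclic : G.IsAcyclic)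
    (hreg : ∀ y : V, (G.neighborSet y).ncard = d) (hd : 3 ≤ d)
    (hadj : ∀ j, j < k → G.Adj (x j) (x (j+1)))
    (hx : ∀ i ≤ k, ∀ j ≤ k, i ≤ j → G.dist (x i) (x j) = j - i) (m : ℕ → ℕ) :
    (⋃ i ∈ Finset.range (k+1), ⋃ t ∈ Finset.range (m i), A G k x i t).ncard
      = ∑ i ∈ Finset.range (k+1), ∑ t ∈ Finset.range (m i), (A G k x i t).ncard := by
  classical
  set Af : ℕ → ℕ → Finset V := fun i t =>
    if h : i ≤ k then (A_finite hconn hacyclic hreg hd hadj hx h t).toFinset else ∅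
    with hAf
  have hAfmem : ∀ i (hik : i ≤ k) t z, z ∈ Af i t ↔ z ∈ A G k x i t := by
    intro i hik t z
    rw [hAf]
    simp [dif_pos hik, Set.Finite.mem_toFinset]
  have hset : (⋃ i ∈ Finset.range (k+1), ⋃ t ∈ Finset.range (m i), A G k x i t)
      = ↑((Finset.range (k+1)).biUnion (fun i => (Finset.range (m i)).biUnion (Af i))) := by
    ext z
    simp only [Set.mem_iUnion, Finset.coe_biUnion, Finset.mem_coe, Finset.mem_biUnion,
      Finset.mem_range, exists_prop]
    constructor
    · rintro ⟨i, hi, t, htm, hz⟩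
      exact ⟨i, hi, t, htm, (hAfmem i (by omega) t z).mpr hz⟩
    · rintro ⟨i, hi, t, htm, hz⟩
      exact ⟨i, hi, t, htm, (hAfmem i (by omega) t z).mp hz⟩
  rw [hset, Set.ncard_coe_finset]
  rw [Finset.card_biUnion]
  · refine Finset.sum_congr rfl ?_
    intro i hi
    rw [Finset.mem_range] at hi
    rw [Finset.card_biUnion]
    · refine Finset.sum_congr rfl ?_
      intro t _
      show (Af i t).card = (A G k x i t).ncard
      have hcoe : (Af i t : Set V) = A G k x i t := by
        ext z
        rw [Finset.mem_coe, hAfmem i (by omega) t z]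
      rw [← Set.ncard_coe_finset (Af i t), hcoe]
    · intro t _ t' _ htt'
      rw [Function.onFun, Finset.disjoint_left]
      intro z hz hz'
      rw [hAfmem i (by omega) t z] at hz
      rw [hAfmem i (by omega) t' z] at hz'
      exact htt' (A_mem_unique hconn (by omega : i ≤ k) (by omega : i ≤ k) hz hz').2
  · intro i hi i' hi' hii'
    rw [Finset.mem_coe, Finset.mem_range] at hi hi'
    rw [Function.onFun, Finset.disjoint_left]
    intro z hz hz'
    rw [Finset.mem_biUnion] at hz hz'
    obtain ⟨t, _, hz⟩ := hz
    obtain ⟨t', _, hz'⟩ := hz'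
    rw [hAfmem i (by omega) t z] at hz
    rw [hAfmem i' (by omega) t' z] at hz'
    exact hii' (A_mem_unique hconn (by omega : i ≤ k) (by omega : i' ≤ k) hz hz').1

lemma sum_A_ncard (hconn : G.Connected) (hacyclic : G.IsAcyclic)
    (hreg : ∀ y : V, (G.neighborSet y).ncard = d) (hd : 3 ≤ d)
    (hadj : ∀ j, j < k → G.Adj (x j) (x (j+1)))
    (hx : ∀ i ≤ k, ∀ j ≤ k, i ≤ j → G.dist (x i) (x j) = j - i)
    {i : ℕ} (hik : i ≤ k) (m : ℕ) :
    ∑ t ∈ Finset.range (m+1), (A G k x i t).ncard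
      = 1 + (d - ((if 1 ≤ i then 1 else 0) + (if i + 1 ≤ k then 1 else 0)))
        * ∑ t ∈ Finset.range m, (d-1)^t := by
  rw [Finset.sum_range_succ']
  have h0 : (A G k x i 0).ncard = 1 := by
    rw [A_zero hconn hx hik]
    exact Set.ncard_singleton _
  have hsucc : ∀ t ∈ Finset.range m, (A G k x i (t+1)).ncard
      = (d - ((if 1 ≤ i then 1 else 0) + (if i + 1 ≤ k then 1 else 0))) * (d-1)^t := by
    intro t _
    rw [A_ncard_closed hconn hacyclic hreg hd hadj hx hik (t+1) (by omega)]
    simp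
  rw [Finset.sum_congr rfl hsucc, h0, ← Finset.mul_sum]
  omega

end Decomp

section RealArith

lemma S_split (e : ℝ) (k : ℕ) :
    ∑ i ∈ Finset.range (k+1), e^(k - max i (k-i))
      = (∑ i ∈ Finset.range ((k+2)/2), e^i) + ∑ i ∈ Finset.range ((k+1)/2), e^i := by
  have ha : (k+2)/2 ≤ k + 1 := by omega
  rw [Finset.range_eq_Ico, ← Finset.sum_Ico_consecutive _ (Nat.zero_le ((k+2)/2)) ha]
  congr 1
  · rw [← Finset.range_eq_Ico]
    refine Finset.sum_congr rfl ?_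
    intro i hi
    rw [Finset.mem_range] at hi
    congr 1
    have : max i (k - i) = k - i := Nat.max_eq_right (by omega)
    rw [this]
    omega
  · have hcongr : ∀ i ∈ Finset.Ico ((k+2)/2) (k+1), e^(k - max i (k-i)) = e^(k-i) := by
      intro i hi
      rw [Finset.mem_Ico] at hi
      congr 1
      have : max i (k - i) = i := Nat.max_eq_left (by omega)
      rw [this]
    rw [Finset.sum_congr rfl hcongr, Finset.sum_Ico_eq_sum_range]
    have hn : k + 1 - (k+2)/2 = (k+1)/2 := by omega
    rw [hn]
    have hterm : ∀ j ∈ Finset.range ((k+1)/2), e^(k - ((k+2)/2 + j))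
        = e^((k+1)/2 - 1 - j) := by
      intro j hj
      rw [Finset.mem_range] at hj
      congr 1
      omega
    rw [Finset.sum_congr rfl hterm]
    exact Finset.sum_range_reflect (fun j => e^j) ((k+1)/2)

lemma comb_identity (d k : ℕ) (hd : 3 ≤ d) :
    (∑ i ∈ Finset.range (k+1),
      ((d - ((if 1 ≤ i then 1 else 0) + (if i + 1 ≤ k then 1 else 0)) : ℕ) : ℝ)
        * ((d:ℝ)-1)^(k - max i (k-i)))
    = (if Odd k then 2 / ((d : ℝ) * ((d : ℝ) - 1) ^ (k / 2))
        else 1 / ((d : ℝ) - 1) ^ (k / 2)) * d * ((d:ℝ)-1)^k := by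
  set e : ℝ := (d:ℝ) - 1 with he
  have hd3 : (3:ℝ) ≤ (d:ℝ) := by exact_mod_cast hd
  have he2 : (2:ℝ) ≤ e := by rw [he]; linarith
  have he0 : e ≠ 0 := by linarith
  -- rewrite each coefficient
  have hco : ∀ i ∈ Finset.range (k+1),
      ((d - ((if 1 ≤ i then 1 else 0) + (if i + 1 ≤ k then 1 else 0)) : ℕ) : ℝ)
        * e^(k - max i (k-i))
      = (e - 1) * e^(k - max i (k-i))
        + (if i = 0 then e^(k - max i (k-i)) else 0)
        + (if i = k then e^(k - max i (k-i)) else 0) := by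
    intro i hi
    rw [Finset.mem_range] at hi
    have hcast : ((d - ((if 1 ≤ i then 1 else 0) + (if i + 1 ≤ k then 1 else 0)) : ℕ) : ℝ)
        = (d:ℝ) - (((if 1 ≤ i then 1 else 0) + (if i + 1 ≤ k then 1 else 0) : ℕ) : ℝ) := by
      have : ((if 1 ≤ i then 1 else 0) + (if i + 1 ≤ k then 1 else 0) : ℕ) ≤ d := by
        split_ifs <;> omega
      exact Nat.cast_sub this
    rw [hcast]
    by_cases h0 : i = 0 <;> by_cases hk : i = k <;>
      simp only [h0, hk, if_pos, if_neg] <;> push_cast <;> split_ifs <;>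
      try ring_nf
    all_goals (try omega)
    all_goals (rw [he]; ring)
  rw [Finset.sum_congr rfl hco]
  rw [Finset.sum_add_distrib, Finset.sum_add_distrib]
  rw [Finset.sum_ite_eq' (Finset.range (k+1)) 0 (fun i => e^(k - max i (k-i)))]
  rw [Finset.sum_ite_eq' (Finset.range (k+1)) k (fun i => e^(k - max i (k-i)))]
  rw [if_pos (by simp : (0:ℕ) ∈ Finset.range (k+1)),
    if_pos (by simp [Nat.lt_succ_iff] : k ∈ Finset.range (k+1))]
  have hz : k - max 0 (k - 0) = 0 := by simp
  have hz' : k - max k (k - k) = 0 := by simp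
  rw [hz, hz', pow_zero]
  rw [← Finset.mul_sum, S_split e k]
  have hgeom : ∀ n : ℕ, (e - 1) * (∑ i ∈ Finset.range n, e^i) = e^n - 1 := by
    intro n
    rw [mul_comm, geom_sum_mul]
  rw [mul_add, hgeom, hgeom]
  -- now case on parity
  rcases Nat.even_or_odd k with hkev | hkodd
  · rw [if_neg (by simpa [Nat.odd_iff, Nat.even_iff] using hkev)]
    obtain ⟨l, rfl⟩ := hkev
    have h1 : (l + l + 2)/2 = l + 1 := by omega
    have h2 : (l + l + 1)/2 = l := by omega
    have h3 : (l + l) / 2 = l := by omega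
    rw [h1, h2, h3]
    have h4 : e^(l+l) = e^l * e^l := by rw [← pow_add]
    have h5 : e^(l+1) = e^l * e := by rw [pow_succ]
    have hel : e^l ≠ 0 := pow_ne_zero _ he0
    field_simp
    ring
  · rw [if_pos hkodd]
    obtain ⟨l, rfl⟩ := hkodd
    have h1 : (2*l + 1 + 2)/2 = l + 1 := by omega
    have h2 : (2*l + 1 + 1)/2 = l + 1 := by omega
    have h3 : (2*l + 1) / 2 = l := by omega
    rw [h1, h2, h3]
    have h4 : e^(2*l+1) = e^l * e^l * e := by
      rw [show 2*l+1 = l + (l + 1) from by omega, pow_add, pow_succ]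
      ring
    have h5 : e^(l+1) = e^l * e := by rw [pow_succ]
    have hel : e^l ≠ 0 := pow_ne_zero _ he0
    have hd0 : (d:ℝ) ≠ 0 := by linarith
    rw [h4, h5]
    field_simp
    ring
end RealArith

end TreeBallAux

open TreeBallAux in
/-- On the `d`-regular tree (`d ≥ 3`), for vertices `u, v` at distance `k`, the ratio
`|B_R(u) ∩ B_R(v)| / |B_R(v)|` converges as `R → ∞` to `2/(d(d-1)^l)` if `k = 2l+1`
is odd, and to `1/(d-1)^l` if `k = 2l` is even. -/
theorem ball_intersection_ratio_tendsto {V : Type*} (G : SimpleGraph V) (d k : ℕ)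
    (hd : 3 ≤ d) (hconn : G.Connected) (hacyclic : G.IsAcyclic)
    (hreg : ∀ x : V, (G.neighborSet x).ncard = d)
    (u v : V) (hdist : G.dist u v = k) :
    Tendsto
      (fun R : ℕ =>
        (({w : V | G.dist w u ≤ R} ∩ {w : V | G.dist w v ≤ R}).ncard : ℝ)
          / ({w : V | G.dist w v ≤ R}).ncard)
      atTop
      (nhds (if Odd k then 2 / ((d : ℝ) * ((d : ℝ) - 1) ^ (k / 2))
        else 1 / ((d : ℝ) - 1) ^ (k / 2))) := by
  classical
  obtain ⟨p, hPl⟩ := hconn.exists_walk_length_eq_dist u v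
  have hplen : p.length = k := by rw [hPl, hdist]
  set x : ℕ → V := p.getVert with hxdef
  have hadjx : ∀ j, j < k → G.Adj (x j) (x (j+1)) := by
    intro j hj
    exact p.adj_getVert_succ (by omega)
  have hxp : ∀ i ≤ k, ∀ j ≤ k, i ≤ j → G.dist (x i) (x j) = j - i :=
    fun i hi j hj hij => geo_pair hconn p hPl i (by omega) j (by omega) hij
  have hx0 : x 0 = u := p.getVert_zero
  have hxk : x k = v := by rw [← hplen]; exact p.getVert_length
  -- notation
  set e : ℝ := (d : ℝ) - 1 with he
  have hd3 : (3:ℝ) ≤ (d:ℝ) := by exact_mod_cast hd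
  have he2 : (2:ℝ) ≤ e := by rw [he]; linarith
  have he0 : e ≠ 0 := by linarith
  have he1 : e ≠ 1 := by linarith
  have he1' : e - 1 ≠ 0 := by intro h; apply he1; linarith
  have hd0 : (d:ℝ) ≠ 0 := by linarith
  set r : ℕ → ℕ := fun i => (if 1 ≤ i then 1 else 0) + (if i + 1 ≤ k then 1 else 0) with hr
  obtain ⟨M, hM⟩ : ∃ M : ℕ → ℕ, ∀ i, M i = max i (k - i) :=
    ⟨fun i => max i (k - i), fun _ => rfl⟩
  set cR : ℕ → ℝ := fun i => ((d - r i : ℕ) : ℝ) with hcR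
  -- ball cardinality (k = 0 instance)
  have h0adj : ∀ j, j < 0 → G.Adj ((fun _ : ℕ => v) j) ((fun _ : ℕ => v) (j+1)) := by
    intro j hj
    omega
  have h0x : ∀ i ≤ 0, ∀ j ≤ 0, i ≤ j →
      G.dist ((fun _ : ℕ => v) i) ((fun _ : ℕ => v) j) = j - i := by
    intro i hi j hj hij
    have hi0 : i = 0 := by omega
    have hj0 : j = 0 := by omega
    subst hi0; subst hj0
    simp [SimpleGraph.dist_self]
  have ball_eq : ∀ R : ℕ, ({w : V | G.dist w v ≤ R}).ncard
      = 1 + d * ∑ t ∈ Finset.range R, (d-1)^t := by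
    intro R
    have hdec := inter_decomp (k := 0) (x := fun _ : ℕ => v) hconn hacyclic h0adj h0x R
    rw [Set.inter_self] at hdec
    have hrange : R + 1 - max 0 (0 - 0) = R + 1 := by simp
    rw [hdec, decomp_ncard hconn hacyclic hreg hd h0adj h0x, Finset.sum_range_one, hrange,
      sum_A_ncard hconn hacyclic hreg hd h0adj h0x le_rfl R]
    simp
  -- intersection cardinality for R ≥ k
  have inter_eq : ∀ R : ℕ, k ≤ R →
      ({w : V | G.dist w u ≤ R} ∩ {w : V | G.dist w v ≤ R}).ncard
      = ∑ i ∈ Finset.range (k+1),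
          (1 + (d - r i) * ∑ t ∈ Finset.range (R - M i), (d-1)^t) := by
    intro R hR
    have hdec := inter_decomp hconn hacyclic hadjx hxp R
    rw [hx0, hxk] at hdec
    rw [hdec, decomp_ncard hconn hacyclic hreg hd hadjx hxp]
    refine Finset.sum_congr rfl ?_
    intro i hi
    rw [Finset.mem_range] at hi
    have hrange : R + 1 - max i (k - i) = (R - M i) + 1 := by
      have h2 : M i ≤ k := by
        rw [hM i]
        exact max_le (by omega) (Nat.sub_le k i)
      rw [← hM i]
      omega
    rw [hrange, sum_A_ncard hconn hacyclic hreg hd hadjx hxp (by omega) (R - M i)]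
  -- cast the geometric sums to ℝ
  have hcast_g : ∀ m : ℕ, ((∑ t ∈ Finset.range m, (d-1)^t : ℕ) : ℝ) = (e^m - 1)/(e-1) := by
    intro m
    have h1 : ((∑ t ∈ Finset.range m, (d-1)^t : ℕ) : ℝ) = ∑ t ∈ Finset.range m, e^t := by
      push_cast [Nat.cast_sub (by omega : 1 ≤ d)]
      rw [he]
    rw [h1, geom_sum_eq he1]
  -- real constants
  set P : ℝ := ∑ i ∈ Finset.range (k+1), (1 - cR i/(e-1)) with hP
  set CC : ℝ := ∑ i ∈ Finset.range (k+1), cR i * e^(k - M i) with hCC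
  set f : ℕ → ℝ := fun R =>
    (P * (e⁻¹)^R + (CC/(e-1)) * (e⁻¹)^k)
      / ((1 - (d:ℝ)/(e-1)) * (e⁻¹)^R + (d:ℝ)/(e-1)) with hf
  have hePos : (0:ℝ) < e := by linarith
  have heRpos : ∀ R : ℕ, (0:ℝ) < e^R := fun R => pow_pos hePos R
  -- eventual equality
  have heq : ∀ R : ℕ, k ≤ R →
      (({w : V | G.dist w u ≤ R} ∩ {w : V | G.dist w v ≤ R}).ncard : ℝ)
        / ({w : V | G.dist w v ≤ R}).ncard = f R := by
    intro R hR
    have hRne : (e:ℝ)^R ≠ 0 := ne_of_gt (heRpos R)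
    have hkne : (e:ℝ)^k ≠ 0 := ne_of_gt (heRpos k)
    have hNval : (({w : V | G.dist w u ≤ R} ∩ {w : V | G.dist w v ≤ R}).ncard : ℝ)
        = P + (CC/(e-1)) * e^(R-k) := by
      rw [inter_eq R hR, Nat.cast_sum]
      have hterm : ∀ i ∈ Finset.range (k+1),
          ((1 + (d - r i) * ∑ t ∈ Finset.range (R - M i), (d-1)^t : ℕ) : ℝ)
          = (1 - cR i/(e-1)) + cR i * e^(k - M i) * (e^(R-k) / (e-1)) := by
        intro i hi
        rw [Finset.mem_range] at hi
        rw [Nat.cast_add, Nat.cast_mul, Nat.cast_one, hcast_g]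
        have hpow : e^(R - M i) = e^(k - M i) * e^(R-k) := by
          rw [← pow_add]
          congr 1
          have h2 : M i ≤ k := by
            rw [hM i]
            exact max_le (by omega) (Nat.sub_le k i)
          omega
        rw [hpow]
        have hcRi : ((d - r i : ℕ) : ℝ) = cR i := rfl
        rw [hcRi]
        field_simp
        ring
      rw [Finset.sum_congr rfl hterm, Finset.sum_add_distrib, ← hP, ← Finset.sum_mul, ← hCC]
      ring
    have hDval : (({w : V | G.dist w v ≤ R}).ncard : ℝ) = 1 + d * ((e^R - 1)/(e-1)) := by
      rw [ball_eq R, Nat.cast_add, Nat.cast_mul, hcast_g, Nat.cast_one]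
    have hsub : e^(R-k) = e^R * (e^k)⁻¹ := pow_sub₀ e he0 hR
    have hcancel : (e^R * (e^k)⁻¹) * (e^R)⁻¹ = (e^k)⁻¹ := by
      rw [mul_comm (e^R) ((e^k)⁻¹), mul_assoc, mul_inv_cancel₀ hRne, mul_one]
    have hnum : (P + (CC/(e-1)) * e^(R-k)) * (e^R)⁻¹
        = P * (e⁻¹)^R + (CC/(e-1)) * (e⁻¹)^k := by
      rw [hsub, inv_pow, inv_pow, add_mul, mul_assoc, hcancel]
    have hden2 : ((1:ℝ) + d * ((e^R - 1)/(e-1))) * (e^R)⁻¹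
        = (1 - (d:ℝ)/(e-1)) * (e⁻¹)^R + (d:ℝ)/(e-1) := by
      have h1 : (e^R - 1)/(e-1) * (e^R)⁻¹ = 1/(e-1) - 1/(e-1) * (e^R)⁻¹ := by
        rw [div_mul_eq_mul_div, sub_mul, one_mul, mul_inv_cancel₀ hRne]
        ring
      rw [inv_pow, add_mul, one_mul, mul_assoc, h1]
      ring
    rw [hNval, hDval]
    show (P + (CC/(e-1)) * e^(R-k)) / ((1:ℝ) + d * ((e^R - 1)/(e-1)))
      = (P * (e⁻¹)^R + (CC/(e-1)) * (e⁻¹)^k)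
        / ((1 - (d:ℝ)/(e-1)) * (e⁻¹)^R + (d:ℝ)/(e-1))
    rw [← hnum, ← hden2, mul_div_mul_right _ _ (inv_ne_zero hRne)]
  -- the limit of f
  have htends0 : Tendsto (fun R : ℕ => ((e⁻¹ : ℝ))^R) atTop (nhds 0) := by
    apply tendsto_pow_atTop_nhds_zero_of_lt_one
    · positivity
    · rw [inv_lt_one_iff₀]
      right
      linarith
  have hden_ne : (1 - (d:ℝ)/(e-1)) * 0 + (d:ℝ)/(e-1) ≠ 0 := by
    rw [mul_zero, zero_add]
    positivity
  have hlim : Tendsto f atTop (nhds (((P * 0 + (CC/(e-1)) * (e⁻¹)^k))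
      / ((1 - (d:ℝ)/(e-1)) * 0 + (d:ℝ)/(e-1)))) := by
    apply Tendsto.div
    · exact ((tendsto_const_nhds.mul htends0).add tendsto_const_nhds)
    · exact ((tendsto_const_nhds.mul htends0).add tendsto_const_nhds)
    · exact hden_ne
  -- identify the limit value
  have hCCval : CC = (if Odd k then 2 / ((d : ℝ) * ((d : ℝ) - 1) ^ (k / 2))
      else 1 / ((d : ℝ) - 1) ^ (k / 2)) * d * e^k := by
    have h1 : CC = ∑ i ∈ Finset.range (k+1),
        ((d - ((if 1 ≤ i then 1 else 0) + (if i + 1 ≤ k then 1 else 0)) : ℕ) : ℝ)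
          * e^(k - max i (k-i)) := by
      rw [hCC]
      exact Finset.sum_congr rfl (fun i _ => by rw [hM i])
    rw [h1]
    exact comb_identity d k hd
  have hlimval : ((P * 0 + (CC/(e-1)) * (e⁻¹)^k))
      / ((1 - (d:ℝ)/(e-1)) * 0 + (d:ℝ)/(e-1))
      = (if Odd k then 2 / ((d : ℝ) * ((d : ℝ) - 1) ^ (k / 2))
        else 1 / ((d : ℝ) - 1) ^ (k / 2)) := by
    rw [hCCval, inv_pow]
    have hek : (e:ℝ)^k ≠ 0 := pow_ne_zero _ he0
    field_simp
    ring_nf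
    rw [mul_inv_cancel₀ hd0, one_mul]
  rw [← hlimval]
  refine Tendsto.congr' ?_ hlim
  filter_upwards [eventually_ge_atTop k] with R hR
  exact (heq R hR).symm
end
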